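/- arXiv:1305.1008 — 11 statements merged into one kernel-verified Lean document; each statement's English description precedes it below -/
import Mathlib

section
/- For every index i ∈ {1,…,n} the following identity holds: ∑_{j≠i} (λ(z_i) − λ(z_j))/(λ''(z_j)·z_{ij}⁴) = (1/24)·(C_{i3}² − C_{i4}). Equivalently, the quantity H_i := (1/2)·∑_{j≠i} (u_i − u_j)·γ_{ij}², where γ_{ij} = h_i h_j/z_{ij}² and h_i² = 1/λ''(z_i), equals (1/48)·h_i²·(C_{i3}² − C_{i4}). -/
open Polynomial Finset

lemma sum_div_eq_coeff {ι : Type*} [DecidableEq ι] (s : Finset ι) (v : ι → ℂ)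
    (hv : Set.InjOn v s) (f : ℂ[X]) (hf : f.degree < s.card) :
    ∑ j ∈ s, f.eval (v j) / ∏ k ∈ s.erase j, (v j - v k) = f.coeff (s.card - 1) := by
  have hbc : ∀ j ∈ s, (Lagrange.basis s v j).coeff (s.card - 1)
      = (∏ k ∈ s.erase j, (v j - v k))⁻¹ := by
    intro j hj
    have h1 : (Lagrange.basis s v j).coeff (s.card - 1) = (Lagrange.basis s v j).leadingCoeff := by
      rw [leadingCoeff, Lagrange.natDegree_basis hv hj]
    rw [h1, Lagrange.basis, leadingCoeff_prod, ← prod_inv_distrib]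
    refine prod_congr rfl fun k hk => ?_
    have hne : v j ≠ v k := by
      intro h
      exact (mem_erase.mp hk).1 (hv (mem_of_mem_erase hk) hj h.symm) |>.elim
    rw [Lagrange.basisDivisor, leadingCoeff_mul, leadingCoeff_C, (monic_X_sub_C (v k)).leadingCoeff, mul_one]
  conv_rhs => rw [Lagrange.eq_interpolate hv hf]
  rw [Lagrange.interpolate_apply, finset_sum_coeff]
  refine sum_congr rfl fun j hj => ?_
  rw [coeff_C_mul, hbc j hj, div_eq_mul_inv]

lemma eval_iterate_derivative_eq (k : ℕ) (f : ℂ[X]) (r : ℂ) :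
    (derivative^[k] f).eval r = (Nat.factorial k : ℂ) * (taylor r f).coeff k := by
  rw [taylor_coeff, ← factorial_smul_hasseDeriv]
  simp [nsmul_eq_mul]

lemma taylor_derivative' (f : ℂ[X]) (r : ℂ) :
    taylor r (derivative f) = derivative (taylor r f) := by
  simp [taylor_apply, derivative_comp]

lemma taylor_coeff_of_natDegree_le (f : ℂ[X]) (r : ℂ) (k : ℕ) (h : f.natDegree ≤ k) :
    (taylor r f).coeff k = f.coeff k := by
  rcases lt_or_eq_of_le h with h | h
  · rw [coeff_eq_zero_of_natDegree_lt h,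
      coeff_eq_zero_of_natDegree_lt (by rwa [natDegree_taylor])]
  · subst h
    have h1 : (taylor r f).coeff f.natDegree = (taylor r f).leadingCoeff := by
      rw [leadingCoeff, natDegree_taylor]
    rw [h1, taylor_apply, leadingCoeff_comp (by rw [natDegree_X_add_C]; norm_num),
      (monic_X_add_C r).leadingCoeff, one_pow, mul_one, leadingCoeff]

/-- Identity (2.16)/R₃(4): for every index `i`,
`∑_{{j≠i}} (λ(z_i) − λ(z_j))/(λ''(z_j)·z_ij⁴) = (1/24)·(C_i3² − C_i4)`,
i.e. `H_i = (1/48)·h_i²·(C_i3² − C_i4)` where `h_i² = 1/λ''(z_i)`. -/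
theorem stmt_4 (n : ℕ) (hn : 1 ≤ n) (p : Polynomial ℂ)
    (hp : p.Monic) (hdeg : p.natDegree = n + 1)
    (z : Fin n → ℂ) (hz : Function.Injective z)
    (hcrit : ∀ i, (derivative p).eval (z i) = 0)
    (hnd : ∀ i, (derivative^[2] p).eval (z i) ≠ 0)
    (C : Fin n → ℕ → ℂ)
    (hC : ∀ i k, C i k = ((derivative^[k] p).eval (z i)) / ((derivative^[2] p).eval (z i)))
    (i : Fin n) :
    ∑ j ∈ univ.filter (fun j => j ≠ i),
        (p.eval (z i) - p.eval (z j)) / ((derivative^[2] p).eval (z j) * (z i - z j) ^ 4)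
      = (1 / 24) * ((C i 3) ^ 2 - C i 4) := by
  -- dispatch the trivial case n = 1
  rcases eq_or_lt_of_le hn with h1 | h2
  · have hsub : Subsingleton (Fin n) := by rw [← h1]; infer_instance
    have hempty : univ.filter (fun j => j ≠ i) = (∅ : Finset (Fin n)) := by
      apply eq_empty_of_forall_notMem
      intro j hj
      exact (mem_filter.mp hj).2 (Subsingleton.elim j i)
    have h3 : derivative^[3] p = 0 := iterate_derivative_eq_zero (by omega)
    have h4 : derivative^[4] p = 0 := iterate_derivative_eq_zero (by omega)
    rw [hempty, sum_empty, hC, hC, h3, h4]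
    simp
  -- main case n ≥ 2
  obtain ⟨k, rfl⟩ : ∃ k, n = k + 2 := ⟨n - 2, by omega⟩
  set a := z i with ha
  set J : Finset (Fin (k + 2)) := univ.erase i with hJ
  have hJcard : J.card = k + 1 := by
    rw [hJ, card_erase_of_mem (mem_univ i), card_univ, Fintype.card_fin]
    omega
  set s : ℂ[X] := Lagrange.nodal J z with hs
  have hsmonic : s.Monic := Lagrange.nodal_monic
  have hsdeg : s.natDegree = k + 1 := by rw [hs, Lagrange.natDegree_nodal, hJcard]
  obtain ⟨κ, hκ⟩ : ∃ κ : ℂ, κ = (k : ℂ) + 3 := ⟨_, rfl⟩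
  have hn1 : κ ≠ 0 := by
    have hcast : κ = ((k + 3 : ℕ) : ℂ) := by rw [hκ]; push_cast; ring
    rw [hcast]
    exact_mod_cast Nat.succ_ne_zero (k + 2)
  have hsprod : s = ∏ j ∈ J, (X - Polynomial.C (z j)) := rfl
  have hprodall : (X - Polynomial.C a) * s = ∏ j : Fin (k + 2), (X - Polynomial.C (z j)) := by
    rw [hsprod, ha, hJ]
    exact Finset.mul_prod_erase univ (f := fun j => X - Polynomial.C (z j)) (mem_univ i)
  have hfac : derivative p = Polynomial.C κ * ((X - Polynomial.C a) * s) := by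
    rw [hprodall]
    set F : ℂ[X] := ∏ j : Fin (k + 2), (X - Polynomial.C (z j)) with hF
    have hFmonic : F.Monic := monic_prod_of_monic _ _ (fun j _ => monic_X_sub_C _)
    have hFdeg : F.natDegree = k + 2 := by
      rw [hF, natDegree_prod _ _ (fun j _ => X_sub_C_ne_zero (z j))]
      simp [natDegree_X_sub_C]
    have hqdeg : (derivative p).natDegree ≤ k + 2 := by
      have := natDegree_derivative_le p
      omega
    have hqc : (derivative p).coeff (k + 2) = κ := by
      rw [coeff_derivative, ← hdeg, hp.coeff_natDegree, hκ]
      push_cast; ring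
    have hFc : F.coeff (k + 2) = 1 := by rw [← hFdeg]; exact hFmonic.coeff_natDegree
    set d : ℂ[X] := derivative p - Polynomial.C κ * F with hd
    have hdc : d.coeff (k + 2) = 0 := by
      rw [hd, coeff_sub, hqc, coeff_C_mul, hFc]; ring
    have hddeg : d.natDegree ≤ k + 2 := by
      refine le_trans (natDegree_sub_le _ _) (max_le hqdeg ?_)
      exact le_trans (natDegree_C_mul_le _ _) (le_of_eq hFdeg)
    have hdz : d = 0 := by
      apply Polynomial.eq_zero_of_natDegree_lt_card_of_eval_eq_zero d hz
      · intro j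
        rw [hd, eval_sub, hcrit j, eval_mul, eval_C, hF, eval_prod]
        rw [Finset.prod_eq_zero (mem_univ j) (by simp)]
        ring
      · rw [Fintype.card_fin]
        rcases eq_or_ne d 0 with h | h
        · rw [h, natDegree_zero]; omega
        · rcases lt_or_eq_of_le hddeg with h' | h'
          · exact h'
          · have hl : d.leadingCoeff = 0 := by rw [leadingCoeff, h']; exact hdc
            exact absurd hl (leadingCoeff_ne_zero.mpr h)
    exact sub_eq_zero.mp hdz
  set v : ℂ := p.eval a with hv
  -- quadratic factor at the critical point
  obtain ⟨m, hm⟩ : ∃ m, Polynomial.C v - p = (X - Polynomial.C a) ^ 2 * m := by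
    have hroot : (Polynomial.C v - p).IsRoot a := by simp [IsRoot, hv]
    obtain ⟨m1, hm1⟩ := dvd_iff_isRoot.mpr hroot
    have hd1 : derivative (Polynomial.C v - p) = m1 + (X - Polynomial.C a) * derivative m1 := by
      rw [hm1, derivative_mul]; simp
    have hm1a : m1.IsRoot a := by
      have h := congrArg (Polynomial.eval a) hd1
      rw [derivative_sub, derivative_C] at h
      simp [ha, hcrit i] at h
      simpa [IsRoot] using h.symm
    obtain ⟨m2, hm2⟩ := dvd_iff_isRoot.mpr hm1a
    exact ⟨m2, by rw [hm1, hm2]; ring⟩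
  -- taylor coefficients
  obtain ⟨A2, hA2⟩ : ∃ c : ℂ, c = (taylor a p).coeff 2 := ⟨_, rfl⟩
  obtain ⟨A3, hA3⟩ : ∃ c : ℂ, c = (taylor a p).coeff 3 := ⟨_, rfl⟩
  obtain ⟨A4, hA4⟩ : ∃ c : ℂ, c = (taylor a p).coeff 4 := ⟨_, rfl⟩
  have hA2ne : A2 ≠ 0 := by
    intro h
    apply hnd i
    rw [← ha, eval_iterate_derivative_eq 2 p a, ← hA2, h, mul_zero]
  have hts : taylor a (X - Polynomial.C a) = X := by rw [map_sub, taylor_X, taylor_C]; ring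
  have hMT : Polynomial.C v - taylor a p = X ^ 2 * taylor a m := by
    have h := congrArg (taylor a) hm
    rwa [map_sub, taylor_C, pow_two, mul_assoc, taylor_mul, taylor_mul, hts, ← mul_assoc,
      ← pow_two] at h
  have hMc : ∀ t : ℕ, (taylor a m).coeff t = -((taylor a p).coeff (t + 2)) := by
    intro t
    have h := congrArg (fun f => Polynomial.coeff f (t + 2)) hMT
    simp only [coeff_sub, coeff_X_pow_mul, coeff_C] at h
    simp at h
    linear_combination -h
  have hST : derivative (taylor a p) = Polynomial.C κ * (X * taylor a s) := by
    have h := congrArg (taylor a) hfac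
    rwa [taylor_derivative', taylor_mul, taylor_C, taylor_mul, hts] at h
  have hSc : ∀ t : ℕ, κ * (taylor a s).coeff t = ((t : ℂ) + 2) * (taylor a p).coeff (t + 2) := by
    intro t
    have h := congrArg (fun f => Polynomial.coeff f (t + 1)) hST
    simp only [coeff_derivative, coeff_C_mul, coeff_X_mul] at h
    push_cast at h
    rw [show t + 1 + 1 = t + 2 by omega] at h
    linear_combination -h
  have hS0 : (taylor a s).coeff 0 = 2 * A2 / κ := by
    rw [eq_div_iff hn1]
    have h := hSc 0; push_cast at h
    rw [hA2]; linear_combination h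
  have hS1 : (taylor a s).coeff 1 = 3 * A3 / κ := by
    rw [eq_div_iff hn1]
    have h := hSc 1; push_cast at h
    rw [hA3]; linear_combination h
  have hS2 : (taylor a s).coeff 2 = 4 * A4 / κ := by
    rw [eq_div_iff hn1]
    have h := hSc 2; push_cast at h
    rw [hA4]; linear_combination h
  -- the correction polynomial
  obtain ⟨r0, hr0⟩ : ∃ c : ℂ, c = -κ / 2 := ⟨_, rfl⟩
  obtain ⟨r1, hr1⟩ : ∃ c : ℂ, c = κ * A3 / (4 * A2) := ⟨_, rfl⟩
  obtain ⟨r2, hr2⟩ : ∃ c : ℂ, c = κ * (4 * A2 * A4 - 3 * A3 ^ 2) / (8 * A2 ^ 2) := ⟨_, rfl⟩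
  set R' : ℂ[X] := Polynomial.C r0 + Polynomial.C r1 * X ^ 1 + Polynomial.C r2 * X ^ 2 with hR'
  set g : ℂ[X] := m - s * taylor (-a) R' with hg
  have hGT : taylor a g = taylor a m - taylor a s * R' := by
    rw [hg, map_sub, taylor_mul, taylor_taylor]
    simp
  have hSRc : ∀ t : ℕ, (taylor a s * R').coeff t
      = r0 * (taylor a s).coeff t + r1 * (if 1 ≤ t then (taylor a s).coeff (t - 1) else 0)
        + r2 * (if 2 ≤ t then (taylor a s).coeff (t - 2) else 0) := by
    intro t
    rw [show taylor a s * R' = Polynomial.C r0 * taylor a s + Polynomial.C r1 * (X ^ 1 * taylor a s)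
      + Polynomial.C r2 * (X ^ 2 * taylor a s) by rw [hR']; ring]
    simp only [coeff_add, coeff_C_mul, coeff_X_pow_mul']
  have hG0 : (taylor a g).coeff 0 = 0 := by
    rw [hGT, coeff_sub, hSRc, hMc, hS0, ← hA2]
    norm_num
    rw [hr0]
    field_simp
    ring
  have hG1 : (taylor a g).coeff 1 = 0 := by
    rw [hGT, coeff_sub, hSRc, hMc, hS0, hS1, ← hA3]
    norm_num
    rw [hr0, hr1]
    field_simp [hn1, hA2ne]
    ring
  have hG2 : (taylor a g).coeff 2 = 0 := by
    rw [hGT, coeff_sub, hSRc, hMc, hS0, hS1, hS2, ← hA4]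
    norm_num
    rw [hr0, hr1, hr2]
    field_simp [hn1, hA2ne]
    have hD : (2 * κ * (4 * A2 * κ) * (8 * A2 ^ 2 * κ)) ≠ 0 := by
      apply mul_ne_zero (mul_ne_zero (mul_ne_zero two_ne_zero hn1)
        (mul_ne_zero (mul_ne_zero (by norm_num : (4:ℂ) ≠ 0) hA2ne) hn1))
      exact mul_ne_zero (mul_ne_zero (by norm_num) (pow_ne_zero 2 hA2ne)) hn1
    ring
  have hdvd3 : (X : ℂ[X]) ^ 3 ∣ taylor a g := by
    rw [X_pow_dvd_iff]
    intro d hd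
    interval_cases d
    exacts [hG0, hG1, hG2]
  obtain ⟨W, hW⟩ := hdvd3
  set Q : ℂ[X] := taylor (-a) W with hQdef
  have hWQ : W = taylor a Q := by rw [hQdef, taylor_taylor]; simp
  have hgQ : g = (X - Polynomial.C a) ^ 3 * Q := by
    apply taylor_injective a
    rw [hW, hWQ, show (X - Polynomial.C a) ^ 3 * Q
      = (X - Polynomial.C a) * ((X - Polynomial.C a) * ((X - Polynomial.C a) * Q)) by ring,
      taylor_mul, taylor_mul, taylor_mul, hts]
    ring
  -- degree bookkeeping
  have hmdeg : m.natDegree = k + 1 := by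
    have hCv : (Polynomial.C v - p).natDegree = k + 3 := by
      rw [show Polynomial.C v - p = -(p - Polynomial.C v) by ring, natDegree_neg,
        natDegree_sub_C, hdeg]
    have hmne : m ≠ 0 := by
      intro h
      rw [h, mul_zero] at hm
      rw [hm] at hCv
      simp at hCv
    have h := natDegree_mul (pow_ne_zero 2 (X_sub_C_ne_zero a)) hmne
    rw [← hm, hCv, natDegree_pow, natDegree_X_sub_C] at h
    omega
  have hRdeg : (taylor (-a) R').natDegree ≤ 2 := by
    rw [natDegree_taylor, hR']
    refine le_trans (natDegree_add_le _ _) (max_le (le_trans (natDegree_add_le _ _)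
      (max_le ?_ ?_)) ?_)
    · simp
    · exact le_trans (natDegree_C_mul_le _ _) (by simp)
    · exact le_trans (natDegree_C_mul_le _ _) (by simp [natDegree_X_pow])
  have hgdeg : g.natDegree ≤ k + 3 := by
    rw [hg]
    refine le_trans (natDegree_sub_le _ _) (max_le (by omega) ?_)
    refine le_trans (natDegree_mul_le) ?_
    rw [hsdeg]
    omega
  have hQdeg : Q.natDegree ≤ k := by
    rcases eq_or_ne Q 0 with h | h
    · simp [h]
    · have h3 := natDegree_mul (pow_ne_zero 3 (X_sub_C_ne_zero a)) h
      rw [← hgQ, natDegree_pow, natDegree_X_sub_C] at h3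
      omega
  -- the key coefficient
  have hQk : Q.coeff k = -r2 := by
    have hWk : (taylor a g).coeff (k + 3) = W.coeff k := by rw [hW, coeff_X_pow_mul]
    have hQW : Q.coeff k = W.coeff k := by
      rw [hWQ, taylor_coeff_of_natDegree_le Q a k hQdeg]
    have hMtop : (taylor a m).coeff (k + 3) = 0 :=
      coeff_eq_zero_of_natDegree_lt (by rw [natDegree_taylor, hmdeg]; omega)
    have hStop1 : (taylor a s).coeff (k + 1) = 1 := by
      rw [taylor_coeff_of_natDegree_le _ _ _ (le_of_eq hsdeg), ← hsdeg]
      exact hsmonic.coeff_natDegree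
    have hStop2 : (taylor a s).coeff (k + 2) = 0 :=
      coeff_eq_zero_of_natDegree_lt (by rw [natDegree_taylor, hsdeg]; omega)
    have hStop3 : (taylor a s).coeff (k + 3) = 0 :=
      coeff_eq_zero_of_natDegree_lt (by rw [natDegree_taylor, hsdeg]; omega)
    rw [hQW, ← hWk, hGT, coeff_sub, hSRc, hMtop]
    rw [if_pos (by omega), if_pos (by omega)]
    rw [show k + 3 - 1 = k + 2 by omega, show k + 3 - 2 = k + 1 by omega]
    rw [hStop1, hStop2, hStop3]
    ring
  -- assembling the sum
  have hfilter : univ.filter (fun j => j ≠ i) = J := filter_ne' univ i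
  have hterm : ∀ j ∈ J, (p.eval (z i) - p.eval (z j)) /
      (((derivative^[2] p)).eval (z j) * (z i - z j) ^ 4)
      = (Q.eval (z j) / ∏ t ∈ J.erase j, (z j - z t)) / κ := by
    intro j hj
    have hji : j ≠ i := by rw [hJ] at hj; exact (mem_erase.mp hj).1
    have hzji : z j - a ≠ 0 := sub_ne_zero.mpr (fun h => hji (hz (ha ▸ h)))
    have hD : ∀ t ∈ J.erase j, z j - z t ≠ 0 := by
      intro t ht
      exact sub_ne_zero.mpr (fun h => (mem_erase.mp ht).1 (hz h).symm)
    have hDne : (∏ t ∈ J.erase j, (z j - z t)) ≠ 0 := prod_ne_zero_iff.mpr hD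
    have hsz : s.eval (z j) = 0 := by
      rw [hs, Lagrange.eval_nodal]
      exact prod_eq_zero hj (by ring)
    have hds : (derivative s).eval (z j) = ∏ t ∈ J.erase j, (z j - z t) := by
      rw [hs, Lagrange.eval_nodal_derivative_eval_node_eq hj, Lagrange.eval_nodal]
    have hp2 : (derivative^[2] p).eval (z j)
        = κ * ((z j - a) * ∏ t ∈ J.erase j, (z j - z t)) := by
      have h := congrArg derivative hfac
      rw [derivative_mul, derivative_C, derivative_mul] at h
      have h2 := congrArg (Polynomial.eval (z j)) h
      simp only [eval_add, eval_mul, eval_sub, eval_X, eval_C, eval_zero, zero_mul, zero_add,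
        hsz, hds, derivative_sub, derivative_X, derivative_C, eval_one, sub_zero] at h2
      rw [show (derivative^[2] p) = derivative (derivative p) by rfl, h2]
      ring
    have hmz : m.eval (z j) = (z j - a) ^ 3 * Q.eval (z j) := by
      have h2 := congrArg (Polynomial.eval (z j)) hgQ
      rw [hg] at h2
      simp only [eval_sub, eval_mul, eval_pow, eval_X, eval_C, hsz, zero_mul, sub_zero] at h2
      exact h2
    have hnum : p.eval (z i) - p.eval (z j) = (z j - a) ^ 5 * Q.eval (z j) := by
      have h := congrArg (Polynomial.eval (z j)) hm
      simp only [eval_sub, eval_mul, eval_pow, eval_X, eval_C] at h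
      rw [hmz] at h
      rw [← ha, ← hv]
      rw [h]; ring
    rw [hnum, hp2, show (z i - z j) ^ 4 = (z j - a) ^ 4 by rw [ha]; ring]
    field_simp
  rw [hfilter, sum_congr rfl hterm, ← sum_div]
  have hinj : Set.InjOn z J := Function.Injective.injOn hz
  have hdegQ : Q.degree < (J.card : ℕ) := by
    rw [hJcard]
    calc Q.degree ≤ (Q.natDegree : WithBot ℕ) := degree_le_natDegree
      _ ≤ ((k : ℕ) : WithBot ℕ) := by exact_mod_cast hQdeg
      _ < ((k + 1 : ℕ) : WithBot ℕ) := by exact_mod_cast Nat.lt_succ_self k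
  rw [sum_div_eq_coeff J z hinj Q hdegQ, hJcard, show k + 1 - 1 = k by omega, hQk]
  -- final arithmetic
  rw [hC, hC, ← ha, eval_iterate_derivative_eq 3 p a, eval_iterate_derivative_eq 4 p a,
    eval_iterate_derivative_eq 2 p a, ← hA2, ← hA3, ← hA4, hr2]
  norm_num [Nat.factorial]
  field_simp
  ring
end

section
/- For every index i ∈ {1,…,n} the following identity holds: ∑_{k≠i} 1/z_{ik}² = C_{i3}²/4 − C_{i4}/3. -/
open Polynomial Finset

lemma my_derivative_finset_prod {ι : Type*} [DecidableEq ι] (s : Finset ι)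
    (f : ι → Polynomial ℂ) :
    derivative (∏ b ∈ s, f b) = ∑ b ∈ s, (∏ a ∈ s.erase b, f a) * derivative (f b) := by
  induction s using Finset.induction_on with
  | empty => simp
  | insert a s ha ih =>
    rw [Finset.prod_insert ha, derivative_mul, ih, Finset.sum_insert ha,
      Finset.erase_insert ha, Finset.mul_sum]
    congr 1
    · ring
    · refine Finset.sum_congr rfl fun b hb => ?_
      rw [Finset.erase_insert_of_ne (by rintro rfl; exact ha hb),
        Finset.prod_insert (fun h => ha (Finset.mem_of_mem_erase h))]
      ring

/-- Residue formula R₁(2): for every index `i`,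
`∑_{{k≠i}} 1/z_ik² = C_i3²/4 − C_i4/3`. -/
theorem stmt_5 (n : ℕ) (hn : 1 ≤ n) (p : Polynomial ℂ)
    (hp : p.Monic) (hdeg : p.natDegree = n + 1)
    (z : Fin n → ℂ) (hz : Function.Injective z)
    (hcrit : ∀ i, (derivative p).eval (z i) = 0)
    (hnd : ∀ i, (derivative^[2] p).eval (z i) ≠ 0)
    (C : Fin n → ℕ → ℂ)
    (hC : ∀ i k, C i k = ((derivative^[k] p).eval (z i)) / ((derivative^[2] p).eval (z i)))
    (i : Fin n) :
    ∑ k ∈ univ.filter (fun k => k ≠ i), 1 / (z i - z k) ^ 2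
      = (C i 3) ^ 2 / 4 - C i 4 / 3 := by
  classical
  set c : ℂ := (n : ℂ) + 1 with hc
  have hc0 : c ≠ 0 := by
    have := Nat.cast_add_one_ne_zero (R := ℂ) n
    simpa [hc] using this
  set q : Polynomial ℂ := ∏ k, (X - Polynomial.C (z k)) with hqdef
  have hqmonic : q.Monic := monic_prod_of_monic _ _ fun k _ => monic_X_sub_C _
  have hqdeg : q.natDegree = n := by
    rw [hqdef, natDegree_prod_of_monic _ _ fun k _ => monic_X_sub_C _]
    simp [natDegree_X_sub_C]
  -- Step A : derivative p = C c * q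
  have hA : derivative p = Polynomial.C c * q := by
    set d : Polynomial ℂ := derivative p - Polynomial.C c * q with hd
    have hdlt : d.degree < (n : ℕ) := by
      rw [degree_lt_iff_coeff_zero]
      intro m hm
      have hm' : n ≤ m := by exact_mod_cast hm
      rw [hd, coeff_sub, coeff_C_mul, coeff_derivative]
      rcases eq_or_lt_of_le hm' with h | h
      · have h1 : p.coeff (m + 1) = 1 := by
          rw [← h, ← hdeg]; exact hp.coeff_natDegree
        have h2 : q.coeff m = 1 := by
          rw [← h, ← hqdeg]; exact hqmonic.coeff_natDegree
        rw [h1, h2, ← h, hc]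
        push_cast
        ring
      · have h1 : p.coeff (m + 1) = 0 :=
          coeff_eq_zero_of_natDegree_lt (by omega)
        have h2 : q.coeff m = 0 :=
          coeff_eq_zero_of_natDegree_lt (by omega)
        rw [h1, h2]; ring
    have heval : ∀ k, d.eval (z k) = 0 := by
      intro k
      have hq0 : q.eval (z k) = 0 := by
        rw [hqdef, eval_prod]
        exact Finset.prod_eq_zero (mem_univ k) (by simp)
      simp [hd, hcrit k, hq0]
    have hd0 : d = 0 := by
      by_cases h : d = 0
      · exact h
      · refine eq_zero_of_natDegree_lt_card_of_eval_eq_zero d hz heval ?_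
        have := (natDegree_lt_iff_degree_lt h).2 hdlt
        simpa using this
    exact sub_eq_zero.mp hd0
  -- iterated derivatives of p in terms of q
  set q1 : Polynomial ℂ := derivative q with hq1def
  set q2 : Polynomial ℂ := derivative q1 with hq2def
  set q3 : Polynomial ℂ := derivative q2 with hq3def
  have h2 : derivative^[2] p = Polynomial.C c * q1 := by
    rw [show (2:ℕ) = 1+1 from rfl, Function.iterate_succ_apply', Function.iterate_one, hA,
      derivative_C_mul]
  have h3 : derivative^[3] p = Polynomial.C c * q2 := by
    rw [show (3:ℕ) = 2+1 from rfl, Function.iterate_succ_apply', h2, derivative_C_mul]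
  have h4 : derivative^[4] p = Polynomial.C c * q3 := by
    rw [show (4:ℕ) = 3+1 from rfl, Function.iterate_succ_apply', h3, derivative_C_mul]
  -- factor out (X - z i)
  set E : Finset (Fin n) := univ.erase i with hE
  set r : Polynomial ℂ := ∏ k ∈ E, (X - Polynomial.C (z k)) with hrdef
  set r1 : Polynomial ℂ := derivative r with hr1def
  set r2 : Polynomial ℂ := derivative r1 with hr2def
  have hq : q = (X - Polynomial.C (z i)) * r := by
    rw [hqdef, hrdef, hE]
    exact (Finset.mul_prod_erase univ _ (mem_univ i)).symm
  have hq1 : q1 = r + (X - Polynomial.C (z i)) * r1 := by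
    rw [hq1def, hq, derivative_mul]
    simp [hr1def]
  have hq2 : q2 = 2 * r1 + (X - Polynomial.C (z i)) * r2 := by
    rw [hq2def, hq1, derivative_add, derivative_mul]
    simp [hr1def, hr2def]
    ring
  have hq3 : q3 = 3 * r2 + (X - Polynomial.C (z i)) * derivative r2 := by
    rw [hq3def, hq2, derivative_add, derivative_mul, derivative_mul]
    simp [hr2def]
    ring
  -- evaluations at z i
  have a1 : q1.eval (z i) = r.eval (z i) := by rw [hq1]; simp
  have a2 : q2.eval (z i) = 2 * r1.eval (z i) := by rw [hq2]; simp
  have a3 : q3.eval (z i) = 3 * r2.eval (z i) := by rw [hq3]; simp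
  -- sums of products
  set v : Finset (Fin n) → ℂ := fun s => ∏ j ∈ s, (z i - z j) with hv
  set w : Fin n → ℂ := fun k => (z i - z k)⁻¹ with hw
  have hne : ∀ k ∈ E, z i - z k ≠ 0 := by
    intro k hk
    rw [sub_ne_zero]
    intro h
    exact Finset.ne_of_mem_erase hk (hz h).symm
  have hvE : v E ≠ 0 := Finset.prod_ne_zero_iff.2 hne
  have hvk : ∀ k ∈ E, v (E.erase k) = w k * v E := by
    intro k hk
    have h1 : (z i - z k) * v (E.erase k) = v E := by
      simp only [hv]; exact Finset.mul_prod_erase E (fun j => z i - z j) hk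
    simp only [hw, ← h1, ← mul_assoc]
    rw [inv_mul_cancel₀ (hne k hk), one_mul]
  have hvkl : ∀ k ∈ E, ∀ l ∈ E.erase k, v ((E.erase k).erase l) = w l * w k * v E := by
    intro k hk l hl
    have hlE : l ∈ E := Finset.mem_of_mem_erase hl
    have h1 : (z i - z l) * v ((E.erase k).erase l) = v (E.erase k) := by
      simp only [hv]; exact Finset.mul_prod_erase (E.erase k) (fun j => z i - z j) hl
    have h2 : v (E.erase k) = w k * v E := hvk k hk
    have h3 : v ((E.erase k).erase l) = w l * v (E.erase k) := by
      simp only [hw, ← h1, ← mul_assoc]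
      rw [inv_mul_cancel₀ (hne l hlE), one_mul]
    rw [h3, h2]; ring
  have er : r.eval (z i) = v E := by rw [hrdef, eval_prod]; simp [hv]
  have er1 : r1.eval (z i) = ∑ k ∈ E, v (E.erase k) := by
    rw [hr1def, hrdef, my_derivative_finset_prod]
    simp [eval_finset_sum, eval_prod, hv]
  have er2 : r2.eval (z i) = ∑ k ∈ E, ∑ l ∈ E.erase k, v ((E.erase k).erase l) := by
    rw [hr2def, hr1def, hrdef, my_derivative_finset_prod]
    simp only [derivative_sub, derivative_X, derivative_C, sub_zero, mul_one]
    rw [derivative_sum]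
    rw [eval_finset_sum]
    refine Finset.sum_congr rfl fun k hk => ?_
    rw [my_derivative_finset_prod]
    simp [eval_finset_sum, eval_prod, hv]
  set S1 : ℂ := ∑ k ∈ E, w k with hS1
  set W : ℂ := ∑ k ∈ E, (w k)^2 with hW
  set T : ℂ := ∑ k ∈ E, ∑ l ∈ E.erase k, w k * w l with hT
  have er1' : r1.eval (z i) = S1 * v E := by
    rw [er1, hS1, Finset.sum_mul]
    exact Finset.sum_congr rfl hvk
  have er2' : r2.eval (z i) = T * v E := by
    rw [er2, hT, Finset.sum_mul]
    refine Finset.sum_congr rfl fun k hk => ?_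
    rw [Finset.sum_mul]
    refine Finset.sum_congr rfl fun l hl => ?_
    rw [hvkl k hk l hl]; ring
  -- the coefficients C i 3, C i 4
  have e2 : (derivative^[2] p).eval (z i) = c * v E := by
    rw [h2, eval_mul, eval_C, a1, er]
  have e3 : (derivative^[3] p).eval (z i) = c * (2 * (S1 * v E)) := by
    rw [h3, eval_mul, eval_C, a2, er1']
  have e4 : (derivative^[4] p).eval (z i) = c * (3 * (T * v E)) := by
    rw [h4, eval_mul, eval_C, a3, er2']
  have hC3 : C i 3 = 2 * S1 := by
    rw [hC, e3, e2]
    field_simp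
  have hC4 : C i 4 = 3 * T := by
    rw [hC, e4, e2]
    field_simp
  -- final algebra
  have hTW : T = S1 * S1 - W := by
    rw [hT, hW, hS1]
    have : ∀ k ∈ E, ∑ l ∈ E.erase k, w k * w l = w k * (∑ l ∈ E, w l) - w k * w k := by
      intro k hk
      rw [← Finset.mul_sum, Finset.sum_erase_eq_sub hk, mul_sub]
    rw [Finset.sum_congr rfl this, Finset.sum_sub_distrib, ← Finset.sum_mul]
    congr 1
    exact Finset.sum_congr rfl fun k _ => (sq (w k)) ▸ (sq (w k)).symm ▸ rfl
  have hLHS : ∑ k ∈ univ.filter (fun k => k ≠ i), 1 / (z i - z k) ^ 2 = W := by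
    rw [hW, show univ.filter (fun k => k ≠ i) = E by rw [hE, Finset.filter_ne']]
    refine Finset.sum_congr rfl fun k _ => ?_
    rw [hw, one_div, inv_pow]
  rw [hLHS, hC3, hC4, hTW]
  ring
end

section
/- For every index i ∈ {1,…,n} the following identity holds: ∑_{k≠i} 1/z_{ik}³ = (1/8)·(C_{i3}³ − 2C_{i3}C_{i4} + C_{i5}). -/
open Polynomial Finset

lemma aux_deriv_prod {ι : Type*} [DecidableEq ι] (s : Finset ι) (c : ι → ℂ) :
    derivative (∏ k ∈ s, (X - Polynomial.C (c k))) =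
      ∑ j ∈ s, ∏ k ∈ s.erase j, (X - Polynomial.C (c k)) := by
  induction s using Finset.induction_on with
  | empty => simp
  | @insert a s ha ih =>
    rw [Finset.prod_insert ha, derivative_mul, ih, Finset.sum_insert ha, derivative_X_sub_C,
      Finset.erase_insert ha, one_mul, Finset.mul_sum]
    congr 1
    refine Finset.sum_congr rfl fun j hj => ?_
    rw [Finset.erase_insert_of_ne (fun h => ha (by rw [h]; exact hj)),
      Finset.prod_insert (fun h => ha (Finset.erase_subset _ _ h))]

lemma aux_sum2 {ι : Type*} [DecidableEq ι] (s : Finset ι) (w : ι → ℂ) :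
    ∑ j ∈ s, ∑ l ∈ s.erase j, w j * w l
      = (∑ j ∈ s, w j) ^ 2 - ∑ j ∈ s, w j ^ 2 := by
  have h1 : ∀ j ∈ s, ∑ l ∈ s.erase j, w j * w l
      = w j * (∑ l ∈ s, w l) - w j ^ 2 := by
    intro j hj
    rw [← Finset.mul_sum, Finset.sum_erase_eq_sub hj]
    ring
  rw [Finset.sum_congr rfl h1, Finset.sum_sub_distrib, ← Finset.sum_mul]
  ring

lemma aux_sum3 {ι : Type*} [DecidableEq ι] (s : Finset ι) (w : ι → ℂ) :
    ∑ j ∈ s, ∑ l ∈ s.erase j, ∑ m ∈ (s.erase j).erase l, w j * w l * w m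
      = (∑ j ∈ s, w j) ^ 3 - 3 * (∑ j ∈ s, w j) * (∑ j ∈ s, w j ^ 2)
        + 2 * ∑ j ∈ s, w j ^ 3 := by
  have h1 : ∀ j ∈ s, ∀ l ∈ s.erase j, ∑ m ∈ (s.erase j).erase l, w j * w l * w m
      = w j * w l * ((∑ m ∈ s, w m) - w j - w l) := by
    intro j hj l hl
    rw [← Finset.mul_sum, Finset.sum_erase_eq_sub hl, Finset.sum_erase_eq_sub hj]
  have h2 : ∀ j ∈ s, ∑ l ∈ s.erase j, w j * w l * ((∑ m ∈ s, w m) - w j - w l)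
      = w j * (((∑ m ∈ s, w m) - w j) * ((∑ m ∈ s, w m) - w j)
          - ((∑ m ∈ s, w m ^ 2) - w j ^ 2)) := by
    intro j hj
    have e : ∀ l ∈ s.erase j, w j * w l * ((∑ m ∈ s, w m) - w j - w l)
        = w j * ((∑ m ∈ s, w m) - w j) * w l - w j * w l ^ 2 := fun l _ => by ring
    rw [Finset.sum_congr rfl e, Finset.sum_sub_distrib, ← Finset.mul_sum, ← Finset.mul_sum,
      Finset.sum_erase_eq_sub hj, Finset.sum_erase_eq_sub (f := fun l => w l ^ 2) hj]
    ring
  rw [Finset.sum_congr rfl (fun j hj => Finset.sum_congr rfl (h1 j hj)),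
    Finset.sum_congr rfl h2]
  have e2 : ∀ j ∈ s, w j * (((∑ m ∈ s, w m) - w j) * ((∑ m ∈ s, w m) - w j)
        - ((∑ m ∈ s, w m ^ 2) - w j ^ 2))
      = w j * (∑ m ∈ s, w m) ^ 2 - 2 * (∑ m ∈ s, w m) * w j ^ 2 + 2 * w j ^ 3
        - (∑ m ∈ s, w m ^ 2) * w j := fun j _ => by ring
  rw [Finset.sum_congr rfl e2]
  simp only [Finset.sum_sub_distrib, Finset.sum_add_distrib, ← Finset.sum_mul,
    ← Finset.mul_sum]
  ring

lemma aux_fact (n : ℕ) (p : Polynomial ℂ) (hp : p.Monic) (hdeg : p.natDegree = n + 1)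
    (z : Fin n → ℂ) (hz : Function.Injective z)
    (hcrit : ∀ i, (derivative p).eval (z i) = 0) :
    derivative p = Polynomial.C ((n : ℂ) + 1) * ∏ k, (X - Polynomial.C (z k)) := by
  set Q : Polynomial ℂ := Polynomial.C ((n : ℂ) + 1) * ∏ k, (X - Polynomial.C (z k)) with hQ
  have hpm : (∏ k : Fin n, (X - Polynomial.C (z k))).Monic :=
    monic_prod_of_monic _ _ fun k _ => monic_X_sub_C _
  have hpd : (∏ k : Fin n, (X - Polynomial.C (z k))).natDegree = n := by
    rw [natDegree_prod_of_monic _ _ fun k _ => monic_X_sub_C _]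
    simp [natDegree_X_sub_C]
  have hsub : derivative p - Q = 0 := by
    rcases eq_or_ne (derivative p - Q) 0 with h | h
    · exact h
    refine eq_zero_of_natDegree_lt_card_of_eval_eq_zero _ hz (fun k => ?_) ?_
    · rw [eval_sub, hcrit k, hQ, eval_mul, eval_prod]
      rw [Finset.prod_eq_zero (Finset.mem_univ k) (by simp)]
      ring
    · rw [Fintype.card_fin]
      have hle : (derivative p - Q).natDegree ≤ n := by
        refine (natDegree_sub_le _ _).trans (max_le ?_ ?_)
        · exact (natDegree_derivative_le p).trans (by omega)
        · exact (natDegree_C_mul_le _ _).trans hpd.le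
      have hco : (derivative p - Q).coeff n = 0 := by
        rw [coeff_sub, coeff_derivative, hQ, coeff_C_mul]
        have h1 : p.coeff (n + 1) = 1 := by
          have := hp.coeff_natDegree; rwa [hdeg] at this
        have h2 : (∏ k : Fin n, (X - Polynomial.C (z k))).coeff n = 1 := by
          have := hpm.coeff_natDegree; rwa [hpd] at this
        rw [h1, h2]
        ring
      refine lt_of_le_of_ne hle fun hEq => h ?_
      have := Polynomial.leadingCoeff_ne_zero.mpr h
      rw [leadingCoeff, hEq, hco] at this
      exact absurd rfl this
  exact sub_eq_zero.mp hsub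

/-- Residue formula R₁(3): for every index `i`,
`∑_{{k≠i}} 1/z_ik³ = (1/8)·(C_i3³ − 2C_i3C_i4 + C_i5)`. -/
theorem stmt_6 (n : ℕ) (hn : 1 ≤ n) (p : Polynomial ℂ)
    (hp : p.Monic) (hdeg : p.natDegree = n + 1)
    (z : Fin n → ℂ) (hz : Function.Injective z)
    (hcrit : ∀ i, (derivative p).eval (z i) = 0)
    (hnd : ∀ i, (derivative^[2] p).eval (z i) ≠ 0)
    (C : Fin n → ℕ → ℂ)
    (hC : ∀ i k, C i k = ((derivative^[k] p).eval (z i)) / ((derivative^[2] p).eval (z i)))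
    (i : Fin n) :
    ∑ k ∈ univ.filter (fun k => k ≠ i), 1 / (z i - z k) ^ 3
      = (1 / 8) * ((C i 3) ^ 3 - 2 * C i 3 * C i 4 + C i 5) := by
  classical
  set A : Finset (Fin n) := Finset.univ.erase i with hA
  set w : Fin n → ℂ := fun k => (z i - z k)⁻¹ with hwdef
  have hzz : ∀ k ∈ A, z i - z k ≠ 0 := by
    intro k hk
    exact sub_ne_zero_of_ne fun h => (Finset.mem_erase.1 hk).1 (hz h).symm
  set r : Polynomial ℂ := ∏ k ∈ A, (X - Polynomial.C (z k)) with hr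
  set c : ℂ := (n : ℂ) + 1 with hcdef
  have hc : c ≠ 0 := Nat.cast_add_one_ne_zero n
  have hq : derivative p = Polynomial.C c * ((X - Polynomial.C (z i)) * r) := by
    rw [aux_fact n p hp hdeg z hz hcrit, hr, hA,
      ← Finset.mul_prod_erase _ _ (Finset.mem_univ i)]
  set PA : ℂ := ∏ k ∈ A, (z i - z k) with hPA
  have hPAne : PA ≠ 0 := Finset.prod_ne_zero_iff.2 hzz
  have herase : ∀ B : Finset (Fin n), B ⊆ A → ∀ j ∈ B,
      ∏ k ∈ B.erase j, (z i - z k) = w j * ∏ k ∈ B, (z i - z k) := by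
    intro B hB j hj
    rw [← Finset.mul_prod_erase B _ hj, hwdef, ← mul_assoc,
      inv_mul_cancel₀ (hzz j (hB hj)), one_mul]
  have heval_r : eval (z i) r = PA := by
    rw [hr, eval_prod, hPA]
    exact Finset.prod_congr rfl fun k _ => by simp
  have hr1 : derivative r = ∑ j ∈ A, ∏ k ∈ A.erase j, (X - Polynomial.C (z k)) :=
    aux_deriv_prod A z
  have hr2 : derivative (derivative r)
      = ∑ j ∈ A, ∑ l ∈ A.erase j, ∏ k ∈ (A.erase j).erase l, (X - Polynomial.C (z k)) := by
    rw [hr1, map_sum]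
    exact Finset.sum_congr rfl fun j _ => aux_deriv_prod _ z
  have hr3 : derivative (derivative (derivative r))
      = ∑ j ∈ A, ∑ l ∈ A.erase j, ∑ m ∈ (A.erase j).erase l,
          ∏ k ∈ ((A.erase j).erase l).erase m, (X - Polynomial.C (z k)) := by
    rw [hr2, map_sum]
    refine Finset.sum_congr rfl fun j _ => ?_
    rw [map_sum]
    exact Finset.sum_congr rfl fun l _ => aux_deriv_prod _ z
  set S1 : ℂ := ∑ j ∈ A, w j with hS1
  set S2 : ℂ := ∑ j ∈ A, w j ^ 2 with hS2
  set S3 : ℂ := ∑ j ∈ A, w j ^ 3 with hS3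
  set T2 : ℂ := ∑ j ∈ A, ∑ l ∈ A.erase j, w j * w l with hT2def
  set T3 : ℂ := ∑ j ∈ A, ∑ l ∈ A.erase j, ∑ m ∈ (A.erase j).erase l, w j * w l * w m
    with hT3def
  have hT2 : T2 = S1 ^ 2 - S2 := aux_sum2 A w
  have hT3 : T3 = S1 ^ 3 - 3 * S1 * S2 + 2 * S3 := aux_sum3 A w
  have heval_r1 : eval (z i) (derivative r) = PA * S1 := by
    rw [hr1, eval_finset_sum, hS1, Finset.mul_sum]
    refine Finset.sum_congr rfl fun j hj => ?_
    rw [eval_prod]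
    simp only [eval_sub, eval_X, eval_C]
    rw [herase A (subset_refl A) j hj]
    ring
  have heval_r2 : eval (z i) (derivative (derivative r)) = PA * T2 := by
    rw [hr2, hT2def, Finset.mul_sum]
    rw [eval_finset_sum]
    refine Finset.sum_congr rfl fun j hj => ?_
    rw [eval_finset_sum, Finset.mul_sum]
    refine Finset.sum_congr rfl fun l hl => ?_
    rw [eval_prod]
    simp only [eval_sub, eval_X, eval_C]
    rw [herase (A.erase j) (Finset.erase_subset _ _) l hl,
      herase A (subset_refl A) j hj]
    ring
  have heval_r3 : eval (z i) (derivative (derivative (derivative r))) = PA * T3 := by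
    rw [hr3, hT3def, Finset.mul_sum, eval_finset_sum]
    refine Finset.sum_congr rfl fun j hj => ?_
    rw [eval_finset_sum, Finset.mul_sum]
    refine Finset.sum_congr rfl fun l hl => ?_
    rw [eval_finset_sum, Finset.mul_sum]
    refine Finset.sum_congr rfl fun m hm => ?_
    rw [eval_prod]
    simp only [eval_sub, eval_X, eval_C]
    rw [herase ((A.erase j).erase l)
        ((Finset.erase_subset _ _).trans (Finset.erase_subset _ _)) m hm,
      herase (A.erase j) (Finset.erase_subset _ _) l hl,
      herase A (subset_refl A) j hj]
    ring
  have h2 : derivative^[2] p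
      = Polynomial.C c * (r + (X - Polynomial.C (z i)) * derivative r) := by
    have e : derivative^[2] p = derivative (derivative p) := rfl
    rw [e, hq, derivative_mul, derivative_C, derivative_mul, derivative_X_sub_C]
    ring
  have h3 : derivative^[3] p
      = Polynomial.C c * (derivative r + derivative r
          + (X - Polynomial.C (z i)) * derivative (derivative r)) := by
    have e : derivative^[3] p = derivative (derivative^[2] p) :=
      Function.iterate_succ_apply' derivative 2 p
    rw [e, h2, derivative_mul, derivative_C, derivative_add, derivative_mul,
      derivative_X_sub_C]
    ring
  have h4 : derivative^[4] p
      = Polynomial.C c * (derivative (derivative r) + derivative (derivative r)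
          + derivative (derivative r)
          + (X - Polynomial.C (z i)) * derivative (derivative (derivative r))) := by
    have e : derivative^[4] p = derivative (derivative^[3] p) :=
      Function.iterate_succ_apply' derivative 3 p
    rw [e, h3, derivative_mul, derivative_C, derivative_add, derivative_add,
      derivative_mul, derivative_X_sub_C]
    ring
  have h5 : derivative^[5] p
      = Polynomial.C c * (derivative (derivative (derivative r))
          + derivative (derivative (derivative r))
          + derivative (derivative (derivative r))
          + derivative (derivative (derivative r))
          + (X - Polynomial.C (z i))
              * derivative (derivative (derivative (derivative r)))) := by
    have e : derivative^[5] p = derivative (derivative^[4] p) :=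
      Function.iterate_succ_apply' derivative 4 p
    rw [e, h4, derivative_mul, derivative_C, derivative_add, derivative_add,
      derivative_add, derivative_mul, derivative_X_sub_C]
    ring
  have E2 : (derivative^[2] p).eval (z i) = c * PA := by
    rw [h2]
    simp only [eval_mul, eval_add, eval_C, eval_sub, eval_X, sub_self, zero_mul, add_zero]
    rw [heval_r]
  have E3 : (derivative^[3] p).eval (z i) = c * (2 * (PA * S1)) := by
    rw [h3]
    simp only [eval_mul, eval_add, eval_C, eval_sub, eval_X, sub_self, zero_mul, add_zero]
    rw [heval_r1]
    ring
  have E4 : (derivative^[4] p).eval (z i) = c * (3 * (PA * T2)) := by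
    rw [h4]
    simp only [eval_mul, eval_add, eval_C, eval_sub, eval_X, sub_self, zero_mul, add_zero]
    rw [heval_r2]
    ring
  have E5 : (derivative^[5] p).eval (z i) = c * (4 * (PA * T3)) := by
    rw [h5]
    simp only [eval_mul, eval_add, eval_C, eval_sub, eval_X, sub_self, zero_mul, add_zero]
    rw [heval_r3]
    ring
  have hC3 : C i 3 = 2 * S1 := by
    rw [hC i 3, E3, E2]
    field_simp
  have hC4 : C i 4 = 3 * T2 := by
    rw [hC i 4, E4, E2]
    field_simp
  have hC5 : C i 5 = 4 * T3 := by
    rw [hC i 5, E5, E2]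
    field_simp
  have hL : ∑ k ∈ univ.filter (fun k => k ≠ i), 1 / (z i - z k) ^ 3 = S3 := by
    rw [Finset.filter_ne', hS3]
    exact Finset.sum_congr rfl fun k _ => by rw [hwdef, one_div, ← inv_pow]
  rw [hL, hC3, hC4, hC5, hT2, hT3]
  ring
end

section
/- For every index i ∈ {1,…,n} the following identity holds: ∑_{k≠i} 1/z_{ik}⁶ = (1/60480)·(945C_{i3}⁶ − 3780C_{i3}⁴C_{i4} + 3780C_{i3}²C_{i4}² − 560C_{i4}³ + 1890C_{i3}³C_{i5} − 2520C_{i3}C_{i4}C_{i5} + 315C_{i5}² − 756C_{i3}²C_{i6} + 504C_{i4}C_{i6} + 252C_{i3}C_{i7} − 72C_{i8}). -/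
open Polynomial Finset

lemma coeff_prod_one_add {ι : Type*} [DecidableEq ι] (s : Finset ι) (w : ι → ℂ) (m : ℕ) :
    (∏ k ∈ s, (Polynomial.C (w k) * X + 1)).coeff m
      = ∑ t ∈ s.powersetCard m, ∏ k ∈ t, w k := by
  induction s using Finset.induction generalizing m with
  | empty =>
    cases m with
    | zero => simp
    | succ m =>
      rw [prod_empty, Polynomial.coeff_one]
      rw [powersetCard_eq_empty.2 (by simp)]
      simp
  | @insert a s ha ih =>
    rw [prod_insert ha]
    cases m with
    | zero =>
      rw [mul_coeff_zero, ih 0]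
      simp
    | succ m =>
      have hnotmem : ∀ t ∈ s.powersetCard m, a ∉ t :=
        fun t ht hat => ha ((mem_powersetCard.1 ht).1 hat)
      have himg : ∑ t ∈ s.powersetCard m, ∏ k ∈ insert a t, w k
          = ∑ t ∈ s.powersetCard m, w a * ∏ k ∈ t, w k :=
        sum_congr rfl fun t ht => prod_insert (hnotmem t ht)
      rw [add_mul, one_mul, coeff_add, mul_assoc, coeff_C_mul, coeff_X_mul, ih, ih,
        powersetCard_succ_insert ha, sum_union ?hd, sum_image ?hi, himg, mul_sum]
      · ring
      case hi =>
        intro t ht u hu htu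
        rw [← erase_insert (hnotmem t ht), ← erase_insert (hnotmem u hu), htu]
      case hd =>
        rw [disjoint_left]
        intro t ht ht'
        obtain ⟨u, hu, rfl⟩ := mem_image.1 ht'
        exact ha ((mem_powersetCard.1 ht).1 (mem_insert_self a u))

lemma newton_scalar {n : ℕ} (w : Fin n → ℂ) (k : ℕ) (hk : 0 < k) :
    ∑ j, w j ^ k = (-1) ^ (k + 1) * k * (∑ t ∈ (univ : Finset (Fin n)).powersetCard k, ∏ j ∈ t, w j)
      - ∑ a ∈ (antidiagonal k).filter (fun a => 0 < a.1 ∧ a.1 < k),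
          (-1) ^ a.1 * (∑ t ∈ (univ : Finset (Fin n)).powersetCard a.1, ∏ j ∈ t, w j)
            * ∑ j, w j ^ a.2 := by
  have h2 : ∀ m, (MvPolynomial.aeval w) (MvPolynomial.esymm (Fin n) ℂ m)
      = ∑ t ∈ (univ : Finset (Fin n)).powersetCard m, ∏ j ∈ t, w j := fun m => by
    rw [MvPolynomial.aeval_esymm_eq_multiset_esymm, Finset.esymm_map_val]
  have h := congrArg (MvPolynomial.aeval w) (MvPolynomial.psum_eq_mul_esymm_sub_sum (Fin n) ℂ k hk)
  simpa only [MvPolynomial.psum, map_sum, map_pow, map_sub, map_mul, map_natCast, map_ofNat,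
    map_one, map_neg, MvPolynomial.aeval_X, h2, Set.mem_Ioo, mul_assoc] using h

/-- Residue formula R₁(6): for every index `i`,
`∑_{{k≠i}} 1/z_ik⁶ = (1/60480)·(945C_i3⁶ − 3780C_i3⁴C_i4 + 3780C_i3²C_i4² − 560C_i4³
  + 1890C_i3³C_i5 − 2520C_i3C_i4C_i5 + 315C_i5² − 756C_i3²C_i6 + 504C_i4C_i6
  + 252C_i3C_i7 − 72C_i8)`. -/
theorem stmt_7 (n : ℕ) (hn : 1 ≤ n) (p : Polynomial ℂ)
    (hp : p.Monic) (hdeg : p.natDegree = n + 1)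
    (z : Fin n → ℂ) (hz : Function.Injective z)
    (hcrit : ∀ i, (derivative p).eval (z i) = 0)
    (hnd : ∀ i, (derivative^[2] p).eval (z i) ≠ 0)
    (C : Fin n → ℕ → ℂ)
    (hC : ∀ i k, C i k = ((derivative^[k] p).eval (z i)) / ((derivative^[2] p).eval (z i)))
    (i : Fin n) :
    ∑ k ∈ univ.filter (fun k => k ≠ i), 1 / (z i - z k) ^ 6
      = (1 / 60480) *
          (945 * (C i 3) ^ 6 - 3780 * (C i 3) ^ 4 * C i 4
            + 3780 * (C i 3) ^ 2 * (C i 4) ^ 2 - 560 * (C i 4) ^ 3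
            + 1890 * (C i 3) ^ 3 * C i 5 - 2520 * C i 3 * C i 4 * C i 5
            + 315 * (C i 5) ^ 2 - 756 * (C i 3) ^ 2 * C i 6
            + 504 * C i 4 * C i 6 + 252 * C i 3 * C i 7 - 72 * C i 8) := by
  classical
  set q := derivative p with hqdef
  -- factorization of q
  have hfact : q = Polynomial.C q.leadingCoeff * ∏ k, (X - Polynomial.C (z k)) := by
    have hpdeg0 : 0 < p.natDegree := by omega
    have hdq : q.degree = (n : ℕ) := by
      rw [hqdef, degree_derivative_eq p hpdeg0, hdeg]
      norm_num
    have hqnd : q.natDegree = n := natDegree_eq_of_degree_eq_some hdq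
    have hq0 : q ≠ 0 := by
      intro h
      rw [h, degree_zero] at hdq
      exact absurd hdq (by simp)
    have hcard : Multiset.card q.roots = q.natDegree :=
      (splits_iff_card_roots).1 (IsAlgClosed.splits q)
    have hnodup : (Finset.univ.val.map z).Nodup :=
      Multiset.Nodup.map hz Finset.univ.nodup
    have hle : Finset.univ.val.map z ≤ q.roots := by
      rw [Multiset.le_iff_subset hnodup]
      intro a ha
      obtain ⟨k, _, rfl⟩ := Multiset.mem_map.1 ha
      exact (mem_roots hq0).2 (hcrit k)
    have hroots : q.roots = Finset.univ.val.map z := by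
      have hc2 : Multiset.card (Finset.univ.val.map z) = n := by simp
      refine (Multiset.eq_of_le_of_card_le hle ?_).symm
      rw [hcard, hqnd, hc2]
    have hprod := C_leadingCoeff_mul_prod_multiset_X_sub_C (p := q) (by rw [hcard])
    rw [hroots, Multiset.map_map] at hprod
    calc q = Polynomial.C q.leadingCoeff
          * (Multiset.map ((fun a => X - Polynomial.C a) ∘ z) Finset.univ.val).prod := hprod.symm
      _ = Polynomial.C q.leadingCoeff * ∏ k, (X - Polynomial.C (z k)) := by
          rw [Finset.prod_eq_multiset_prod]
          rfl
  have hd0 : ∀ k, k ≠ i → z i - z k ≠ 0 := by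
    intro k hki
    exact sub_ne_zero_of_ne fun h => hki (hz h.symm)
  set w : Fin n → ℂ := fun k => if k = i then 0 else (z i - z k)⁻¹ with hw
  set D : ℂ := q.leadingCoeff * ∏ k ∈ univ.erase i, (z i - z k) with hDdef
  -- Taylor expansion
  obtain ⟨c, hcq, hfact⟩ : ∃ c, q.leadingCoeff = c ∧ q = Polynomial.C c * ∏ k, (X - Polynomial.C (z k)) :=
    ⟨q.leadingCoeff, rfl, hfact⟩
  have htay : taylor (z i) q = Polynomial.C D *
      (X * ∏ k, (Polynomial.C (w k) * X + 1)) := by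
    have h1 : taylor (z i) q
        = Polynomial.C c * ∏ k, (X + Polynomial.C (z i - z k)) := by
      rw [hfact]
      rw [show (taylor (z i)) (Polynomial.C c * ∏ k, (X - Polynomial.C (z k)))
          = taylorAlgHom (z i) (Polynomial.C c * ∏ k, (X - Polynomial.C (z k)))
          from rfl]
      rw [map_mul, map_prod]
      simp only [taylorAlgHom_apply, taylor_C, map_sub, taylor_X]
      congr 1
      apply Finset.prod_congr rfl
      intro k _
      ring
    rw [h1]
    rw [← Finset.mul_prod_erase univ _ (Finset.mem_univ i)]
    have h2 : ∀ k ∈ univ.erase i, X + Polynomial.C (z i - z k)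
        = Polynomial.C (z i - z k) * (Polynomial.C (w k) * X + 1) := by
      intro k hk
      have hki : k ≠ i := (Finset.mem_erase.1 hk).1
      have hne := hd0 k hki
      rw [hw]
      simp only [if_neg hki]
      rw [mul_add, mul_one, ← mul_assoc, ← Polynomial.C_mul, mul_inv_cancel₀ hne]
      simp
    rw [Finset.prod_congr rfl h2, Finset.prod_mul_distrib]
    have h3 : ∏ k ∈ univ.erase i, (Polynomial.C (w k) * X + 1)
        = ∏ k, (Polynomial.C (w k) * X + 1) := by
      rw [← Finset.mul_prod_erase univ _ (Finset.mem_univ i)]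
      simp [hw]
    rw [h3, sub_self, ← map_prod (Polynomial.C : ℂ →+* ℂ[X]), hDdef, hcq]
    rw [Polynomial.C_mul, Polynomial.C_0, add_zero]
    ring
  set E : ℕ → ℂ := fun m => ∑ t ∈ (univ : Finset (Fin n)).powersetCard m, ∏ j ∈ t, w j
    with hEdef
  set P : ℕ → ℂ := fun j => ∑ k, w k ^ j with hPdef
  -- key coefficient identity
  have key : ∀ m : ℕ, ((derivative^[m + 2]) p).eval (z i)
      = ((m + 1).factorial : ℂ) * (D * E m) := by
    intro m
    have hc := congrArg (fun f : ℂ[X] => f.coeff (m + 1)) htay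
    simp only [taylor_coeff] at hc
    rw [coeff_C_mul, coeff_X_mul, coeff_prod_one_add] at hc
    have hfac := congrFun (Polynomial.factorial_smul_hasseDeriv (R := ℂ) (m + 1)) q
    have heval : (derivative^[m + 1] q).eval (z i)
        = ((m + 1).factorial : ℂ) * (hasseDeriv (m + 1) q).eval (z i) := by
      rw [← hfac]
      simp only [Pi.smul_apply, LinearMap.smul_apply]
      rw [nsmul_eq_mul, eval_mul, eval_natCast]
    have hit : (derivative^[m + 2]) p = derivative^[m + 1] q := by
      rw [hqdef, ← Function.iterate_succ_apply]
    rw [hit, heval, hc, hEdef]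
  have hE0 : E 0 = 1 := by simp [hEdef]
  have hD : (derivative^[2] p).eval (z i) = D := by
    have h := key 0
    rw [hE0] at h
    simpa using h
  have hDne : D ≠ 0 := hD ▸ hnd i
  have hCeq : ∀ m : ℕ, C i (m + 2) = ((m + 1).factorial : ℂ) * E m := by
    intro m
    rw [hC i (m + 2), key m, hD]
    field_simp
  have hc3 : C i 3 = 2 * E 1 := by have h := hCeq 1; norm_num [Nat.factorial] at h; exact h
  have hc4 : C i 4 = 6 * E 2 := by have h := hCeq 2; norm_num [Nat.factorial] at h; exact h
  have hc5 : C i 5 = 24 * E 3 := by have h := hCeq 3; norm_num [Nat.factorial] at h; exact h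
  have hc6 : C i 6 = 120 * E 4 := by have h := hCeq 4; norm_num [Nat.factorial] at h; exact h
  have hc7 : C i 7 = 720 * E 5 := by have h := hCeq 5; norm_num [Nat.factorial] at h; exact h
  have hc8 : C i 8 = 5040 * E 6 := by have h := hCeq 6; norm_num [Nat.factorial] at h; exact h
  -- Newton's identities, scalar closed forms
  have hNk : ∀ k, 0 < k → P k = (-1) ^ (k + 1) * k * E k
      - ∑ a ∈ (antidiagonal k).filter (fun a => 0 < a.1 ∧ a.1 < k),
          (-1) ^ a.1 * E a.1 * P a.2 := fun k hk => newton_scalar w k hk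
  have e1 : P 1 = E 1 := by
    have h := hNk 1 (by norm_num)
    rw [Finset.sum_filter] at h
    simp only [Finset.Nat.sum_antidiagonal_succ, Finset.Nat.antidiagonal_zero,
      Finset.sum_singleton] at h
    norm_num at h
    rw [h]
  have e2 : P 2 = E 1 ^ 2 - 2 * E 2 := by
    have h := hNk 2 (by norm_num)
    rw [Finset.sum_filter] at h
    simp only [Finset.Nat.sum_antidiagonal_succ, Finset.Nat.antidiagonal_zero,
      Finset.sum_singleton] at h
    norm_num at h
    rw [h, e1]; ring
  have e3 : P 3 = E 1 ^ 3 - 3 * E 1 * E 2 + 3 * E 3 := by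
    have h := hNk 3 (by norm_num)
    rw [Finset.sum_filter] at h
    simp only [Finset.Nat.sum_antidiagonal_succ, Finset.Nat.antidiagonal_zero,
      Finset.sum_singleton] at h
    norm_num at h
    rw [h, e1, e2]; ring
  have e4 : P 4 = E 1 ^ 4 - 4 * E 1 ^ 2 * E 2 + 2 * E 2 ^ 2 + 4 * E 1 * E 3 - 4 * E 4 := by
    have h := hNk 4 (by norm_num)
    rw [Finset.sum_filter] at h
    simp only [Finset.Nat.sum_antidiagonal_succ, Finset.Nat.antidiagonal_zero,
      Finset.sum_singleton] at h
    norm_num at h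
    rw [h, e1, e2, e3]; ring
  have e5 : P 5 = E 1 ^ 5 - 5 * E 1 ^ 3 * E 2 + 5 * E 1 * E 2 ^ 2 + 5 * E 1 ^ 2 * E 3
      - 5 * E 2 * E 3 - 5 * E 1 * E 4 + 5 * E 5 := by
    have h := hNk 5 (by norm_num)
    rw [Finset.sum_filter] at h
    simp only [Finset.Nat.sum_antidiagonal_succ, Finset.Nat.antidiagonal_zero,
      Finset.sum_singleton] at h
    norm_num at h
    rw [h, e1, e2, e3, e4]; ring
  have e6 : P 6 = E 1 ^ 6 - 6 * E 1 ^ 4 * E 2 + 9 * E 1 ^ 2 * E 2 ^ 2 - 2 * E 2 ^ 3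
      + 6 * E 1 ^ 3 * E 3 - 12 * E 1 * E 2 * E 3 + 3 * E 3 ^ 2
      - 6 * E 1 ^ 2 * E 4 + 6 * E 2 * E 4 + 6 * E 1 * E 5 - 6 * E 6 := by
    have h := hNk 6 (by norm_num)
    rw [Finset.sum_filter] at h
    simp only [Finset.Nat.sum_antidiagonal_succ, Finset.Nat.antidiagonal_zero,
      Finset.sum_singleton] at h
    norm_num at h
    rw [h, e1, e2, e3, e4, e5]; ring
  -- the LHS sum equals P 6
  have hLHS : ∑ k ∈ univ.filter (fun k => k ≠ i), 1 / (z i - z k) ^ 6 = P 6 := by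
    rw [Finset.filter_ne']
    rw [show P 6 = ∑ k, w k ^ 6 from rfl]
    rw [← Finset.sum_erase (univ : Finset (Fin n)) (f := fun k => w k ^ 6)
      (by simp [hw] : w i ^ 6 = 0)]
    apply Finset.sum_congr rfl
    intro k hk
    have hki : k ≠ i := (Finset.mem_erase.1 hk).1
    rw [hw]
    simp only [if_neg hki]
    rw [one_div, inv_pow]
  rw [hLHS, e6, hc3, hc4, hc5, hc6, hc7, hc8]
  ring
end

section
/- For every index i ∈ {1,…,n} the following identity holds: ∑_{k≠i} 1/(λ''(z_k)·z_{ik}²) = −(1/(12·λ''(z_i)))·(3C_{i3}² − 2C_{i4}). -/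
open Polynomial Finset

private lemma polyDerivProdAux {ι : Type*} [DecidableEq ι] (s : Finset ι) (f : ι → Polynomial ℂ) :
    derivative (∏ j ∈ s, f j) = ∑ b ∈ s, (∏ j ∈ s.erase b, f j) * derivative (f b) := by
  refine Finset.induction_on s (by simp) (fun a t ha ih => ?_)
  rw [Finset.prod_insert ha, derivative_mul, ih, Finset.sum_insert ha, Finset.erase_insert ha,
    Finset.mul_sum, mul_comm]
  congr 1
  refine Finset.sum_congr rfl (fun b hb => ?_)
  have hab : b ≠ a := fun h => ha (h ▸ hb)
  rw [Finset.erase_insert_of_ne hab.symm, Finset.prod_insert (fun h => ha (Finset.mem_of_mem_erase h)), mul_assoc]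

private lemma eval_deriv_prod {n : ℕ} (z : Fin n → ℂ) (s : Finset (Fin n)) (x : ℂ) :
    eval x (derivative (∏ j ∈ s, (X - Polynomial.C (z j)))) = ∑ m ∈ s, ∏ j ∈ s.erase m, (x - z j) := by
  rw [polyDerivProdAux]
  simp [eval_finset_sum, eval_prod]

private lemma eval_deriv_prod_root {n : ℕ} (z : Fin n → ℂ) (s : Finset (Fin n)) {k : Fin n} (hk : k ∈ s) :
    eval (z k) (derivative (∏ j ∈ s, (X - Polynomial.C (z j)))) = ∏ j ∈ s.erase k, (z k - z j) := by
  rw [eval_deriv_prod]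
  refine Finset.sum_eq_single k (fun m hm hmk => Finset.prod_eq_zero
    (Finset.mem_erase.mpr ⟨fun h => hmk h.symm, hk⟩) (sub_self _)) (fun h => absurd hk h)

/-- Residue formula R₂(2): for every index `i`,
`∑_{{k≠i}} 1/(λ''(z_k)·z_ik²) = −(1/(12·λ''(z_i)))·(3C_i3² − 2C_i4)`. -/
theorem stmt_8 (n : ℕ) (hn : 1 ≤ n) (p : Polynomial ℂ)
    (hp : p.Monic) (hdeg : p.natDegree = n + 1)
    (z : Fin n → ℂ) (hz : Function.Injective z)
    (hcrit : ∀ i, (derivative p).eval (z i) = 0)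
    (hnd : ∀ i, (derivative^[2] p).eval (z i) ≠ 0)
    (C : Fin n → ℕ → ℂ)
    (hC : ∀ i k, C i k = ((derivative^[k] p).eval (z i)) / ((derivative^[2] p).eval (z i)))
    (i : Fin n) :
    ∑ k ∈ univ.filter (fun k => k ≠ i), 1 / ((derivative^[2] p).eval (z k) * (z i - z k) ^ 2)
      = -(1 / (12 * (derivative^[2] p).eval (z i))) * (3 * (C i 3) ^ 2 - 2 * C i 4) := by
  classical
  have hfact : derivative p = Polynomial.C ((n : ℂ) + 1) * ∏ j ∈ univ, (X - Polynomial.C (z j)) := by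
      set c : ℂ := (n : ℂ) + 1 with hc
      set q : Polynomial ℂ := ∏ j ∈ univ, (X - Polynomial.C (z j)) with hq
      have hqm : q.Monic := monic_prod_of_monic _ _ (fun j _ => monic_X_sub_C (z j))
      have hqd : q.natDegree = n := by
        rw [hq, natDegree_prod _ _ (fun j _ => X_sub_C_ne_zero (z j))]
        simp
      have hcoefp : (derivative p).coeff n = c := by
        rw [coeff_derivative]
        have : p.coeff (n + 1) = 1 := by
          have := hp.coeff_natDegree
          rwa [hdeg] at this
        rw [this, one_mul, hc]
      have hcoefq : (Polynomial.C c * q).coeff n = c := by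
        rw [coeff_C_mul, ← hqd, hqm.coeff_natDegree, mul_one]
      have hdp : (derivative p).natDegree ≤ n := by
        have := natDegree_derivative_le p
        omega
      have hdq : (Polynomial.C c * q).natDegree ≤ n := by
        exact (natDegree_mul_le).trans (by simp [hqd])
      have hg : derivative p - Polynomial.C c * q = 0 := by
        set g : Polynomial ℂ := derivative p - Polynomial.C c * q with hgdef
        rcases eq_or_ne g 0 with h | h
        · exact h
        refine Polynomial.eq_zero_of_natDegree_lt_card_of_eval_eq_zero g hz (fun k => ?_) ?_
        · simp only [hgdef, eval_sub, eval_mul, hcrit k, eval_C]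
          have : q.eval (z k) = 0 := by
            rw [hq, eval_prod]
            exact Finset.prod_eq_zero (mem_univ k) (by simp)
          rw [this]; ring
        · have h1 : g.natDegree ≤ n := (natDegree_sub_le _ _).trans (max_le hdp hdq)
          have hcoefg : g.coeff n = 0 := by
            rw [hgdef, coeff_sub, hcoefp, hcoefq, sub_self]
          have h2 : g.natDegree ≠ n := fun he => h (leadingCoeff_eq_zero.mp (by
            rw [leadingCoeff, he]; exact hcoefg))
          simp only [Fintype.card_fin]
          omega
      exact sub_eq_zero.mp hg
  set u : Finset (Fin n) := univ.erase i with hu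
  set w : Fin n → ℂ := fun k => ∏ j ∈ univ.erase k, (z k - z j) with hw
  set P : ℂ := ∏ j ∈ u, (z i - z j) with hP
  set qi : Polynomial ℂ := ∏ j ∈ u, (X - Polynomial.C (z j)) with hqi
  set B : Polynomial ℂ := ∑ k ∈ u, Polynomial.C (w k)⁻¹ * ∏ j ∈ u.erase k, (X - Polynomial.C (z j)) with hB
  have hPw : P = w i := by rw [hP, hw]
  have hbasis : ∀ k : Fin n, Lagrange.basis univ z k
      = Polynomial.C (w k)⁻¹ * ∏ j ∈ univ.erase k, (X - Polynomial.C (z j)) := by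
    intro k
    rw [Lagrange.basis]
    unfold Lagrange.basisDivisor
    rw [Finset.prod_mul_distrib, ← map_prod, ← Finset.prod_inv_distrib]
  have hsum : ∑ k ∈ univ, Lagrange.basis univ z k = 1 :=
    Lagrange.sum_basis hz.injOn ⟨i, mem_univ i⟩
  have hkey : 1 - Polynomial.C P⁻¹ * qi = (X - Polynomial.C (z i)) * B := by
    have h1 : (X - Polynomial.C (z i)) * (1 : Polynomial ℂ)
        = (X - Polynomial.C (z i)) * ((X - Polynomial.C (z i)) * B)
          + (X - Polynomial.C (z i)) * (Polynomial.C P⁻¹ * qi) := by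
      conv_lhs => rw [← hsum]
      rw [← Finset.sum_erase_add _ _ (mem_univ i), mul_add]
      congr 1
      · rw [hB, Finset.mul_sum, Finset.mul_sum, Finset.mul_sum, ← hu]
        apply Finset.sum_congr rfl
        intro k hk
        have hki : i ∈ univ.erase k := by
          rw [Finset.mem_erase]
          rw [hu, Finset.mem_erase] at hk
          exact ⟨fun h => hk.1 h.symm, mem_univ i⟩
        have herase : (univ.erase k).erase i = u.erase k := by
          rw [hu, Finset.erase_right_comm]
        rw [hbasis k, ← Finset.mul_prod_erase _ _ hki, herase]
        ring
      · rw [hbasis i, ← hPw]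
    have h2 : (X - Polynomial.C (z i)) * (1 - Polynomial.C P⁻¹ * qi)
        = (X - Polynomial.C (z i)) * ((X - Polynomial.C (z i)) * B) := by
      rw [mul_sub, h1]; ring
    exact mul_left_cancel₀ (X_sub_C_ne_zero (z i)) h2
  -- derivatives of hkey
  have hd1 : -(Polynomial.C P⁻¹ * derivative qi)
      = B + (X - Polynomial.C (z i)) * derivative B := by
    have h := congrArg derivative hkey
    simp only [derivative_sub, derivative_one, derivative_mul, derivative_C, derivative_X] at h
    linear_combination h
  have hd2 : -(Polynomial.C P⁻¹ * derivative (derivative qi))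
      = 2 * derivative B + (X - Polynomial.C (z i)) * derivative (derivative B) := by
    have h := congrArg derivative hd1
    simp only [derivative_neg, derivative_add, derivative_mul, derivative_C, derivative_X,
      derivative_sub, derivative_one] at h
    linear_combination h
  have hBe : eval (z i) B = -(P⁻¹ * eval (z i) (derivative qi)) := by
    have h := congrArg (eval (z i)) hd1
    simp only [eval_neg, eval_mul, eval_add, eval_sub, eval_X, eval_C, sub_self, zero_mul] at h
    linear_combination -h
  have hBe' : 2 * eval (z i) (derivative B)
      = -(P⁻¹ * eval (z i) (derivative (derivative qi))) := by
    have h := congrArg (eval (z i)) hd2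
    simp only [eval_neg, eval_mul, eval_add, eval_sub, eval_X, eval_C, sub_self, zero_mul,
      eval_ofNat] at h
    linear_combination -h
  -- nonvanishing
  have hdne : ∀ j ∈ u, z i - z j ≠ 0 := by
    intro j hj
    rw [hu, Finset.mem_erase] at hj
    exact sub_ne_zero.mpr (fun h => hj.1 (hz h.symm))
  have hPne : P ≠ 0 := by
    rw [hP]
    exact Finset.prod_ne_zero_iff.mpr hdne
  have hwne : ∀ k : Fin n, w k ≠ 0 := by
    intro k
    refine Finset.prod_ne_zero_iff.mpr (fun j hj => ?_)
    rw [Finset.mem_erase] at hj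
    exact sub_ne_zero.mpr (fun h => hj.1 (hz h).symm)
  -- product formulas
  have hprod : ∀ k ∈ u, ∏ j ∈ u.erase k, (z i - z j) = P * (z i - z k)⁻¹ := by
    intro k hk
    have h : (z i - z k) * ∏ j ∈ u.erase k, (z i - z j) = P := by
      rw [hP]; exact Finset.mul_prod_erase u (fun j => z i - z j) hk
    rw [← h, mul_comm (z i - z k), mul_assoc, mul_inv_cancel₀ (hdne k hk), mul_one]
  have hprod2 : ∀ k ∈ u, ∀ m ∈ u.erase k,
      ∏ j ∈ (u.erase k).erase m, (z i - z j) = P * (z i - z k)⁻¹ * (z i - z m)⁻¹ := by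
    intro k hk m hm
    have h : (z i - z m) * ∏ j ∈ (u.erase k).erase m, (z i - z j)
        = ∏ j ∈ u.erase k, (z i - z j) := Finset.mul_prod_erase (u.erase k) (fun j => z i - z j) hm
    have hmne := hdne m (Finset.mem_of_mem_erase hm)
    rw [← hprod k hk, ← h, mul_comm (z i - z m), mul_assoc, mul_inv_cancel₀ hmne, mul_one]
  set Sg : ℂ := ∑ m ∈ u, (z i - z m)⁻¹ with hSg
  set S' : ℂ := ∑ k ∈ u, (w k)⁻¹ * ((z i - z k)⁻¹)^2 with hS
  have hE1 : eval (z i) (derivative qi) = P * Sg := by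
    rw [hqi, eval_deriv_prod, hSg, Finset.mul_sum]
    refine Finset.sum_congr rfl (fun m hm => ?_)
    exact hprod m hm
  have hBev : eval (z i) B = ∑ k ∈ u, (w k)⁻¹ * (P * (z i - z k)⁻¹) := by
    rw [hB, eval_finset_sum]
    refine Finset.sum_congr rfl (fun k hk => ?_)
    rw [eval_mul, eval_C, eval_prod]
    simp only [eval_sub, eval_X, eval_C]
    rw [hprod k hk]
  have hB'ev : eval (z i) (derivative B)
      = ∑ k ∈ u, (w k)⁻¹ * (P * (z i - z k)⁻¹ * (Sg - (z i - z k)⁻¹)) := by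
    rw [hB, derivative_sum]
    simp only [derivative_C_mul]
    rw [eval_finset_sum]
    refine Finset.sum_congr rfl (fun k hk => ?_)
    rw [eval_mul, eval_C, eval_deriv_prod]
    congr 1
    have : ∑ m ∈ u.erase k, ∏ j ∈ (u.erase k).erase m, (z i - z j)
        = ∑ m ∈ u.erase k, P * (z i - z k)⁻¹ * (z i - z m)⁻¹ :=
      Finset.sum_congr rfl (fun m hm => hprod2 k hk m hm)
    rw [this, ← Finset.mul_sum, Finset.sum_erase_eq_sub hk, ← hSg]
  have halg : eval (z i) (derivative B) = Sg * eval (z i) B - P * S' := by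
    rw [hB'ev, hBev, hS, Finset.mul_sum, Finset.mul_sum, ← Finset.sum_sub_distrib]
    exact Finset.sum_congr rfl (fun k hk => by ring)
  have hfin : 2 * P * P * S' = eval (z i) (derivative (derivative qi)) - 2 * P * Sg^2 := by
    have e1 : eval (z i) B = -Sg := by
      rw [hBe, hE1]; field_simp
    have h2 := hBe'
    rw [halg, e1] at h2
    field_simp at h2
    linear_combination -h2
  -- now relate to p
  set c : ℂ := (n : ℂ) + 1 with hcdef
  have hcne : c ≠ 0 := by
    rw [hcdef]
    have h : ((n + 1 : ℕ) : ℂ) ≠ 0 := Nat.cast_ne_zero.mpr (Nat.succ_ne_zero n)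
    push_cast at h
    exact h
  set q : Polynomial ℂ := ∏ j ∈ univ, (X - Polynomial.C (z j)) with hqdef
  have hqsplit : q = (X - Polynomial.C (z i)) * qi := by
    rw [hqdef, hqi, hu]
    exact (Finset.mul_prod_erase univ (fun j => X - Polynomial.C (z j)) (mem_univ i)).symm
  have hqie : eval (z i) qi = P := by
    rw [hqi, eval_prod, hP]
    simp
  have hq1 : derivative q = qi + (X - Polynomial.C (z i)) * derivative qi := by
    rw [hqsplit, derivative_mul, derivative_sub, derivative_X, derivative_C, sub_zero, one_mul]
  have hq2 : derivative (derivative q)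
      = 2 * derivative qi + (X - Polynomial.C (z i)) * derivative (derivative qi) := by
    rw [hq1]
    simp only [derivative_add, derivative_mul, derivative_sub, derivative_X, derivative_C]
    ring
  have hq3 : derivative (derivative (derivative q))
      = 3 * derivative (derivative qi)
        + (X - Polynomial.C (z i)) * derivative (derivative (derivative qi)) := by
    rw [hq2]
    simp only [derivative_add, derivative_mul, derivative_sub, derivative_X, derivative_C,
      derivative_ofNat]
    ring
  set Q2 : ℂ := eval (z i) (derivative (derivative qi)) with hQ2
  have hq1e : eval (z i) (derivative q) = P := by
    rw [hq1]; simp [hqie]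
  have hq2e : eval (z i) (derivative (derivative q)) = 2 * (P * Sg) := by
    rw [hq2]; simp [hE1]
  have hq3e : eval (z i) (derivative (derivative (derivative q))) = 3 * Q2 := by
    rw [hq3]; simp [hQ2]
  have hq1k : ∀ k : Fin n, eval (z k) (derivative q) = w k := by
    intro k
    rw [hqdef]
    rw [eval_deriv_prod_root z univ (mem_univ k), hw]
  -- iterated derivatives of p
  have hit2 : derivative^[2] p = Polynomial.C c * derivative q := by
    show derivative (derivative p) = _
    rw [hfact, derivative_C_mul]
  have hit3 : derivative^[3] p = Polynomial.C c * derivative (derivative q) := by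
    show derivative (derivative (derivative p)) = _
    rw [hfact, derivative_C_mul, derivative_C_mul]
  have hit4 : derivative^[4] p = Polynomial.C c * derivative (derivative (derivative q)) := by
    show derivative (derivative (derivative (derivative p))) = _
    rw [hfact, derivative_C_mul, derivative_C_mul, derivative_C_mul]
  have hev2 : ∀ k : Fin n, (derivative^[2] p).eval (z k) = c * w k := by
    intro k
    rw [hit2, eval_mul, eval_C, hq1k k]
  have hev2i : (derivative^[2] p).eval (z i) = c * P := by
    rw [hit2, eval_mul, eval_C, hq1e]
  have hev3i : (derivative^[3] p).eval (z i) = c * (2 * (P * Sg)) := by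
    rw [hit3, eval_mul, eval_C, hq2e]
  have hev4i : (derivative^[4] p).eval (z i) = c * (3 * Q2) := by
    rw [hit4, eval_mul, eval_C, hq3e]
  -- final assembly
  have hLHS : ∑ k ∈ univ.filter (fun k => k ≠ i),
      1 / ((derivative^[2] p).eval (z k) * (z i - z k) ^ 2) = c⁻¹ * S' := by
    rw [Finset.filter_ne', ← hu, hS, Finset.mul_sum]
    refine Finset.sum_congr rfl (fun k hk => ?_)
    rw [hev2 k]
    have h1 := hwne k
    have h2 := hdne k hk
    field_simp
  rw [hLHS, hC i 3, hC i 4, hev2i, hev3i, hev4i]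
  have hfin' : S' = (Q2 - 2 * P * Sg ^ 2) / (2 * P * P) := by
    rw [← hfin]
    field_simp
  rw [hfin']
  field_simp
  ring
end

section
/- For every index i ∈ {1,…,n} the following identity holds: ∑_{k≠i} 1/(λ''(z_k)·z_{ik}⁶) = −(1/(60480·λ''(z_i)))·(945C_{i3}⁶ − 3150C_{i3}⁴C_{i4} + 2520C_{i3}²C_{i4}² − 280C_{i4}³ + 1260C_{i3}³C_{i5} − 1260C_{i3}C_{i4}C_{i5} + 105C_{i5}² − 378C_{i3}²C_{i6} + 168C_{i4}C_{i6} + 84C_{i3}C_{i7} − 12C_{i8}). -/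
open Polynomial Finset

lemma lagrange_sum_eq_zero {n : ℕ} (z : Fin n → ℂ) (hz : Function.Injective z) (f : ℂ[X])
    (hf : f.degree < ((n - 1 : ℕ) : WithBot ℕ)) :
    ∑ k, f.eval (z k) / ∏ j ∈ univ.erase k, (z k - z j) = 0 := by
  rcases Nat.eq_zero_or_pos n with h0 | hpos
  · subst h0; simp
  · have hinj : Set.InjOn z ↑(univ : Finset (Fin n)) := hz.injOn
    have hcard : #(univ : Finset (Fin n)) = n := by simp
    have hdeg : f.degree < #(univ : Finset (Fin n)) := by
      refine lt_of_lt_of_le hf ?_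
      rw [hcard]
      exact_mod_cast Nat.cast_le.mpr (Nat.sub_le n 1)
    have hinterp := Lagrange.eq_interpolate hinj hdeg
    have h := congrArg (fun g : ℂ[X] => g.coeff (n - 1)) hinterp
    simp only [Lagrange.interpolate_apply, finset_sum_coeff, coeff_C_mul] at h
    have hcf : f.coeff (n - 1) = 0 := coeff_eq_zero_of_degree_lt hf
    have hb : ∀ k : Fin n, (Lagrange.basis univ z k).coeff (n - 1)
        = (∏ j ∈ univ.erase k, (z k - z j))⁻¹ := by
      intro k
      have hnd : (Lagrange.basis univ z k).natDegree = n - 1 := by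
        rw [Lagrange.natDegree_basis hinj (mem_univ k), hcard]
      rw [← hnd, ← leadingCoeff, Lagrange.basis, leadingCoeff_prod, ← prod_inv_distrib]
      refine prod_congr rfl fun j _ => ?_
      simp [Lagrange.basisDivisor, leadingCoeff_mul, leadingCoeff_X_sub_C]
    rw [hcf] at h
    simp only [hb] at h
    simpa [div_eq_mul_inv] using h.symm

set_option maxHeartbeats 1000000 in
lemma key_identity (Q0 Q1 Q2 Q3 Q4 Q5 Q6 V0 V1 V2 V3 V4 V5 : ℂ) (hQ0 : Q0 ≠ 0)
    (r0 : V0 * Q0 = 1)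
    (r1 : V0 * Q1 + V1 * Q0 = 0)
    (r2 : V0 * Q2 + V1 * Q1 + V2 * Q0 = 0)
    (r3 : V0 * Q3 + V1 * Q2 + V2 * Q1 + V3 * Q0 = 0)
    (r4 : V0 * Q4 + V1 * Q3 + V2 * Q2 + V3 * Q1 + V4 * Q0 = 0)
    (r5 : V0 * Q5 + V1 * Q4 + V2 * Q3 + V3 * Q2 + V4 * Q1 + V5 * Q0 = 0) :
    -(V0 * Q6 + V1 * Q5 + V2 * Q4 + V3 * Q3 + V4 * Q2 + V5 * Q1)
      = 1 / 60480 *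
        (945 * (2 * Q1 / Q0) ^ 6 - 3150 * (2 * Q1 / Q0) ^ 4 * (6 * Q2 / Q0)
          + 2520 * (2 * Q1 / Q0) ^ 2 * (6 * Q2 / Q0) ^ 2 - 280 * (6 * Q2 / Q0) ^ 3
          + 1260 * (2 * Q1 / Q0) ^ 3 * (24 * Q3 / Q0)
          - 1260 * (2 * Q1 / Q0) * (6 * Q2 / Q0) * (24 * Q3 / Q0)
          + 105 * (24 * Q3 / Q0) ^ 2 - 378 * (2 * Q1 / Q0) ^ 2 * (120 * Q4 / Q0)
          + 168 * (6 * Q2 / Q0) * (120 * Q4 / Q0) + 84 * (2 * Q1 / Q0) * (720 * Q5 / Q0)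
          - 12 * (5040 * Q6 / Q0)) := by
  have hdiv : ∀ a : ℂ, a / Q0 = a * V0 := by
    intro a
    rw [div_eq_iff hQ0, mul_assoc, r0, mul_one]
  have h1 : V1 = -(V0 * (V0 * Q1)) := by linear_combination V0 * r1 - V1 * r0
  have h2 : V2 = -(V0 * (V0 * Q2 + V1 * Q1)) := by linear_combination V0 * r2 - V2 * r0
  have h3 : V3 = -(V0 * (V0 * Q3 + V1 * Q2 + V2 * Q1)) := by
    linear_combination V0 * r3 - V3 * r0
  have h4 : V4 = -(V0 * (V0 * Q4 + V1 * Q3 + V2 * Q2 + V3 * Q1)) := by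
    linear_combination V0 * r4 - V4 * r0
  have h5 : V5 = -(V0 * (V0 * Q5 + V1 * Q4 + V2 * Q3 + V3 * Q2 + V4 * Q1)) := by
    linear_combination V0 * r5 - V5 * r0
  simp only [hdiv]
  rw [h5, h4, h3, h2, h1]
  ring

set_option maxHeartbeats 1000000 in
/-- Residue formula R₂(6): for every index `i`,
`∑_{{k≠i}} 1/(λ''(z_k)·z_ik⁶) = −(1/(60480·λ''(z_i)))·(945C_i3⁶ − 3150C_i3⁴C_i4
  + 2520C_i3²C_i4² − 280C_i4³ + 1260C_i3³C_i5 − 1260C_i3C_i4C_i5 + 105C_i5²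
  − 378C_i3²C_i6 + 168C_i4C_i6 + 84C_i3C_i7 − 12C_i8)`. -/
theorem stmt_9 (n : ℕ) (hn : 1 ≤ n) (p : Polynomial ℂ)
    (hp : p.Monic) (hdeg : p.natDegree = n + 1)
    (z : Fin n → ℂ) (hz : Function.Injective z)
    (hcrit : ∀ i, (derivative p).eval (z i) = 0)
    (hnd : ∀ i, (derivative^[2] p).eval (z i) ≠ 0)
    (C : Fin n → ℕ → ℂ)
    (hC : ∀ i k, C i k = ((derivative^[k] p).eval (z i)) / ((derivative^[2] p).eval (z i)))
    (i : Fin n) :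
    ∑ k ∈ univ.filter (fun k => k ≠ i), 1 / ((derivative^[2] p).eval (z k) * (z i - z k) ^ 6)
      = -(1 / (60480 * (derivative^[2] p).eval (z i))) *
          (945 * (C i 3) ^ 6 - 3150 * (C i 3) ^ 4 * C i 4
            + 2520 * (C i 3) ^ 2 * (C i 4) ^ 2 - 280 * (C i 4) ^ 3
            + 1260 * (C i 3) ^ 3 * C i 5 - 1260 * C i 3 * C i 4 * C i 5
            + 105 * (C i 5) ^ 2 - 378 * (C i 3) ^ 2 * C i 6
            + 168 * C i 4 * C i 6 + 84 * C i 3 * C i 7 - 12 * C i 8) := by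
  classical
  have hn1 : ((n : ℂ) + 1) ≠ 0 := Nat.cast_add_one_ne_zero n
  -- basic polynomials
  set A : ℂ[X] := X - Polynomial.C (z i) with hA
  set qi : ℂ[X] := ∏ k ∈ univ.erase i, (X - Polynomial.C (z k)) with hqi
  set q : ℂ[X] := ∏ k, (X - Polynomial.C (z k)) with hqdef
  have hq_univ : A * qi = q := by
    rw [hA, hqi, hqdef]
    exact Finset.mul_prod_erase univ (fun k => X - Polynomial.C (z k)) (mem_univ i)
  set w : Fin n → ℂ := fun k => ∏ j ∈ univ.erase k, (z k - z j) with hw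
  have hq_monic : q.Monic := monic_prod_of_monic _ _ fun k _ => monic_X_sub_C _
  have hq_deg : q.natDegree = n := by
    rw [hqdef, natDegree_prod_of_monic _ _ fun k _ => monic_X_sub_C _]
    simp [natDegree_X_sub_C]
  have hq_eval : ∀ k, q.eval (z k) = 0 := by
    intro k
    rw [hqdef, eval_prod]
    exact Finset.prod_eq_zero (mem_univ k) (by simp)
  -- derivative p = C (n+1) * q
  have hpc : p.coeff (n + 1) = 1 := by
    have h := hp.coeff_natDegree
    rwa [hdeg] at h
  have hlc : (derivative p).coeff n = (n : ℂ) + 1 := by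
    rw [coeff_derivative, hpc, one_mul]
  have hdp_ne : derivative p ≠ 0 := by
    intro h
    rw [h, coeff_zero] at hlc
    exact hn1 hlc.symm
  have hdp_deg : (derivative p).natDegree = n :=
    le_antisymm (by simpa [hdeg] using natDegree_derivative_le p)
      (le_natDegree_of_ne_zero (hlc ▸ hn1))
  have hp' : derivative p = Polynomial.C ((n : ℂ) + 1) * q := by
    have hqne : q ≠ 0 := hq_monic.ne_zero
    have hCqne : Polynomial.C ((n : ℂ) + 1) * q ≠ 0 :=
      mul_ne_zero (Polynomial.C_ne_zero.mpr hn1) hqne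
    have hdeq : (derivative p).degree = (Polynomial.C ((n : ℂ) + 1) * q).degree := by
      rw [degree_eq_natDegree hdp_ne, degree_eq_natDegree hCqne, hdp_deg,
        natDegree_C_mul hn1, hq_deg]
    have hlcoeff : (derivative p).leadingCoeff = (Polynomial.C ((n : ℂ) + 1) * q).leadingCoeff := by
      rw [leadingCoeff, hdp_deg, hlc, leadingCoeff_mul, leadingCoeff_C, hq_monic.leadingCoeff,
        mul_one]
    have hsub := degree_sub_lt hdeq hdp_ne hlcoeff
    set g : ℂ[X] := derivative p - Polynomial.C ((n : ℂ) + 1) * q with hg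
    have hgdeg : g.natDegree < n := by
      rcases eq_or_ne g 0 with h0 | h0
      · rw [h0, natDegree_zero]; omega
      · rw [natDegree_lt_iff_degree_lt h0]
        rw [degree_eq_natDegree hdp_ne, hdp_deg] at hsub
        exact hsub
    have hgz : g = 0 := by
      apply eq_zero_of_natDegree_lt_card_of_eval_eq_zero g hz
      · intro k
        simp [hg, hcrit k, hq_eval k]
      · simpa using hgdeg
    have := sub_eq_zero.mp hgz
    exact this
  -- evaluation of derivative q at the nodes
  have hderq : ∀ k, (derivative q).eval (z k) = w k := by
    intro k
    have hfac : (X - Polynomial.C (z k)) * ∏ j ∈ univ.erase k, (X - Polynomial.C (z j)) = q := by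
      rw [hqdef]
      exact Finset.mul_prod_erase univ (fun j => X - Polynomial.C (z j)) (mem_univ k)
    rw [← hfac, derivative_mul]
    simp [eval_prod, hw]
  have hd2 : derivative^[2] p = Polynomial.C ((n : ℂ) + 1) * derivative q := by
    show derivative (derivative p) = _
    rw [hp', derivative_C_mul]
  have hw2 : ∀ k, (derivative^[2] p).eval (z k) = ((n : ℂ) + 1) * w k := by
    intro k
    rw [hd2, eval_mul, eval_C, hderq]
  have hwne : ∀ k, w k ≠ 0 := by
    intro k h
    exact hnd k (by rw [hw2, h, mul_zero])
  -- Bezout construction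
  have hcop : IsCoprime (A ^ 6) qi := by
    apply IsCoprime.pow_left
    apply IsCoprime.prod_right
    intro j hj
    exact Polynomial.pairwise_coprime_X_sub_C hz ((mem_erase.mp hj).1.symm)
  obtain ⟨u, v, huv⟩ := hcop
  have hmon : (A ^ 6).Monic := by
    rw [hA]
    exact (monic_X_sub_C (z i)).pow 6
  have hmod : v %ₘ A ^ 6 + A ^ 6 * (v /ₘ A ^ 6) = v := modByMonic_add_div v (A ^ 6)
  obtain ⟨f, hkey⟩ : ∃ f : ℂ[X], f * A ^ 6 = 1 - (v %ₘ A ^ 6) * qi :=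
    ⟨u + (v /ₘ A ^ 6) * qi, by linear_combination huv + qi * hmod⟩
  have h6 : (A ^ 6).natDegree = 6 := by
    rw [natDegree_pow, hA, natDegree_X_sub_C, mul_one]
  have hv'deg : (v %ₘ A ^ 6).natDegree < 6 := by
    have h := natDegree_modByMonic_lt v hmon (by
      intro h1
      rw [h1, natDegree_one] at h6
      omega)
    omega
  have hqideg : qi.natDegree = n - 1 := by
    rw [hqi, natDegree_prod_of_monic _ _ fun j _ => monic_X_sub_C _]
    simp [natDegree_X_sub_C, Finset.card_erase_of_mem]
  have hfdeg : f.degree < ((n - 1 : ℕ) : WithBot ℕ) := by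
    rcases eq_or_ne f 0 with hf0 | hf0
    · rw [hf0, degree_zero]; exact WithBot.bot_lt_coe _
    · rw [← natDegree_lt_iff_degree_lt hf0]
      have hAne : A ^ 6 ≠ 0 := hmon.ne_zero
      have h1 : f.natDegree + 6 = (1 - (v %ₘ A ^ 6) * qi).natDegree := by
        rw [← hkey, natDegree_mul hf0 hAne, h6]
      have h2 : (1 - (v %ₘ A ^ 6) * qi).natDegree ≤ n + 4 := by
        refine le_trans (natDegree_sub_le _ _) (max_le (by simp) ?_)
        refine le_trans natDegree_mul_le ?_
        omega
      omega
  -- values of f at the nodes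
  have hqi_eval_i : qi.eval (z i) = w i := by
    rw [hqi, eval_prod]
    simp [hw]
  have hqi_eval_ne : ∀ k, k ≠ i → qi.eval (z k) = 0 := by
    intro k hk
    rw [hqi, eval_prod]
    exact Finset.prod_eq_zero (mem_erase.mpr ⟨hk, mem_univ k⟩) (by simp)
  have hfk : ∀ k, k ≠ i → f.eval (z k) = 1 / (z i - z k) ^ 6 := by
    intro k hk
    have h := congrArg (eval (z k)) hkey
    simp only [eval_mul, eval_pow, eval_sub, eval_one, eval_X, eval_C, hA,
      hqi_eval_ne k hk, mul_zero, sub_zero] at h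
    have hne : z i - z k ≠ 0 := sub_ne_zero.mpr fun h' => hk (hz h'.symm)
    rw [eq_div_iff (pow_ne_zero _ hne), show (z i - z k) ^ 6 = (z k - z i) ^ 6 by ring]
    exact h
  -- Lagrange sum
  have hLag : ∑ k, f.eval (z k) / w k = 0 := by
    simpa [hw] using lagrange_sum_eq_zero z hz f hfdeg
  have hsum : ∑ k ∈ univ.erase i, f.eval (z k) / w k = -(f.eval (z i) / w i) := by
    rw [← Finset.add_sum_erase univ _ (mem_univ i)] at hLag
    linear_combination hLag
  -- Taylor expansions
  have hT : taylor (z i) f * X ^ 6 = 1 - taylor (z i) (v %ₘ A ^ 6) * taylor (z i) qi := by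
    have h := congrArg (taylor (z i)) hkey
    simpa only [taylor_apply, mul_comp, pow_comp, sub_comp, one_comp, X_comp, C_comp, hA,
      add_sub_cancel_right] using h
  have hrel : ∀ m : ℕ,
      (if 6 ≤ m then (taylor (z i) f).coeff (m - 6) else 0)
        = (1 : ℂ[X]).coeff m
          - ∑ j ∈ Finset.range (m + 1),
              (taylor (z i) (v %ₘ A ^ 6)).coeff j * (taylor (z i) qi).coeff (m - j) := by
    intro m
    have h := congrArg (fun g : ℂ[X] => g.coeff m) hT
    rw [coeff_mul_X_pow'] at h
    rw [coeff_sub, coeff_mul, Finset.Nat.sum_antidiagonal_eq_sum_range_succ_mk] at h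
    exact h
  have hV6 : (taylor (z i) (v %ₘ A ^ 6)).coeff 6 = 0 :=
    coeff_eq_zero_of_natDegree_lt (by rw [natDegree_taylor]; exact hv'deg)
  have r0 := hrel 0
  have r1 := hrel 1
  have r2 := hrel 2
  have r3 := hrel 3
  have r4 := hrel 4
  have r5 := hrel 5
  have r6 := hrel 6
  norm_num [Finset.sum_range_succ, coeff_one] at r0 r1 r2 r3 r4 r5 r6
  -- abbreviations (as plain terms):  Q0 = eval (z i) qi, Q1 = eval (z i) (derivative qi),
  -- Qb = (taylor (z i) qi).coeff b (b ≥ 2);  V0 = eval (z i) (v %ₘ A ^ 6), etc.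
  have hQ0ne : eval (z i) qi ≠ 0 := by
    rw [hqi_eval_i]; exact hwne i
  have hbig := key_identity (eval (z i) qi) (eval (z i) (derivative qi))
      ((taylor (z i) qi).coeff 2) ((taylor (z i) qi).coeff 3) ((taylor (z i) qi).coeff 4)
      ((taylor (z i) qi).coeff 5) ((taylor (z i) qi).coeff 6)
      (eval (z i) (v %ₘ A ^ 6)) (eval (z i) (derivative (v %ₘ A ^ 6)))
      ((taylor (z i) (v %ₘ A ^ 6)).coeff 2) ((taylor (z i) (v %ₘ A ^ 6)).coeff 3)
      ((taylor (z i) (v %ₘ A ^ 6)).coeff 4) ((taylor (z i) (v %ₘ A ^ 6)).coeff 5)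
      hQ0ne (by linear_combination r0) (by linear_combination r1)
      (by linear_combination r2) (by linear_combination r3)
      (by linear_combination r4) (by linear_combination r5)
  have hF : eval (z i) f
      = 1 / 60480 *
        (945 * (2 * eval (z i) (derivative qi) / eval (z i) qi) ^ 6
          - 3150 * (2 * eval (z i) (derivative qi) / eval (z i) qi) ^ 4
              * (6 * (taylor (z i) qi).coeff 2 / eval (z i) qi)
          + 2520 * (2 * eval (z i) (derivative qi) / eval (z i) qi) ^ 2
              * (6 * (taylor (z i) qi).coeff 2 / eval (z i) qi) ^ 2
          - 280 * (6 * (taylor (z i) qi).coeff 2 / eval (z i) qi) ^ 3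
          + 1260 * (2 * eval (z i) (derivative qi) / eval (z i) qi) ^ 3
              * (24 * (taylor (z i) qi).coeff 3 / eval (z i) qi)
          - 1260 * (2 * eval (z i) (derivative qi) / eval (z i) qi)
              * (6 * (taylor (z i) qi).coeff 2 / eval (z i) qi)
              * (24 * (taylor (z i) qi).coeff 3 / eval (z i) qi)
          + 105 * (24 * (taylor (z i) qi).coeff 3 / eval (z i) qi) ^ 2
          - 378 * (2 * eval (z i) (derivative qi) / eval (z i) qi) ^ 2
              * (120 * (taylor (z i) qi).coeff 4 / eval (z i) qi)
          + 168 * (6 * (taylor (z i) qi).coeff 2 / eval (z i) qi)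
              * (120 * (taylor (z i) qi).coeff 4 / eval (z i) qi)
          + 84 * (2 * eval (z i) (derivative qi) / eval (z i) qi)
              * (720 * (taylor (z i) qi).coeff 5 / eval (z i) qi)
          - 12 * (5040 * (taylor (z i) qi).coeff 6 / eval (z i) qi)) := by
    linear_combination r6 + hbig - eval (z i) qi * hV6
  -- iterated derivatives via Taylor coefficients
  have hiter : ∀ (g : ℂ[X]) (m : ℕ),
      (derivative^[m] g).eval (z i) = (m.factorial : ℂ) * (taylor (z i) g).coeff m := by
    intro g m
    rw [taylor_coeff, ← Polynomial.factorial_smul_hasseDeriv]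
    simp [nsmul_eq_mul]
  have htq : taylor (z i) q = X * taylor (z i) qi := by
    rw [← hq_univ, hA]
    simp only [taylor_apply, mul_comp, sub_comp, X_comp, C_comp, add_sub_cancel_right]
  have hpk : ∀ m : ℕ, (derivative^[m + 2] p).eval (z i)
      = ((n : ℂ) + 1) * ((m + 1).factorial : ℂ) * (taylor (z i) qi).coeff m := by
    intro m
    have h1 : derivative^[m + 2] p = Polynomial.C ((n : ℂ) + 1) * derivative^[m + 1] q := by
      rw [show m + 2 = (m + 1) + 1 from rfl, Function.iterate_succ_apply, hp',
        Polynomial.iterate_derivative_C_mul]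
    rw [h1, eval_mul, eval_C, hiter q (m + 1), htq, coeff_X_mul]
    ring
  have hd2i : (derivative^[2] p).eval (z i) = ((n : ℂ) + 1) * eval (z i) qi := by
    have h := hpk 0
    norm_num [Nat.factorial] at h
    exact h
  have h3 : (derivative^[3] p).eval (z i) = ((n : ℂ) + 1) * 2 * eval (z i) (derivative qi) := by
    have h := hpk 1
    norm_num [Nat.factorial] at h
    exact h
  have h4 : (derivative^[4] p).eval (z i) = ((n : ℂ) + 1) * 6 * (taylor (z i) qi).coeff 2 := by
    have h := hpk 2
    norm_num [Nat.factorial] at h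
    exact h
  have h5 : (derivative^[5] p).eval (z i) = ((n : ℂ) + 1) * 24 * (taylor (z i) qi).coeff 3 := by
    have h := hpk 3
    norm_num [Nat.factorial] at h
    exact h
  have h6' : (derivative^[6] p).eval (z i) = ((n : ℂ) + 1) * 120 * (taylor (z i) qi).coeff 4 := by
    have h := hpk 4
    norm_num [Nat.factorial] at h
    exact h
  have h7 : (derivative^[7] p).eval (z i) = ((n : ℂ) + 1) * 720 * (taylor (z i) qi).coeff 5 := by
    have h := hpk 5
    norm_num [Nat.factorial] at h
    exact h
  have h8 : (derivative^[8] p).eval (z i) = ((n : ℂ) + 1) * 5040 * (taylor (z i) qi).coeff 6 := by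
    have h := hpk 6
    norm_num [Nat.factorial] at h
    exact h
  have hC3 : C i 3 = 2 * eval (z i) (derivative qi) / eval (z i) qi := by
    rw [hC i 3, h3, hd2i]
    field_simp
  have hC4 : C i 4 = 6 * (taylor (z i) qi).coeff 2 / eval (z i) qi := by
    rw [hC i 4, h4, hd2i]
    field_simp
  have hC5 : C i 5 = 24 * (taylor (z i) qi).coeff 3 / eval (z i) qi := by
    rw [hC i 5, h5, hd2i]
    field_simp
  have hC6 : C i 6 = 120 * (taylor (z i) qi).coeff 4 / eval (z i) qi := by
    rw [hC i 6, h6', hd2i]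
    field_simp
  have hC7 : C i 7 = 720 * (taylor (z i) qi).coeff 5 / eval (z i) qi := by
    rw [hC i 7, h7, hd2i]
    field_simp
  have hC8 : C i 8 = 5040 * (taylor (z i) qi).coeff 6 / eval (z i) qi := by
    rw [hC i 8, h8, hd2i]
    field_simp
  -- final assembly
  rw [Finset.filter_ne']
  have hstep : ∑ k ∈ univ.erase i, 1 / ((derivative^[2] p).eval (z k) * (z i - z k) ^ 6)
      = 1 / ((n : ℂ) + 1) * -(eval (z i) f / w i) := by
    rw [← hsum, Finset.mul_sum]
    refine Finset.sum_congr rfl fun k hk => ?_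
    have hki := (mem_erase.mp hk).1
    have hzne : z i - z k ≠ 0 := sub_ne_zero.mpr fun h' => hki (hz h'.symm)
    rw [hw2 k, hfk k hki]
    field_simp
  rw [hstep, ← hqi_eval_i, hF, hd2i, hC3, hC4, hC5, hC6, hC7, hC8]
  have habs : ∀ E : ℂ, 1 / ((n : ℂ) + 1) * -(1 / 60480 * E / eval (z i) qi)
      = -(1 / (60480 * (((n : ℂ) + 1) * eval (z i) qi))) * E := by
    intro E
    field_simp
  exact habs _
end

section
/- For every index i ∈ {1,…,n} the following identity holds: ∑_{k≠i} (λ(z_i) − λ(z_k))/(λ''(z_k)·z_{ik}⁸) = (1/120960)·(315C_{i3}⁶ − 1155C_{i3}⁴C_{i4} + 1050C_{i3}²C_{i4}² − 140C_{i4}³ + 504C_{i3}³C_{i5} − 602C_{i3}C_{i4}C_{i5} + 63C_{i5}² − 168C_{i3}²C_{i6} + 98C_{i4}C_{i6} + 44C_{i3}C_{i7} − 9C_{i8}). -/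
open Polynomial Finset

private lemma taylor_deriv (r : ℂ) (f : Polynomial ℂ) :
    derivative (taylor r f) = taylor r (derivative f) := by
  simp [taylor_apply, derivative_comp]

private lemma sum_eval_mul_nodalWeight {ι : Type*} [DecidableEq ι] (s : Finset ι) (v : ι → ℂ)
    (hvs : Set.InjOn v s) (f : Polynomial ℂ) (hf : f.degree < s.card) :
    ∑ k ∈ s, f.eval (v k) * Lagrange.nodalWeight s v k = f.coeff (s.card - 1) := by
  conv_rhs => rw [Lagrange.eq_interpolate hvs hf]
  rw [Lagrange.interpolate_apply, finset_sum_coeff]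
  refine (Finset.sum_congr rfl fun k hk => ?_).symm
  rw [Lagrange.basis_eq_prod_sub_inv_mul_nodal_div hk, ← Lagrange.nodal_erase_eq_nodal_div hk,
    ← mul_assoc, ← Polynomial.C_mul, coeff_C_mul]
  have h1 : (Lagrange.nodal (s.erase k) v).natDegree = s.card - 1 := by
    rw [Lagrange.natDegree_nodal, Finset.card_erase_of_mem hk]
  rw [← h1, Monic.coeff_natDegree Lagrange.nodal_monic, mul_one, mul_comm]

/-- coefficients of the residue expansion -/
private noncomputable def rr (c3 c4 c5 c6 c7 c8 : ℂ) : ℕ → ℂ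
  | 0 => -(1/2)
  | 1 => c3/12
  | 2 => c4/24 - c3^2/24
  | 3 => c5/80 - 5/144*c3*c4 + c3^3/48
  | 4 => c6/360 - c4^2/144 - 7/720*c3*c5 + 7/288*c3^2*c4 - c3^4/96
  | 5 => c7/2016 - 11/2880*c4*c5 - c3*c6/480 + c3*c4^2/108 + 19/2880*c3^2*c5
         - c3^3*c4/64 + c3^5/192
  | 6 => -(1 / 120960) * (315*c3^6 - 1155*c3^4*c4 + 1050*c3^2*c4^2 - 140*c4^3
         + 504*c3^3*c5 - 602*c3*c4*c5 + 63*c5^2 - 168*c3^2*c6 + 98*c4*c6 + 44*c3*c7 - 9*c8)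
  | _ => 0

private lemma rr_0 (c3 c4 c5 c6 c7 c8 : ℂ) : rr c3 c4 c5 c6 c7 c8 0 = -(1/2) := rfl
private lemma rr_1 (c3 c4 c5 c6 c7 c8 : ℂ) : rr c3 c4 c5 c6 c7 c8 1 = c3/12 := rfl
private lemma rr_2 (c3 c4 c5 c6 c7 c8 : ℂ) : rr c3 c4 c5 c6 c7 c8 2 = c4/24 - c3^2/24 := rfl
private lemma rr_3 (c3 c4 c5 c6 c7 c8 : ℂ) : rr c3 c4 c5 c6 c7 c8 3 = c5/80 - 5/144*c3*c4 + c3^3/48 := rfl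
private lemma rr_4 (c3 c4 c5 c6 c7 c8 : ℂ) : rr c3 c4 c5 c6 c7 c8 4 = c6/360 - c4^2/144 - 7/720*c3*c5 + 7/288*c3^2*c4 - c3^4/96 := rfl
private lemma rr_5 (c3 c4 c5 c6 c7 c8 : ℂ) : rr c3 c4 c5 c6 c7 c8 5 = c7/2016 - 11/2880*c4*c5 - c3*c6/480 + c3*c4^2/108 + 19/2880*c3^2*c5 - c3^3*c4/64 + c3^5/192 := rfl
private lemma rr_6 (c3 c4 c5 c6 c7 c8 : ℂ) : rr c3 c4 c5 c6 c7 c8 6 = -(1 / 120960) * (315*c3^6 - 1155*c3^4*c4 + 1050*c3^2*c4^2 - 140*c4^3 + 504*c3^3*c5 - 602*c3*c4*c5 + 63*c5^2 - 168*c3^2*c6 + 98*c4*c6 + 44*c3*c7 - 9*c8) := rfl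

private lemma term_eval (e Y W Tv F0v : ℂ) (hY : Y ≠ 0) (hW : W ≠ 0) (he : e ≠ 0)
    (h2 : e * F0v = Y^7 * Tv) :
    -(Y^2 * F0v) / (e * (Y * W⁻¹) * (-Y)^8) = -(Tv * W) / e^2 := by
  have h9 : (-Y)^8 = Y^8 := by ring
  rw [h9]
  field_simp
  linear_combination (-1 : ℂ) * h2

set_option maxHeartbeats 1600000 in
/-- Residue formula R₃(8): for every index `i`,
`∑_{{k≠i}} (λ(z_i) − λ(z_k))/(λ''(z_k)·z_ik⁸) = (1/120960)·(315C_i3⁶ − 1155C_i3⁴C_i4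
  + 1050C_i3²C_i4² − 140C_i4³ + 504C_i3³C_i5 − 602C_i3C_i4C_i5 + 63C_i5²
  − 168C_i3²C_i6 + 98C_i4C_i6 + 44C_i3C_i7 − 9C_i8)`. -/
theorem stmt_10 (n : ℕ) (hn : 1 ≤ n) (p : Polynomial ℂ)
    (hp : p.Monic) (hdeg : p.natDegree = n + 1)
    (z : Fin n → ℂ) (hz : Function.Injective z)
    (hcrit : ∀ i, (derivative p).eval (z i) = 0)
    (hnd : ∀ i, (derivative^[2] p).eval (z i) ≠ 0)
    (C : Fin n → ℕ → ℂ)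
    (hC : ∀ i k, C i k = ((derivative^[k] p).eval (z i)) / ((derivative^[2] p).eval (z i)))
    (i : Fin n) :
    ∑ k ∈ univ.filter (fun k => k ≠ i),
        (p.eval (z i) - p.eval (z k)) / ((derivative^[2] p).eval (z k) * (z i - z k) ^ 8)
      = (1 / 120960) *
          (315 * (C i 3) ^ 6 - 1155 * (C i 3) ^ 4 * C i 4
            + 1050 * (C i 3) ^ 2 * (C i 4) ^ 2 - 140 * (C i 4) ^ 3
            + 504 * (C i 3) ^ 3 * C i 5 - 602 * C i 3 * C i 4 * C i 5
            + 63 * (C i 5) ^ 2 - 168 * (C i 3) ^ 2 * C i 6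
            + 98 * C i 4 * C i 6 + 44 * C i 3 * C i 7 - 9 * C i 8) := by
  classical
  -- dispose of the case n = 1
  rcases eq_or_lt_of_le hn with h1 | hn2
  · have hiter : ∀ k : ℕ, 3 ≤ k → derivative^[k] p = 0 := by
      intro k hk
      exact iterate_derivative_eq_zero (by omega)
    have hfilter : univ.filter (fun k : Fin n => k ≠ i) = ∅ := by
      subst h1
      ext k
      simp [Subsingleton.elim k i]
    rw [hfilter, Finset.sum_empty, hC i 3, hC i 4, hC i 5, hC i 6, hC i 7, hC i 8,
      hiter 3 (by norm_num), hiter 4 (by norm_num), hiter 5 (by norm_num),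
      hiter 6 (by norm_num), hiter 7 (by norm_num), hiter 8 (by norm_num)]
    norm_num
  -- now 2 ≤ n
  have hn2 : 2 ≤ n := hn2
  set e : ℂ := (n : ℂ) + 1 with he_def
  have he : e ≠ 0 := by
    rw [he_def]
    exact Nat.cast_add_one_ne_zero n
  set s : Finset (Fin n) := univ.filter (fun k => k ≠ i) with hs_def
  have hse : s = univ.erase i := by rw [hs_def, Finset.filter_ne']
  have hscard : s.card = n - 1 := by
    rw [hse, Finset.card_erase_of_mem (mem_univ i), Finset.card_univ, Fintype.card_fin]
  set y : Fin n → ℂ := fun k => z k - z i with hy_def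
  have hyinj : Function.Injective y := fun a b hab => hz (by simpa [hy_def, sub_left_inj] using hab)
  set q : Polynomial ℂ := taylor (z i) p with hq_def
  set v : Polynomial ℂ := Lagrange.nodal s y with hv_def
  set d : ℕ → ℂ := fun k => (derivative^[k] p).eval (z i) with hd_def
  have hd2 : d 2 ≠ 0 := hnd i
  set a : ℕ → ℂ := fun k => q.coeff k with ha_def
  have ha : ∀ k, (k.factorial : ℂ) * a k = d k := by
    intro k
    have h2 : derivative^[k] p = k.factorial • (hasseDeriv k p) := by
      rw [← Polynomial.factorial_smul_hasseDeriv (R := ℂ) k]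
      rfl
    show (k.factorial : ℂ) * q.coeff k = (derivative^[k] p).eval (z i)
    rw [hq_def, Polynomial.taylor_coeff, h2, nsmul_eq_mul, eval_mul, eval_natCast]
  -- derivative p as a product
  have hder : derivative p = Polynomial.C e * Lagrange.nodal univ z := by
    have hsub : derivative p - Polynomial.C e * Lagrange.nodal univ z = 0 := by
      by_cases hD : derivative p - Polynomial.C e * Lagrange.nodal univ z = 0
      · exact hD
      apply Polynomial.eq_zero_of_natDegree_lt_card_of_eval_eq_zero _ hz
      · intro k
        simp [Lagrange.eval_nodal_at_node (mem_univ k), hcrit k]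
      · rw [Fintype.card_fin, Polynomial.natDegree_lt_iff_degree_lt hD]
        rw [Polynomial.degree_lt_iff_coeff_zero]
        intro m hm
        have hm' : n ≤ m := by exact_mod_cast hm
        rw [coeff_sub, coeff_C_mul, coeff_derivative]
        have hnodal : (Lagrange.nodal univ z).natDegree = n := by
          rw [Lagrange.natDegree_nodal, Finset.card_univ, Fintype.card_fin]
        rcases eq_or_lt_of_le hm' with h | h
        · subst h
          have h1 : p.coeff (n + 1) = 1 := by
            have := hp.coeff_natDegree
            rwa [hdeg] at this
          have h2 : (Lagrange.nodal univ z).coeff n = 1 := by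
            have := (Lagrange.nodal_monic (s := (univ : Finset (Fin n))) (v := z)).coeff_natDegree
            rwa [hnodal] at this
          rw [h1, h2, he_def]
          push_cast
          ring
        · have h1 : p.coeff (m + 1) = 0 :=
            coeff_eq_zero_of_natDegree_lt (by omega)
          have h2 : (Lagrange.nodal univ z).coeff m = 0 :=
            coeff_eq_zero_of_natDegree_lt (by omega)
          rw [h1, h2]
          ring
    exact sub_eq_zero.mp hsub
  -- derivative of q
  have hq' : derivative q = Polynomial.C e * (X * v) := by
    rw [hq_def, taylor_deriv, hder, taylor_mul, taylor_C]
    congr 1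
    have hprod : taylor (z i) (Lagrange.nodal univ z) = Lagrange.nodal univ y := by
      rw [Lagrange.nodal, Lagrange.nodal]
      calc taylor (z i) (∏ k ∈ univ, (X - Polynomial.C (z k)))
          = taylorAlgHom (z i) (∏ k ∈ univ, (X - Polynomial.C (z k))) := rfl
        _ = ∏ k ∈ univ, taylorAlgHom (z i) (X - Polynomial.C (z k)) := map_prod _ _ _
        _ = ∏ k ∈ univ, (X - Polynomial.C (y k)) := by
            refine Finset.prod_congr rfl fun k _ => ?_
            rw [taylorAlgHom_apply, taylor_apply, sub_comp, X_comp, C_comp, hy_def]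
            push_cast
            ring_nf
            rw [Polynomial.C_sub]
            ring
    rw [hprod, Lagrange.nodal_eq_mul_nodal_erase (mem_univ i), hv_def, hse]
    have : y i = 0 := by simp [hy_def]
    rw [this, map_zero, sub_zero]
  -- q.coeff 1 = 0
  have hq1 : a 1 = 0 := by
    have h0 : (derivative q).coeff 0 = 0 := by
      rw [hq']
      simp [Polynomial.mul_coeff_zero]
    have h1 := coeff_derivative q 0
    rw [h0] at h1
    simpa using h1.symm
  -- the quotient F0
  have hdvd2 : (X:Polynomial ℂ)^2 ∣ (q - Polynomial.C (q.eval 0)) := by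
    rw [Polynomial.X_pow_dvd_iff]
    intro dd hdd
    interval_cases dd
    · simp [Polynomial.coeff_zero_eq_eval_zero]
    · simpa [Polynomial.coeff_C] using hq1
  obtain ⟨F0, hF0⟩ := hdvd2
  have hF0c : ∀ m : ℕ, F0.coeff m = a (m+2) := by
    intro m
    have h := congrArg (fun f => Polynomial.coeff f (m+2)) hF0
    simpa [Polynomial.coeff_C] using h.symm
  -- coefficients of v
  have hwm : ∀ m : ℕ, e * v.coeff m = ((m:ℂ)+2) * a (m+2) := by
    intro m
    have h1 := coeff_derivative q (m+1)
    rw [hq', coeff_C_mul, Polynomial.coeff_X_mul] at h1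
    rw [h1]
    show q.coeff (m+2) * _ = ((m:ℂ)+2) * q.coeff (m+2)
    push_cast
    ring
  -- relation between a and the constants C
  have hCd : ∀ k, C i k * d 2 = d k := fun k => by
    rw [hC i k]
    exact div_mul_cancel₀ _ hd2
  have ha2 : a 2 = d 2 / 2 := by
    have h := ha 2
    norm_num [Nat.factorial] at h
    rw [eq_div_iff (two_ne_zero)]
    linear_combination h
  have h3 : a 3 = C i 3 * d 2 / 6 := by
    have h := ha 3
    norm_num [Nat.factorial] at h
    rw [eq_div_iff (by norm_num : (6:ℂ) ≠ 0)]
    linear_combination h - hCd 3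
  have h4 : a 4 = C i 4 * d 2 / 24 := by
    have h := ha 4
    norm_num [Nat.factorial] at h
    rw [eq_div_iff (by norm_num : (24:ℂ) ≠ 0)]
    linear_combination h - hCd 4
  have h5 : a 5 = C i 5 * d 2 / 120 := by
    have h := ha 5
    norm_num [Nat.factorial] at h
    rw [eq_div_iff (by norm_num : (120:ℂ) ≠ 0)]
    linear_combination h - hCd 5
  have h6 : a 6 = C i 6 * d 2 / 720 := by
    have h := ha 6
    norm_num [Nat.factorial] at h
    rw [eq_div_iff (by norm_num : (720:ℂ) ≠ 0)]
    linear_combination h - hCd 6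
  have h7 : a 7 = C i 7 * d 2 / 5040 := by
    have h := ha 7
    norm_num [Nat.factorial] at h
    rw [eq_div_iff (by norm_num : (5040:ℂ) ≠ 0)]
    linear_combination h - hCd 7
  have h8 : a 8 = C i 8 * d 2 / 40320 := by
    have h := ha 8
    norm_num [Nat.factorial] at h
    rw [eq_div_iff (by norm_num : (40320:ℂ) ≠ 0)]
    linear_combination h - hCd 8
  -- the approximation polynomial
  set r : ℕ → ℂ := rr (C i 3) (C i 4) (C i 5) (C i 6) (C i 7) (C i 8) with hr_def
  set Rp : Polynomial ℂ := ∑ m ∈ range 7, Polynomial.C (-(e^2) * r m) * X^m with hRp_def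
  have hRpv : ∀ j : ℕ, (Rp * v).coeff j
      = ∑ m ∈ range 7, (-(e^2) * r m) * (if m ≤ j then v.coeff (j - m) else 0) := by
    intro j
    rw [hRp_def, Finset.sum_mul, finset_sum_coeff]
    refine Finset.sum_congr rfl fun m _ => ?_
    rw [mul_assoc, coeff_C_mul, Polynomial.coeff_X_pow_mul']
  have hdvd7 : (X:Polynomial ℂ)^7 ∣ (Polynomial.C e * F0 - Rp * v) := by
    rw [Polynomial.X_pow_dvd_iff]
    intro j hj
    rw [coeff_sub, coeff_C_mul, hF0c, hRpv, sub_eq_zero]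
    simp only [Finset.sum_range_succ, Finset.sum_range_zero]
    interval_cases j
    · norm_num [hr_def, rr_0, rr_1, rr_2, rr_3, rr_4, rr_5, rr_6]
      linear_combination e * ha2 + e * (-(1/2) : ℂ) * hwm 0 + e * (-(1/2) : ℂ) * ((0:ℂ)+2) * ha2
    · norm_num [hr_def, rr_0, rr_1, rr_2, rr_3, rr_4, rr_5, rr_6]
      linear_combination e * h3 + e * (-(1/2) : ℂ) * hwm 1 + e * (-(1/2) : ℂ) * ((1:ℂ)+2) * h3 + e * ((C i 3)/12) * hwm 0 + e * ((C i 3)/12) * ((0:ℂ)+2) * ha2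
    · norm_num [hr_def, rr_0, rr_1, rr_2, rr_3, rr_4, rr_5, rr_6]
      linear_combination e * h4 + e * (-(1/2) : ℂ) * hwm 2 + e * (-(1/2) : ℂ) * ((2:ℂ)+2) * h4 + e * ((C i 3)/12) * hwm 1 + e * ((C i 3)/12) * ((1:ℂ)+2) * h3 + e * ((C i 4)/24 - (C i 3)^2/24) * hwm 0 + e * ((C i 4)/24 - (C i 3)^2/24) * ((0:ℂ)+2) * ha2
    · norm_num [hr_def, rr_0, rr_1, rr_2, rr_3, rr_4, rr_5, rr_6]
      linear_combination e * h5 + e * (-(1/2) : ℂ) * hwm 3 + e * (-(1/2) : ℂ) * ((3:ℂ)+2) * h5 + e * ((C i 3)/12) * hwm 2 + e * ((C i 3)/12) * ((2:ℂ)+2) * h4 + e * ((C i 4)/24 - (C i 3)^2/24) * hwm 1 + e * ((C i 4)/24 - (C i 3)^2/24) * ((1:ℂ)+2) * h3 + e * ((C i 5)/80 - 5/144*(C i 3)*(C i 4) + (C i 3)^3/48) * hwm 0 + e * ((C i 5)/80 - 5/144*(C i 3)*(C i 4) + (C i 3)^3/48) * ((0:ℂ)+2) * ha2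
    · norm_num [hr_def, rr_0, rr_1, rr_2, rr_3, rr_4, rr_5, rr_6]
      linear_combination e * h6 + e * (-(1/2) : ℂ) * hwm 4 + e * (-(1/2) : ℂ) * ((4:ℂ)+2) * h6 + e * ((C i 3)/12) * hwm 3 + e * ((C i 3)/12) * ((3:ℂ)+2) * h5 + e * ((C i 4)/24 - (C i 3)^2/24) * hwm 2 + e * ((C i 4)/24 - (C i 3)^2/24) * ((2:ℂ)+2) * h4 + e * ((C i 5)/80 - 5/144*(C i 3)*(C i 4) + (C i 3)^3/48) * hwm 1 + e * ((C i 5)/80 - 5/144*(C i 3)*(C i 4) + (C i 3)^3/48) * ((1:ℂ)+2) * h3 + e * ((C i 6)/360 - (C i 4)^2/144 - 7/720*(C i 3)*(C i 5) + 7/288*(C i 3)^2*(C i 4) - (C i 3)^4/96) * hwm 0 + e * ((C i 6)/360 - (C i 4)^2/144 - 7/720*(C i 3)*(C i 5) + 7/288*(C i 3)^2*(C i 4) - (C i 3)^4/96) * ((0:ℂ)+2) * ha2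
    · norm_num [hr_def, rr_0, rr_1, rr_2, rr_3, rr_4, rr_5, rr_6]
      linear_combination e * h7 + e * (-(1/2) : ℂ) * hwm 5 + e * (-(1/2) : ℂ) * ((5:ℂ)+2) * h7 + e * ((C i 3)/12) * hwm 4 + e * ((C i 3)/12) * ((4:ℂ)+2) * h6 + e * ((C i 4)/24 - (C i 3)^2/24) * hwm 3 + e * ((C i 4)/24 - (C i 3)^2/24) * ((3:ℂ)+2) * h5 + e * ((C i 5)/80 - 5/144*(C i 3)*(C i 4) + (C i 3)^3/48) * hwm 2 + e * ((C i 5)/80 - 5/144*(C i 3)*(C i 4) + (C i 3)^3/48) * ((2:ℂ)+2) * h4 + e * ((C i 6)/360 - (C i 4)^2/144 - 7/720*(C i 3)*(C i 5) + 7/288*(C i 3)^2*(C i 4) - (C i 3)^4/96) * hwm 1 + e * ((C i 6)/360 - (C i 4)^2/144 - 7/720*(C i 3)*(C i 5) + 7/288*(C i 3)^2*(C i 4) - (C i 3)^4/96) * ((1:ℂ)+2) * h3 + e * ((C i 7)/2016 - 11/2880*(C i 4)*(C i 5) - (C i 3)*(C i 6)/480 + (C i 3)*(C i 4)^2/108 +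 19/2880*(C i 3)^2*(C i 5) - (C i 3)^3*(C i 4)/64 + (C i 3)^5/192) * hwm 0 + e * ((C i 7)/2016 - 11/2880*(C i 4)*(C i 5) - (C i 3)*(C i 6)/480 + (C i 3)*(C i 4)^2/108 + 19/2880*(C i 3)^2*(C i 5) - (C i 3)^3*(C i 4)/64 + (C i 3)^5/192) * ((0:ℂ)+2) * ha2
    · norm_num [hr_def, rr_0, rr_1, rr_2, rr_3, rr_4, rr_5, rr_6]
      linear_combination e * h8 + e * (-(1/2) : ℂ) * hwm 6 + e * (-(1/2) : ℂ) * ((6:ℂ)+2) * h8 + e * ((C i 3)/12) * hwm 5 + e * ((C i 3)/12) * ((5:ℂ)+2) * h7 + e * ((C i 4)/24 - (C i 3)^2/24) * hwm 4 + e * ((C i 4)/24 - (C i 3)^2/24) * ((4:ℂ)+2) * h6 + e * ((C i 5)/80 - 5/144*(C i 3)*(C i 4) + (C i 3)^3/48) * hwm 3 + e * ((C i 5)/80 - 5/144*(C i 3)*(C i 4) + (C i 3)^3/48) * ((3:ℂ)+2) * h5 + e * ((C i 6)/360 - (C i 4)^2/144 - 7/720*(C i 3)*(C i 5) + 7/288*(C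 i 3)^2*(C i 4) - (C i 3)^4/96) * hwm 2 + e * ((C i 6)/360 - (C i 4)^2/144 - 7/720*(C i 3)*(C i 5) + 7/288*(C i 3)^2*(C i 4) - (C i 3)^4/96) * ((2:ℂ)+2) * h4 + e * ((C i 7)/2016 - 11/2880*(C i 4)*(C i 5) - (C i 3)*(C i 6)/480 + (C i 3)*(C i 4)^2/108 + 19/2880*(C i 3)^2*(C i 5) - (C i 3)^3*(C i 4)/64 + (C i 3)^5/192) * hwm 1 + e * ((C i 7)/2016 - 11/2880*(C i 4)*(C i 5) - (C i 3)*(C i 6)/480 + (C i 3)*(C i 4)^2/108 + 19/2880*(C i 3)^2*(C i 5) - (C i 3)^3*(C i 4)/64 + (C i 3)^5/192) * ((1:ℂ)+2) * h3 + e * (-(1 / 120960) * (315*(C i 3)^6 - 1155*(C i 3)^4*(C i 4) + 1050*(C i 3)^2*(C i 4)^2 - 140*(C i 4)^3 + 504*(C i 3)^3*(C i 5) - 602*(C i 3)*(C i 4)*(C i 5) + 63*(C i 5)^2 - 168*(C i 3)^2*(C i 6) + 98*(C i 4)*(C i 6) + 44*(C i 3)*(C i 7) - 9*(C i 8))) *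 hwm 0 + e * (-(1 / 120960) * (315*(C i 3)^6 - 1155*(C i 3)^4*(C i 4) + 1050*(C i 3)^2*(C i 4)^2 - 140*(C i 4)^3 + 504*(C i 3)^3*(C i 5) - 602*(C i 3)*(C i 4)*(C i 5) + 63*(C i 5)^2 - 168*(C i 3)^2*(C i 6) + 98*(C i 4)*(C i 6) + 44*(C i 3)*(C i 7) - 9*(C i 8))) * ((0:ℂ)+2) * ha2
  obtain ⟨T, hT⟩ := hdvd7
  -- degree bookkeeping
  have hqdeg : q.natDegree = n + 1 := by rw [hq_def, natDegree_taylor, hdeg]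
  have hF0deg : F0.natDegree ≤ n - 1 := by
    by_cases hF : F0 = 0
    · simp [hF]
    have h1 : (q - Polynomial.C (q.eval 0)).natDegree ≤ n + 1 :=
      le_trans (natDegree_sub_le _ _) (by simp [hqdeg, natDegree_C])
    rw [hF0, natDegree_mul (pow_ne_zero _ X_ne_zero) hF, natDegree_X_pow] at h1
    omega
  have hvdeg : v.natDegree = n - 1 := by rw [hv_def, Lagrange.natDegree_nodal, hscard]
  have hvmonic : v.Monic := by rw [hv_def]; exact Lagrange.nodal_monic
  have hRpdeg : Rp.natDegree ≤ 6 := by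
    rw [hRp_def]
    refine natDegree_sum_le_of_forall_le _ _ fun m hm => le_trans natDegree_mul_le ?_
    rw [natDegree_C, natDegree_X_pow, zero_add]
    exact Nat.lt_succ_iff.mp (Finset.mem_range.mp hm)
  have hTdeg : T.natDegree ≤ n - 2 := by
    by_cases hT0 : T = 0
    · simp [hT0]
    have h1 : (Polynomial.C e * F0 - Rp * v).natDegree ≤ n + 5 := by
      refine le_trans (natDegree_sub_le _ _) ?_
      have hb1 : (Polynomial.C e * F0).natDegree ≤ n + 5 :=
        le_trans (natDegree_C_mul_le _ _) (by omega)
      have hb2 : (Rp * v).natDegree ≤ n + 5 := by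
        refine le_trans natDegree_mul_le ?_
        omega
      omega
    rw [hT, natDegree_mul (pow_ne_zero _ X_ne_zero) hT0, natDegree_X_pow] at h1
    omega
  -- the key coefficient of T
  have hv0 : ∀ m : ℕ, n - 1 < m → v.coeff m = 0 := fun m hm =>
    coeff_eq_zero_of_natDegree_lt (by omega)
  have hv1 : v.coeff (n-1) = 1 := by
    have := hvmonic.coeff_natDegree
    rwa [hvdeg] at this
  have hTcoeff : T.coeff (n - 2) = e^2 * r 6 := by
    have h := congrArg (fun f => Polynomial.coeff f (n + 5)) hT
    simp only [coeff_sub, coeff_C_mul] at h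
    rw [hRpv] at h
    rw [show n + 5 = (n - 2) + 7 by omega, Polynomial.coeff_X_pow_mul] at h
    rw [show (n-2) + 7 = n + 5 by omega] at h
    rw [coeff_eq_zero_of_natDegree_lt (show F0.natDegree < n + 5 by omega)] at h
    simp only [Finset.sum_range_succ, Finset.sum_range_zero] at h
    rw [if_pos (show (0:ℕ) ≤ n+5 by omega), if_pos (show (1:ℕ) ≤ n+5 by omega),
      if_pos (show (2:ℕ) ≤ n+5 by omega), if_pos (show (3:ℕ) ≤ n+5 by omega),
      if_pos (show (4:ℕ) ≤ n+5 by omega), if_pos (show (5:ℕ) ≤ n+5 by omega),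
      if_pos (show (6:ℕ) ≤ n+5 by omega)] at h
    rw [show n+5-0 = n+5 by omega, show n+5-1 = n+4 by omega, show n+5-2 = n+3 by omega,
      show n+5-3 = n+2 by omega, show n+5-4 = n+1 by omega, show n+5-5 = n+0 by omega,
      show n+5-6 = n-1 by omega] at h
    rw [hv0 (n+5) (by omega), hv0 (n+4) (by omega), hv0 (n+3) (by omega),
      hv0 (n+2) (by omega), hv0 (n+1) (by omega), hv0 (n+0) (by omega), hv1] at h
    simp at h
    linear_combination -h
  -- injectivity of nodes on s
  have hyinjOn : Set.InjOn y s := fun a _ b _ hab => hyinj hab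
  have hTdeglt : T.degree < (s.card : WithBot ℕ) := by
    by_cases hT0 : T = 0
    · rw [hT0, degree_zero]
      exact WithBot.bot_lt_coe _
    rw [degree_eq_natDegree hT0]
    exact_mod_cast (by omega : T.natDegree < s.card)
  have hlag := sum_eval_mul_nodalWeight s y hyinjOn T hTdeglt
  -- rewrite each term of the sum
  have hterm : ∀ k ∈ s, (p.eval (z i) - p.eval (z k)) /
      ((derivative^[2] p).eval (z k) * (z i - z k)^8)
      = -(T.eval (y k) * Lagrange.nodalWeight s y k) / e^2 := by
    intro k hk
    have hk' := hk
    rw [hse, Finset.mem_erase] at hk'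
    have hkne : k ≠ i := hk'.1
    have hyk : y k ≠ 0 := sub_ne_zero.mpr (fun hzz => hkne (hz hzz))
    have hvk : v.eval (y k) = 0 := by rw [hv_def]; exact Lagrange.eval_nodal_at_node hk
    have hDv : (derivative v).eval (y k) = (Lagrange.nodalWeight s y k)⁻¹ := by
      rw [hv_def, Lagrange.nodalWeight_eq_eval_derivative_nodal hk, inv_inv]
    have hwne : Lagrange.nodalWeight s y k ≠ 0 := Lagrange.nodalWeight_ne_zero hyinjOn hk
    have hd2k : (derivative^[2] p).eval (z k) = e * (y k * (derivative v).eval (y k)) := by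
      have hqq : derivative (derivative q) = taylor (z i) (derivative (derivative p)) := by
        rw [hq_def, taylor_deriv, taylor_deriv]
      have h2 : (derivative^[2] p) = derivative (derivative p) := rfl
      have h3 : (taylor (z i) (derivative (derivative p))).eval (y k)
          = (derivative (derivative p)).eval (z k) := by
        rw [taylor_eval]
        congr 1
        rw [hy_def]
        ring
      rw [h2, ← h3, ← hqq, hq']
      simp only [derivative_mul, derivative_C, derivative_X, zero_mul, one_mul, zero_add,
        eval_add, eval_mul, eval_C, eval_X, hvk]
      try ring
    have hnum : p.eval (z i) - p.eval (z k) = -((y k)^2 * F0.eval (y k)) := by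
      have h := congrArg (fun f => Polynomial.eval (y k) f) hF0
      simp only [eval_sub, eval_mul, eval_pow, eval_X, eval_C] at h
      have e1 : q.eval (y k) = p.eval (z k) := by
        rw [hq_def, taylor_eval]
        congr 1
        rw [hy_def]
        ring
      have e2 : q.eval 0 = p.eval (z i) := by rw [hq_def, taylor_eval, zero_add]
      rw [e1, e2] at h
      linear_combination -h
    have hTk : e * F0.eval (y k) = (y k)^7 * T.eval (y k) := by
      have h := congrArg (fun f => Polynomial.eval (y k) f) hT
      simpa only [eval_sub, eval_mul, eval_pow, eval_X, eval_C, hvk, mul_zero, sub_zero] using h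
    have hzz : z i - z k = -(y k) := by rw [hy_def]; ring
    rw [hnum, hd2k, hDv, hzz]
    exact term_eval e (y k) (Lagrange.nodalWeight s y k) (T.eval (y k)) (F0.eval (y k))
      hyk hwne he hTk
  rw [Finset.sum_congr rfl hterm]
  have hsum : ∑ k ∈ s, -(T.eval (y k) * Lagrange.nodalWeight s y k) / e^2
      = -(∑ k ∈ s, T.eval (y k) * Lagrange.nodalWeight s y k) / e^2 := by
    rw [← Finset.sum_div, ← Finset.sum_neg_distrib]
  rw [hsum, hlag, show s.card - 1 = n - 2 by omega, hTcoeff]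
  rw [hr_def, rr_6]
  have he2 : e^2 ≠ 0 := pow_ne_zero _ he
  rw [neg_div, mul_div_cancel_left₀ _ he2]
  ring
end

section
/- For every index i ∈ {1,…,n} the following identity holds: ∑_{k≠i} C_{k4}/z_{ik}² = −(1/12)·(3C_{i3}²C_{i4} − 2C_{i4}² − 6C_{i3}C_{i5} + 6C_{i6}). -/
open Polynomial Finset

private lemma stmt_11_aux (Q1 Q2 Q3 Q5 c3 c4 c5 c6 : ℂ) (h3 : c3 * Q1 = Q2)
    (h4 : c4 * Q1 = Q3) (h6 : c6 * Q1 = Q5) :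
    2 * ((c6 - (c5 - c4 * c3 / 2) * c3 - c4 * c4 / 3) / 2 * Q1)
      + 2 * ((c5 - c4 * c3 / 2) * (Q2 / 2)) + (c4 * (Q3 / 3) - Q5) = 0 := by
  rw [← h3, ← h4, ← h6]; ring

/-- Residue formula R₄(2,4): for every index `i`,
`∑_{{k≠i}} C_k4/z_ik² = −(1/12)·(3C_i3²C_i4 − 2C_i4² − 6C_i3C_i5 + 6C_i6)`. -/
theorem stmt_11 (n : ℕ) (hn : 1 ≤ n) (p : Polynomial ℂ)
    (hp : p.Monic) (hdeg : p.natDegree = n + 1)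
    (z : Fin n → ℂ) (hz : Function.Injective z)
    (hcrit : ∀ i, (derivative p).eval (z i) = 0)
    (hnd : ∀ i, (derivative^[2] p).eval (z i) ≠ 0)
    (C : Fin n → ℕ → ℂ)
    (hC : ∀ i k, C i k = ((derivative^[k] p).eval (z i)) / ((derivative^[2] p).eval (z i)))
    (i : Fin n) :
    ∑ k ∈ univ.filter (fun k => k ≠ i), C k 4 / (z i - z k) ^ 2
      = -(1 / 12) * (3 * (C i 3) ^ 2 * C i 4 - 2 * (C i 4) ^ 2
          - 6 * C i 3 * C i 5 + 6 * C i 6) := by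
  classical
  have hn1 : ((n : ℂ) + 1) ≠ 0 := by
    exact_mod_cast Nat.cast_add_one_ne_zero (R := ℂ) n
  set q : ℂ[X] := derivative p with hqdef
  -- iterated derivative translations
  have e1 : derivative^[1] p = q := by rw [Function.iterate_one]
  have e2 : derivative^[2] p = derivative q := by
    rw [show (2:ℕ) = 1+1 from rfl, Function.iterate_succ_apply', e1]
  have e3 : derivative^[3] p = derivative (derivative q) := by
    rw [show (3:ℕ) = 2+1 from rfl, Function.iterate_succ_apply', e2]
  have e4 : derivative^[4] p = derivative (derivative (derivative q)) := by
    rw [show (4:ℕ) = 3+1 from rfl, Function.iterate_succ_apply', e3]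
  have e5 : derivative^[5] p = derivative (derivative (derivative (derivative q))) := by
    rw [show (5:ℕ) = 4+1 from rfl, Function.iterate_succ_apply', e4]
  have e6 : derivative^[6] p
      = derivative (derivative (derivative (derivative (derivative q)))) := by
    rw [show (6:ℕ) = 5+1 from rfl, Function.iterate_succ_apply', e5]
  have hq1 : ∀ j, (derivative q).eval (z j) ≠ 0 := by
    intro j; have h := hnd j; rwa [e2] at h
  have hq0 : ∀ j, q.eval (z j) = 0 := hcrit
  -- degree and leading coefficient of q
  have hqcoeff : q.coeff n = (n : ℂ) + 1 := by
    rw [hqdef, coeff_derivative]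
    have h1 : p.coeff (n+1) = 1 := by rw [← hdeg]; exact hp.coeff_natDegree
    rw [h1, one_mul]
  have hqdeg : q.natDegree = n := by
    refine le_antisymm ?_ (le_natDegree_of_ne_zero (by rw [hqcoeff]; exact hn1))
    have h := natDegree_derivative_le p
    rw [hdeg] at h; rw [hqdef]; omega
  -- the cofactors g k
  set g : Fin n → ℂ[X] := fun k => q /ₘ (X - Polynomial.C (z k)) with hgdef
  have hgq : ∀ k, (X - Polynomial.C (z k)) * g k = q := fun k =>
    mul_divByMonic_eq_iff_isRoot.2 (hq0 k)
  have hgdeg : ∀ k, (g k).natDegree = n - 1 := by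
    intro k
    rw [hgdef]
    simp only
    rw [natDegree_divByMonic q (monic_X_sub_C (z k)), natDegree_X_sub_C, hqdeg]
  have hglead : ∀ k, (g k).coeff (n - 1) = (n : ℂ) + 1 := by
    intro k
    have h1 : (g k).leadingCoeff = q.leadingCoeff := by
      conv_rhs => rw [← hgq k]
      rw [leadingCoeff_monic_mul (monic_X_sub_C (z k))]
    have h2 : q.leadingCoeff = (n:ℂ) + 1 := by
      rw [leadingCoeff, hqdeg, hqcoeff]
    rw [← hgdeg k, coeff_natDegree, h1, h2]
  have hgzero : ∀ k j, k ≠ j → (g k).eval (z j) = 0 := by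
    intro k j hkj
    have h : (z j - z k) * (g k).eval (z j) = 0 := by
      have h := congrArg (eval (z j)) (hgq k)
      simpa [hq0 j] using h
    have hne : z j - z k ≠ 0 := sub_ne_zero.2 fun h => hkj (hz h).symm
    exact (mul_eq_zero.1 h).resolve_left hne
  have hgd1 : ∀ k, derivative q = g k + (X - Polynomial.C (z k)) * derivative (g k) := by
    intro k
    conv_lhs => rw [← hgq k]
    rw [derivative_mul, derivative_sub, derivative_X, derivative_C, sub_zero, one_mul]
  have hgev : ∀ k, (g k).eval (z k) = (derivative q).eval (z k) := by
    intro k; rw [hgd1 k]; simp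
  have hgd2 : derivative (derivative q)
      = 2 * derivative (g i) + (X - Polynomial.C (z i)) * derivative (derivative (g i)) := by
    conv_lhs => rw [hgd1 i]
    rw [derivative_add, derivative_mul, derivative_sub, derivative_X, derivative_C,
      sub_zero, one_mul]
    ring
  have hgd3 : derivative (derivative (derivative q))
      = 3 * derivative (derivative (g i))
        + (X - Polynomial.C (z i)) * derivative (derivative (derivative (g i))) := by
    conv_lhs => rw [hgd2]
    simp only [derivative_add, derivative_mul, derivative_sub, derivative_X, derivative_C,
      derivative_ofNat, sub_zero, one_mul, zero_mul, zero_add]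
    ring
  -- evaluations at z i
  set Q1 : ℂ := (derivative q).eval (z i) with hQ1
  set Q2 : ℂ := (derivative (derivative q)).eval (z i) with hQ2
  set Q3 : ℂ := (derivative (derivative (derivative q))).eval (z i) with hQ3
  set Q4 : ℂ := (derivative (derivative (derivative (derivative q)))).eval (z i) with hQ4
  set Q5 : ℂ := (derivative (derivative (derivative (derivative (derivative q))))).eval (z i)
    with hQ5
  have hQ1ne : Q1 ≠ 0 := hq1 i
  have hdg : (derivative (g i)).eval (z i) = Q2 / 2 := by
    have h := congrArg (eval (z i)) hgd2
    simp only [eval_add, eval_mul, eval_sub, eval_X, eval_C, eval_ofNat, sub_self,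
      zero_mul, add_zero] at h
    rw [eq_div_iff (by norm_num : (2:ℂ) ≠ 0), hQ2, h]; ring
  have hddg : (derivative (derivative (g i))).eval (z i) = Q3 / 3 := by
    have h := congrArg (eval (z i)) hgd3
    simp only [eval_add, eval_mul, eval_sub, eval_X, eval_C, eval_ofNat, sub_self,
      zero_mul, add_zero] at h
    rw [eq_div_iff (by norm_num : (3:ℂ) ≠ 0), hQ3, h]; ring
  -- the C-values at i
  have hCi3 : C i 3 = Q2 / Q1 := by rw [hC, e3, e2]
  have hCi4 : C i 4 = Q3 / Q1 := by rw [hC, e4, e2]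
  have hCi5 : C i 5 = Q4 / Q1 := by rw [hC, e5, e2]
  have hCi6 : C i 6 = Q5 / Q1 := by rw [hC, e6, e2]
  have hC4j : ∀ j, C j 4 = (derivative (derivative (derivative q))).eval (z j)
      / (derivative q).eval (z j) := by
    intro j; rw [hC, e4, e2]
  -- the constants
  set a : Fin n → ℂ := fun k => C k 4 / (z i - z k) ^ 2 with hadef
  set b3 : ℂ := C i 4 with hb3
  set b2 : ℂ := C i 5 - C i 4 * C i 3 / 2 with hb2
  set b1 : ℂ := (C i 6 - b2 * C i 3 - b3 * C i 4 / 3) / 2 with hb1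
  have hCfour : C i 4 = Q3 / Q1 := by rw [← hb3]; exact hCi4
  -- the polynomial D
  set t : ℂ[X] := X - Polynomial.C (z i) with htdef
  set F : ℂ[X] := (∑ k ∈ univ.filter (fun k => k ≠ i), Polynomial.C (a k) * g k)
    + Polynomial.C b1 * g i with hF
  set G : ℂ[X] := Polynomial.C b2 * g i with hG
  set H : ℂ[X] := Polynomial.C b3 * g i - derivative (derivative (derivative q)) with hH
  set D : ℂ[X] := F * t ^ 2 + G * t + H with hD
  clear_value q g a b3 b2 b1 t F G H D Q1 Q2 Q3 Q4 Q5
  have ht' : derivative t = 1 := by rw [htdef]; simp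
  have hdert2 : derivative (t ^ 2) = 2 * t := by
    rw [pow_two, derivative_mul, ht', mul_one, one_mul]; ring
  have htev : t.eval (z i) = 0 := by rw [htdef]; simp
  have hD1 : derivative D = derivative F * t ^ 2 + (2 * F + derivative G) * t
      + (G + derivative H) := by
    rw [hD]
    simp only [derivative_add, derivative_mul, hdert2, ht', mul_one]
    ring
  have hD2 : derivative (derivative D) = derivative (derivative F) * t ^ 2
      + (4 * derivative F + derivative (derivative G)) * t
      + (2 * F + 2 * derivative G + derivative (derivative H)) := by
    rw [hD1]
    simp only [derivative_add, derivative_mul, hdert2, ht', mul_one, derivative_ofNat,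
      zero_mul, zero_add]
    ring
  -- evaluations of F, G, H and their derivatives at z i
  have hsum0 : (∑ k ∈ univ.filter (fun k => k ≠ i), Polynomial.C (a k) * g k).eval (z i)
      = 0 := by
    rw [eval_finset_sum]
    refine Finset.sum_eq_zero fun k hk => ?_
    have hk' : k ≠ i := (Finset.mem_filter.1 hk).2
    rw [eval_mul, hgzero k i hk', mul_zero]
  have hFzi : F.eval (z i) = b1 * Q1 := by
    rw [hF, eval_add, hsum0, zero_add, eval_mul, eval_C, hgev i, ← hQ1]
  have hGzi : G.eval (z i) = b2 * Q1 := by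
    rw [hG, eval_mul, eval_C, hgev i, ← hQ1]
  have hG' : derivative G = Polynomial.C b2 * derivative (g i) := by
    rw [hG, derivative_C_mul]
  have hH' : derivative H = Polynomial.C b3 * derivative (g i)
      - derivative (derivative (derivative (derivative q))) := by
    rw [hH, derivative_sub, derivative_C_mul]
  have hH'' : derivative (derivative H) = Polynomial.C b3 * derivative (derivative (g i))
      - derivative (derivative (derivative (derivative (derivative q)))) := by
    rw [hH', derivative_sub, derivative_C_mul]
  have hHzi : H.eval (z i) = b3 * Q1 - Q3 := by
    rw [hH, eval_sub, eval_mul, eval_C, hgev i, ← hQ1, ← hQ3]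
  -- the three root conditions at z i
  have hDzi : D.eval (z i) = 0 := by
    rw [hD]
    simp only [eval_add, eval_mul, eval_pow, htev, mul_zero, zero_mul, zero_add,
      zero_pow, ne_eq, OfNat.ofNat_ne_zero, not_false_eq_true, add_zero]
    rw [hHzi, hCi4]
    field_simp [hQ1ne]
    ring
  have hD'zi : (derivative D).eval (z i) = 0 := by
    have hval : (derivative D).eval (z i) = b2 * Q1 + (b3 * (Q2 / 2) - Q4) := by
      rw [hD1, hH']
      simp only [eval_add, eval_mul, eval_pow, eval_sub, eval_C, htev, mul_zero,
        zero_mul, zero_add, zero_pow, ne_eq, OfNat.ofNat_ne_zero, not_false_eq_true,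
        add_zero, hGzi, hdg, ← hQ4]
    rw [hval, hb2, hb3, hCfour, hCi3, hCi5]
    field_simp [hQ1ne]
    ring
  have hD''zi : (derivative (derivative D)).eval (z i) = 0 := by
    have hval : (derivative (derivative D)).eval (z i)
        = 2 * (b1 * Q1) + 2 * (b2 * (Q2 / 2)) + (b3 * (Q3 / 3) - Q5) := by
      rw [hD2, hH'', hG']
      simp only [eval_add, eval_mul, eval_pow, eval_sub, eval_C, eval_ofNat, htev,
        mul_zero, zero_mul, zero_add, zero_pow, ne_eq, OfNat.ofNat_ne_zero,
        not_false_eq_true, add_zero, hFzi, hdg, hddg, ← hQ5]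
    have h3 : C i 3 * Q1 = Q2 := by rw [hCi3, div_mul_cancel₀ _ hQ1ne]
    have h4 : C i 4 * Q1 = Q3 := by rw [hCfour, div_mul_cancel₀ _ hQ1ne]
    have h6 : C i 6 * Q1 = Q5 := by rw [hCi6, div_mul_cancel₀ _ hQ1ne]
    rw [hval, hb1, hb2, hb3]
    exact stmt_11_aux Q1 Q2 Q3 Q5 (C i 3) (C i 4) (C i 5) (C i 6) h3 h4 h6
  -- D vanishes at the other critical points
  have hDzj : ∀ j, j ≠ i → D.eval (z j) = 0 := by
    intro j hj
    have hzij : z i - z j ≠ 0 := sub_ne_zero.2 fun h => hj (hz h).symm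
    have hsumj : (∑ k ∈ univ.filter (fun k => k ≠ i), Polynomial.C (a k) * g k).eval (z j)
        = a j * (derivative q).eval (z j) := by
      rw [eval_finset_sum]
      rw [Finset.sum_eq_single_of_mem j (by simp [hj])]
      · rw [eval_mul, eval_C, hgev j]
      · intro k hk hkj
        rw [eval_mul, hgzero k j hkj, mul_zero]
    have hgij : (g i).eval (z j) = 0 := hgzero i j (fun h => hj h.symm)
    have haj : a j = ((derivative (derivative (derivative q))).eval (z j)
        / (derivative q).eval (z j)) / (z i - z j) ^ 2 := by
      simp only [hadef]
      rw [hC4j j]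
    rw [hD, hF, hG, hH, htdef]
    simp only [eval_add, eval_sub, eval_mul, eval_pow, eval_X, eval_C, hsumj, hgij,
      mul_zero, add_zero, zero_mul, zero_add]
    rw [haj]
    field_simp [hq1 j]
    ring
  -- degree bound for D
  have hgdegle : ∀ k, (Polynomial.C (a k) * g k).natDegree ≤ n - 1 := by
    intro k
    exact (natDegree_C_mul_le _ _).trans (le_of_eq (hgdeg k))
  have hFdeg : F.natDegree ≤ n - 1 := by
    rw [hF]
    refine (natDegree_add_le _ _).trans (max_le ?_ ?_)
    · exact natDegree_sum_le_of_forall_le _ _ fun k _ => hgdegle k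
    · exact (natDegree_C_mul_le _ _).trans (le_of_eq (hgdeg i))
  have htdeg : t.natDegree = 1 := by rw [htdef]; exact natDegree_X_sub_C _
  have hHdeg : H.natDegree ≤ n := by
    rw [hH]
    refine (natDegree_sub_le _ _).trans (max_le ?_ ?_)
    · exact ((natDegree_C_mul_le _ _).trans (le_of_eq (hgdeg i))).trans (Nat.sub_le n 1)
    · calc (derivative (derivative (derivative q))).natDegree
          ≤ (derivative (derivative q)).natDegree := natDegree_derivative_le _ |>.trans
            (Nat.sub_le _ 1)
        _ ≤ (derivative q).natDegree := natDegree_derivative_le _ |>.trans (Nat.sub_le _ 1)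
        _ ≤ q.natDegree := natDegree_derivative_le _ |>.trans (Nat.sub_le _ 1)
        _ = n := hqdeg
  have hDdeg : D.natDegree ≤ n + 1 := by
    rw [hD]
    refine (natDegree_add_le _ _).trans (max_le ((natDegree_add_le _ _).trans
      (max_le ?_ ?_)) (hHdeg.trans (by omega)))
    · refine (natDegree_mul_le).trans ?_
      have : (t ^ 2).natDegree ≤ 2 := by
        refine (natDegree_pow _ _).le.trans ?_
        rw [htdeg]
      omega
    · refine (natDegree_mul_le).trans ?_
      have := hFdeg
      have hGd : G.natDegree ≤ n - 1 := by
        rw [hG]; exact (natDegree_C_mul_le _ _).trans (le_of_eq (hgdeg i))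
      omega
  -- triple root at z i : D = t^3 * D3
  have ht3 : ∃ D3 : ℂ[X], D = t ^ 3 * D3 := by
    have hdvd1 : t ∣ D := by
      rw [htdef]; exact dvd_iff_isRoot.2 hDzi
    obtain ⟨D1, hD1'⟩ := hdvd1
    have hD1zi : D1.eval (z i) = 0 := by
      have h := congrArg (eval (z i)) (by rw [hD1'] : derivative D = derivative (t * D1))
      rw [derivative_mul, ht', one_mul, eval_add, eval_mul, htev, zero_mul, add_zero,
        hD'zi] at h
      exact h.symm
    obtain ⟨D2, hD2'⟩ : t ∣ D1 := by rw [htdef]; exact dvd_iff_isRoot.2 hD1zi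
    have hDt2 : D = t ^ 2 * D2 := by rw [hD1', hD2']; ring
    have hd1 : derivative D = 2 * t * D2 + t ^ 2 * derivative D2 := by
      rw [hDt2]
      simp only [derivative_mul, hdert2, ht', mul_one]
    have hd2 : derivative (derivative D)
        = 2 * D2 + 4 * t * derivative D2 + t ^ 2 * derivative (derivative D2) := by
      rw [hd1]
      simp only [derivative_add, derivative_mul, hdert2, ht', mul_one, derivative_ofNat,
        zero_mul, zero_add]
      ring
    have hD2zi : D2.eval (z i) = 0 := by
      have h := congrArg (eval (z i)) hd2
      rw [hD''zi] at h
      simp [htev] at h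
      exact h
    obtain ⟨D3, hD3'⟩ : t ∣ D2 := by rw [htdef]; exact dvd_iff_isRoot.2 hD2zi
    exact ⟨D3, by rw [hDt2, hD3']; ring⟩
  -- D must vanish identically
  have hDzero : D = 0 := by
    by_contra hne
    obtain ⟨D3, h3⟩ := ht3
    have hD3ne : D3 ≠ 0 := fun h => hne (by rw [h3, h, mul_zero])
    have hmt : (t ^ 3).Monic := by rw [htdef]; exact (monic_X_sub_C (z i)).pow 3
    have hdeg3 : D.natDegree = 3 + D3.natDegree := by
      rw [h3, hmt.natDegree_mul' hD3ne, htdef, natDegree_pow, natDegree_X_sub_C]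
    have hroots3 : ∀ j, j ≠ i → D3.eval (z j) = 0 := by
      intro j hj
      have h := hDzj j hj
      rw [h3, eval_mul, eval_pow, htdef] at h
      simp only [eval_sub, eval_X, eval_C] at h
      have hne' : (z j - z i) ^ 3 ≠ 0 :=
        pow_ne_zero _ (sub_ne_zero.2 fun hzz => hj (hz hzz))
      exact (mul_eq_zero.1 h).resolve_left hne'
    have hsub : (univ.filter (fun k => k ≠ i)).image z ⊆ D3.roots.toFinset := by
      intro x hx
      obtain ⟨j, hj, rfl⟩ := Finset.mem_image.1 hx
      rw [Multiset.mem_toFinset, mem_roots hD3ne]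
      exact hroots3 j (Finset.mem_filter.1 hj).2
    have hcard1 : ((univ.filter (fun k => k ≠ i)).image z).card = n - 1 := by
      rw [Finset.card_image_of_injective _ hz, Finset.filter_ne',
        Finset.card_erase_of_mem (Finset.mem_univ i), Finset.card_univ, Fintype.card_fin]
    have hcard2 : n - 1 ≤ D3.natDegree := by
      calc n - 1 = ((univ.filter (fun k => k ≠ i)).image z).card := hcard1.symm
        _ ≤ D3.roots.toFinset.card := Finset.card_le_card hsub
        _ ≤ Multiset.card D3.roots := D3.roots.toFinset_card_le
        _ ≤ D3.natDegree := D3.card_roots'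
    omega
  -- extract the coefficient relation
  have hFcoeff : F.coeff (n - 1) = 0 := by
    by_cases hFz : F = 0
    · simp [hFz]
    have hsum : F * t ^ 2 = -(G * t + H) := by
      have h0 : F * t ^ 2 + (G * t + H) = 0 := by
        rw [← add_assoc, ← hD, hDzero]
      linear_combination h0
    have hmt2 : (t ^ 2).Monic := by rw [htdef]; exact (monic_X_sub_C (z i)).pow 2
    have hdegFt : (F * t ^ 2).natDegree = F.natDegree + 2 := by
      rw [mul_comm, hmt2.natDegree_mul' hFz, htdef, natDegree_pow, natDegree_X_sub_C]
      omega
    have hdegR : (-(G * t + H)).natDegree ≤ n := by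
      rw [natDegree_neg]
      refine (natDegree_add_le _ _).trans (max_le ?_ hHdeg)
      refine (natDegree_mul_le).trans ?_
      have hGd : G.natDegree ≤ n - 1 := by
        rw [hG]; exact (natDegree_C_mul_le _ _).trans (le_of_eq (hgdeg i))
      omega
    have hFd : F.natDegree + 2 ≤ n := by
      rw [← hdegFt, hsum]; exact hdegR
    exact coeff_eq_zero_of_natDegree_lt (by omega)
  have hcoeffF : F.coeff (n - 1)
      = ((∑ k ∈ univ.filter (fun k => k ≠ i), a k) + b1) * ((n:ℂ) + 1) := by
    rw [hF, coeff_add, finset_sum_coeff]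
    have hterm : ∀ k ∈ univ.filter (fun k => k ≠ i),
        (Polynomial.C (a k) * g k).coeff (n - 1) = a k * ((n:ℂ) + 1) := by
      intro k _
      rw [coeff_C_mul, hglead k]
    rw [Finset.sum_congr rfl hterm, coeff_C_mul, hglead i, ← Finset.sum_mul]
    ring
  have hsumA : (∑ k ∈ univ.filter (fun k => k ≠ i), a k) = -b1 := by
    have h := hcoeffF
    rw [hFcoeff] at h
    have h2 : (∑ k ∈ univ.filter (fun k => k ≠ i), a k) + b1 = 0 :=
      (mul_eq_zero.1 h.symm).resolve_right hn1
    linear_combination h2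
  -- conclude
  have hfin : (filter (fun k => k ≠ i) univ).sum a = -b1 := hsumA
  rw [hfin, hb1, hb2, hb3]
  ring
end

section
/- For every pair of distinct indices i, j ∈ {1,…,n} the following identity holds: ∑_{k≠i,j} 1/(z_{ik}·z_{jk}²) = −3/z_{ij}³ + (C_{i3} − C_{j3})/(2z_{ij}²) + (1/z_{ij})·(C_{j3}²/4 − C_{j4}/3). -/
open Polynomial Finset


lemma deriv_prod_X_sub {ι : Type*} [DecidableEq ι] (z : ι → ℂ) (s : Finset ι) :
    derivative (∏ k ∈ s, (X - Polynomial.C (z k)))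
      = ∑ m ∈ s, ∏ k ∈ s.erase m, (X - Polynomial.C (z k)) := by
  induction s using Finset.induction_on with
  | empty => simp
  | insert a s ha ih =>
    rw [Finset.prod_insert ha, derivative_mul, derivative_X_sub_C, one_mul, ih,
      Finset.sum_insert ha, Finset.erase_insert ha, Finset.mul_sum]
    congr 1
    refine Finset.sum_congr rfl fun m hm => ?_
    rw [Finset.erase_insert_of_ne (by rintro rfl; exact ha hm),
      Finset.prod_insert (fun h => ha (Finset.mem_of_mem_erase h))]

lemma aux_evals {n : ℕ} (z : Fin n → ℂ) (hz : Function.Injective z) (c : ℂ) (q : ℂ[X])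
    (hfac : q = Polynomial.C c * ∏ k, (X - Polynomial.C (z k))) (i : Fin n) :
    (derivative q).eval (z i) = c * ∏ k ∈ univ.erase i, (z i - z k) ∧
    (derivative (derivative q)).eval (z i)
      = 2 * (c * ∏ k ∈ univ.erase i, (z i - z k)) * (∑ m ∈ univ.erase i, (z i - z m)⁻¹) ∧
    (derivative (derivative (derivative q))).eval (z i)
      = 3 * (c * ∏ k ∈ univ.erase i, (z i - z k)) *
        (∑ m ∈ univ.erase i, ∑ l ∈ (univ.erase i).erase m, (z i - z m)⁻¹ * (z i - z l)⁻¹) := by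
  classical
  set s : Finset (Fin n) := univ.erase i with hs
  set F : ℂ[X] := ∏ k ∈ s, (X - Polynomial.C (z k)) with hF
  have hne : ∀ m ∈ s, z i - z m ≠ 0 := fun m hm =>
    sub_ne_zero.2 (fun h => (Finset.mem_erase.1 hm).1 (hz h).symm)
  have hqF : q = Polynomial.C c * ((X - Polynomial.C (z i)) * F) := by
    rw [hfac, ← Finset.mul_prod_erase _ _ (Finset.mem_univ i)]
  have h1 : derivative q
      = Polynomial.C c * (F + (X - Polynomial.C (z i)) * derivative F) := by
    rw [hqF, derivative_C_mul, derivative_mul, derivative_X_sub_C, one_mul]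
  have h2 : derivative (derivative q)
      = Polynomial.C c * (2 * derivative F
          + (X - Polynomial.C (z i)) * derivative (derivative F)) := by
    rw [h1, derivative_C_mul, derivative_add, derivative_mul, derivative_X_sub_C, one_mul]
    ring
  have h3 : derivative (derivative (derivative q))
      = Polynomial.C c * (3 * derivative (derivative F)
          + (X - Polynomial.C (z i)) * derivative (derivative (derivative F))) := by
    rw [h2, derivative_C_mul, derivative_add,
      show (2 : ℂ[X]) * derivative F = derivative F + derivative F from by ring,
      derivative_add, derivative_mul, derivative_X_sub_C, one_mul]
    ring
  -- evaluation of F and its derivatives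
  have hevF : F.eval (z i) = ∏ k ∈ s, (z i - z k) := by simp [hF, eval_prod]
  have hAm : ∀ m ∈ s, (∏ k ∈ s.erase m, (z i - z k))
      = (∏ k ∈ s, (z i - z k)) * (z i - z m)⁻¹ := by
    intro m hm
    rw [← Finset.mul_prod_erase _ _ hm, mul_comm (z i - z m), mul_assoc,
      mul_inv_cancel₀ (hne m hm), mul_one]
  have hevF1 : (derivative F).eval (z i)
      = (∏ k ∈ s, (z i - z k)) * ∑ m ∈ s, (z i - z m)⁻¹ := by
    rw [hF, deriv_prod_X_sub]
    rw [eval_finset_sum, Finset.mul_sum]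
    refine Finset.sum_congr rfl fun m hm => ?_
    rw [eval_prod]
    simp only [eval_sub, eval_X, eval_C]
    exact hAm m hm
  have hevF2 : (derivative (derivative F)).eval (z i)
      = (∏ k ∈ s, (z i - z k)) *
        ∑ m ∈ s, ∑ l ∈ s.erase m, (z i - z m)⁻¹ * (z i - z l)⁻¹ := by
    rw [hF, deriv_prod_X_sub, derivative_sum]
    rw [eval_finset_sum, Finset.mul_sum]
    refine Finset.sum_congr rfl fun m hm => ?_
    rw [deriv_prod_X_sub, eval_finset_sum, Finset.mul_sum]
    refine Finset.sum_congr rfl fun l hl => ?_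
    rw [eval_prod]
    simp only [eval_sub, eval_X, eval_C]
    have e1 : (z i - z l) * ∏ x ∈ (s.erase m).erase l, (z i - z x)
        = ∏ x ∈ s.erase m, (z i - z x) := Finset.mul_prod_erase (s.erase m) (fun x => z i - z x) hl
    have hlne := hne l (Finset.mem_of_mem_erase hl)
    calc ∏ x ∈ (s.erase m).erase l, (z i - z x)
        = (∏ x ∈ s.erase m, (z i - z x)) * (z i - z l)⁻¹ := by
          rw [← e1, mul_comm (z i - z l), mul_assoc, mul_inv_cancel₀ hlne, mul_one]
      _ = (∏ k ∈ s, (z i - z k)) * ((z i - z m)⁻¹ * (z i - z l)⁻¹) := by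
          rw [hAm m hm]; ring
  refine ⟨?_, ?_, ?_⟩
  · rw [h1]; simp [hevF]
  · rw [h2]; simp only [eval_mul, eval_add, eval_sub, eval_X, eval_C, sub_self, zero_mul,
      add_zero, eval_ofNat]
    rw [hevF1]
    ring
  · rw [h3]; simp only [eval_mul, eval_add, eval_sub, eval_X, eval_C, sub_self, zero_mul,
      add_zero, eval_ofNat]
    rw [hevF2]
    ring

lemma key_term (a b d : ℂ) (ha : a ≠ 0) (hb : b ≠ 0) (hd : d ≠ 0) (h : d = a - b) :
    1 / (a * b ^ 2) = (d⁻¹) ^ 2 * a⁻¹ - (d⁻¹) ^ 2 * b⁻¹ + d⁻¹ * (b⁻¹) ^ 2 := by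
  have hsub : b⁻¹ - a⁻¹ = d * (a⁻¹ * b⁻¹) := by
    rw [h, sub_mul, ← mul_assoc, mul_inv_cancel₀ ha, one_mul,
      mul_comm a⁻¹ b⁻¹, ← mul_assoc, mul_inv_cancel₀ hb, one_mul]
  have h3 : d⁻¹ * d = 1 := inv_mul_cancel₀ hd
  calc 1 / (a * b ^ 2) = (d⁻¹ * d) * (a⁻¹ * (b⁻¹) ^ 2) := by
        rw [h3, one_mul, one_div, mul_inv, ← inv_pow]
    _ = d⁻¹ * (b⁻¹ * (d * (a⁻¹ * b⁻¹))) := by ring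
    _ = d⁻¹ * (b⁻¹ * (b⁻¹ - a⁻¹)) := by rw [hsub]
    _ = d⁻¹ * (b⁻¹) ^ 2 - 1 * (d⁻¹ * (a⁻¹ * b⁻¹)) := by ring
    _ = d⁻¹ * (b⁻¹) ^ 2 - (d⁻¹ * d) * (d⁻¹ * (a⁻¹ * b⁻¹)) := by rw [h3]
    _ = d⁻¹ * (b⁻¹) ^ 2 - (d⁻¹) ^ 2 * (d * (a⁻¹ * b⁻¹)) := by ring
    _ = d⁻¹ * (b⁻¹) ^ 2 - (d⁻¹) ^ 2 * (b⁻¹ - a⁻¹) := by rw [hsub]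
    _ = (d⁻¹) ^ 2 * a⁻¹ - (d⁻¹) ^ 2 * b⁻¹ + d⁻¹ * (b⁻¹) ^ 2 := by ring

/-- For distinct indices `i ≠ j`,
`∑_{{k≠i,j}} 1/(z_ik·z_jk²) = −3/z_ij³ + (C_i3 − C_j3)/(2z_ij²)
  + (1/z_ij)·(C_j3²/4 − C_j4/3)`. -/
theorem stmt_12 (n : ℕ) (hn : 1 ≤ n) (p : Polynomial ℂ)
    (hp : p.Monic) (hdeg : p.natDegree = n + 1)
    (z : Fin n → ℂ) (hz : Function.Injective z)
    (hcrit : ∀ i, (derivative p).eval (z i) = 0)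
    (hnd : ∀ i, (derivative^[2] p).eval (z i) ≠ 0)
    (C : Fin n → ℕ → ℂ)
    (hC : ∀ i k, C i k = ((derivative^[k] p).eval (z i)) / ((derivative^[2] p).eval (z i)))
    (i j : Fin n) (hij : i ≠ j) :
    ∑ k ∈ univ.filter (fun k => k ≠ i ∧ k ≠ j),
        1 / ((z i - z k) * (z j - z k) ^ 2)
      = -3 / (z i - z j) ^ 3 + (C i 3 - C j 3) / (2 * (z i - z j) ^ 2)
        + (1 / (z i - z j)) * ((C j 3) ^ 2 / 4 - C j 4 / 3) := by
  classical
  set q : ℂ[X] := derivative p with hqdef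
  -- basic facts about q
  have hcoeff : q.coeff n = (n + 1 : ℂ) := by
    rw [hqdef, coeff_derivative, show n + 1 = p.natDegree from hdeg.symm,
      hp.coeff_natDegree, one_mul]
  have hcne : ((n : ℂ) + 1) ≠ 0 := by
    intro h
    have : ((n + 1 : ℕ) : ℂ) = 0 := by push_cast; linear_combination h
    exact Nat.succ_ne_zero n (Nat.cast_eq_zero.1 this)
  have hq0 : q ≠ 0 := by
    intro h
    rw [h, coeff_zero] at hcoeff
    exact hcne hcoeff.symm
  have hdq : q.natDegree = n := by
    refine le_antisymm ?_ (le_natDegree_of_ne_zero (hcoeff ▸ hcne))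
    calc q.natDegree ≤ p.natDegree - 1 := natDegree_derivative_le p
      _ = n := by omega
  -- roots of q
  have hM : (Multiset.map z univ.val) ≤ q.roots := by
    refine Multiset.le_iff_count.2 fun a => ?_
    by_cases ha : a ∈ Multiset.map z univ.val
    · obtain ⟨k, _, hk⟩ := Multiset.mem_map.1 ha
      have h1 : Multiset.count a (Multiset.map z univ.val) ≤ 1 :=
        Multiset.nodup_iff_count_le_one.1 (univ.nodup.map hz) a
      have h2 : 1 ≤ q.roots.count a := by
        rw [count_roots]
        exact (rootMultiplicity_pos hq0).2 (by rw [← hk]; exact hcrit k)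
      omega
    · rw [Multiset.count_eq_zero_of_notMem ha]
      exact Nat.zero_le _
  have hroots : q.roots = Multiset.map z univ.val := by
    refine (Multiset.eq_of_le_of_card_le hM ?_).symm
    rw [Multiset.card_map]
    simpa [hdq] using q.card_roots'
  have hcard : Multiset.card q.roots = q.natDegree := by
    rw [hroots, Multiset.card_map, hdq]; simp
  set c : ℂ := q.leadingCoeff with hcdef
  have hc : c ≠ 0 := leadingCoeff_ne_zero.2 hq0
  have hfac : q = Polynomial.C c * ∏ k, (X - Polynomial.C (z k)) := by
    conv_lhs => rw [← C_leadingCoeff_mul_prod_multiset_X_sub_C hcard]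
    rw [hroots, Multiset.map_map]
    rfl
  -- formulas for C i 3 and C i 4
  have hAne : ∀ i : Fin n, (∏ k ∈ univ.erase i, (z i - z k)) ≠ 0 := by
    intro i
    refine Finset.prod_ne_zero_iff.2 fun k hk => ?_
    exact sub_ne_zero.2 fun h => (Finset.mem_erase.1 hk).1 (hz h).symm
  have hC3 : ∀ i : Fin n, C i 3 = 2 * ∑ m ∈ univ.erase i, (z i - z m)⁻¹ := by
    intro i
    obtain ⟨e1, e2, _⟩ := aux_evals z hz c q hfac i
    rw [hC i 3, show derivative^[3] p = derivative (derivative q) from rfl,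
      show derivative^[2] p = derivative q from rfl, e2, e1]
    rw [mul_comm 2 (c * ∏ k ∈ univ.erase i, (z i - z k)), mul_assoc, mul_comm,
      mul_div_assoc, div_self (mul_ne_zero hc (hAne i)), mul_one]
  have hC4 : ∀ i : Fin n, C i 4 = 3 * ((∑ m ∈ univ.erase i, (z i - z m)⁻¹) ^ 2
      - ∑ m ∈ univ.erase i, ((z i - z m)⁻¹) ^ 2) := by
    intro i
    obtain ⟨e1, _, e3⟩ := aux_evals z hz c q hfac i
    rw [hC i 4, show derivative^[4] p = derivative (derivative (derivative q)) from rfl,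
      show derivative^[2] p = derivative q from rfl, e3, e1]
    have hT : (∑ m ∈ univ.erase i, ∑ l ∈ (univ.erase i).erase m,
          (z i - z m)⁻¹ * (z i - z l)⁻¹)
        = (∑ m ∈ univ.erase i, (z i - z m)⁻¹) ^ 2
          - ∑ m ∈ univ.erase i, ((z i - z m)⁻¹) ^ 2 := by
      have step : ∀ m ∈ univ.erase i, (∑ l ∈ (univ.erase i).erase m,
            (z i - z m)⁻¹ * (z i - z l)⁻¹)
          = (z i - z m)⁻¹ * (∑ l ∈ univ.erase i, (z i - z l)⁻¹) - ((z i - z m)⁻¹) ^ 2 := by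
        intro m hm
        rw [← Finset.mul_sum, Finset.sum_erase_eq_sub hm, mul_sub]
        ring
      rw [Finset.sum_congr rfl step, Finset.sum_sub_distrib, ← Finset.sum_mul]
      ring
    rw [hT]
    rw [mul_comm 3 (c * ∏ k ∈ univ.erase i, (z i - z k)), mul_assoc, mul_comm,
      mul_div_assoc, div_self (mul_ne_zero hc (hAne i)), mul_one]
  -- final algebra
  have hd : z i - z j ≠ 0 := sub_ne_zero.2 (hz.ne hij)
  set t : Finset (Fin n) := univ.filter (fun k => k ≠ i ∧ k ≠ j) with ht
  have hset1 : (univ.erase i).erase j = t := by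
    ext k; simp [ht, Finset.mem_erase, and_comm]
  have hset2 : (univ.erase j).erase i = t := by
    ext k; simp [ht, Finset.mem_erase, and_comm]
  have hjmem : j ∈ univ.erase i := Finset.mem_erase.2 ⟨hij.symm, Finset.mem_univ j⟩
  have himem : i ∈ univ.erase j := Finset.mem_erase.2 ⟨hij, Finset.mem_univ i⟩
  have hS1 : ∑ m ∈ univ.erase i, (z i - z m)⁻¹
      = (z i - z j)⁻¹ + ∑ k ∈ t, (z i - z k)⁻¹ := by
    rw [← Finset.add_sum_erase _ _ hjmem, hset1]
  have hS2 : ∑ m ∈ univ.erase j, (z j - z m)⁻¹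
      = -(z i - z j)⁻¹ + ∑ k ∈ t, (z j - z k)⁻¹ := by
    rw [← Finset.add_sum_erase _ _ himem, hset2,
      show z j - z i = -(z i - z j) from by ring, inv_neg]
  have hS3 : ∑ m ∈ univ.erase j, ((z j - z m)⁻¹) ^ 2
      = ((z i - z j)⁻¹) ^ 2 + ∑ k ∈ t, ((z j - z k)⁻¹) ^ 2 := by
    rw [← Finset.add_sum_erase _ _ himem, hset2,
      show z j - z i = -(z i - z j) from by ring, inv_neg]
    ring_nf
  have hC3i : C i 3 = 2 * ((z i - z j)⁻¹ + ∑ k ∈ t, (z i - z k)⁻¹) := by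
    rw [hC3 i, hS1]
  have hC3j : C j 3 = 2 * (-(z i - z j)⁻¹ + ∑ k ∈ t, (z j - z k)⁻¹) := by
    rw [hC3 j, hS2]
  have hC4j : C j 4 = 3 * ((-(z i - z j)⁻¹ + ∑ k ∈ t, (z j - z k)⁻¹) ^ 2
      - (((z i - z j)⁻¹) ^ 2 + ∑ k ∈ t, ((z j - z k)⁻¹) ^ 2)) := by
    rw [hC4 j, hS2, hS3]
  rw [hC3i, hC3j, hC4j]
  trans (∑ k ∈ t, (((z i - z j)⁻¹) ^ 2 * (z i - z k)⁻¹
      - ((z i - z j)⁻¹) ^ 2 * (z j - z k)⁻¹ + (z i - z j)⁻¹ * ((z j - z k)⁻¹) ^ 2))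
  · refine Finset.sum_congr rfl fun k hk => ?_
    obtain ⟨hki, hkj⟩ := (Finset.mem_filter.1 hk).2
    have hw : z i - z k ≠ 0 := sub_ne_zero.2 fun h => hki (hz h.symm)
    have hv : z j - z k ≠ 0 := sub_ne_zero.2 fun h => hkj (hz h.symm)
    exact key_term _ _ _ hw hv hd (by ring)
  · rw [Finset.sum_add_distrib, Finset.sum_sub_distrib,
      ← Finset.mul_sum, ← Finset.mul_sum, ← Finset.mul_sum]
    simp only [div_eq_mul_inv, one_div, mul_inv, ← inv_pow]
    ring
end

section
/- For every pair of distinct indices i, j ∈ {1,…,n} the following identity holds: ∑_{k≠i,j} 1/(z_{ik}²·z_{jk}²) = −6/z_{ij}⁴ + (C_{i3} − C_{j3})/z_{ij}³ + (3C_{i3}² + 3C_{j3}² − 4C_{i4} − 4C_{j4})/(12z_{ij}²). -/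
set_option maxHeartbeats 1000000

open Polynomial Finset

lemma aux_eval_deriv_prod {ι : Type*} [DecidableEq ι] (s : Finset ι) (w : ι → ℂ) (a : ℂ)
    (h : ∀ k ∈ s, a - w k ≠ 0) :
    eval a (derivative (∏ k ∈ s, (X - Polynomial.C (w k)))) =
      (∏ k ∈ s, (a - w k)) * ∑ k ∈ s, 1 / (a - w k) := by
  induction s using Finset.induction_on with
  | empty => simp
  | @insert b s hb ih =>
    have hb0 : a - w b ≠ 0 := h b (mem_insert_self _ _)
    have hs : ∀ k ∈ s, a - w k ≠ 0 := fun k hk => h k (mem_insert_of_mem hk)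
    rw [Finset.prod_insert hb, derivative_mul, derivative_X_sub_C]
    simp only [eval_add, eval_mul, eval_one, eval_sub, eval_X, eval_C, one_mul]
    rw [ih hs, eval_prod]
    simp only [eval_sub, eval_X, eval_C]
    rw [Finset.prod_insert hb, Finset.sum_insert hb]
    field_simp

lemma aux_eval_deriv2_prod {ι : Type*} [DecidableEq ι] (s : Finset ι) (w : ι → ℂ) (a : ℂ)
    (h : ∀ k ∈ s, a - w k ≠ 0) :
    eval a (derivative (derivative (∏ k ∈ s, (X - Polynomial.C (w k))))) =
      (∏ k ∈ s, (a - w k)) *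
        ((∑ k ∈ s, 1 / (a - w k)) ^ 2 - ∑ k ∈ s, 1 / (a - w k) ^ 2) := by
  induction s using Finset.induction_on with
  | empty => simp
  | @insert b s hb ih =>
    have hb0 : a - w b ≠ 0 := h b (mem_insert_self _ _)
    have hs : ∀ k ∈ s, a - w k ≠ 0 := fun k hk => h k (mem_insert_of_mem hk)
    rw [Finset.prod_insert hb]
    simp only [derivative_mul, derivative_add, derivative_X_sub_C, derivative_one]
    simp only [eval_add, eval_mul, eval_one, eval_sub, eval_X, eval_C, one_mul, eval_zero]
    rw [ih hs, aux_eval_deriv_prod s w a hs, eval_prod]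
    simp only [eval_sub, eval_X, eval_C]
    rw [Finset.prod_insert hb, Finset.sum_insert hb, Finset.sum_insert hb]
    field_simp
    ring

lemma aux_frac_id (u v d : ℂ) (hu : u ≠ 0) (hv : v ≠ 0) (hd : d ≠ 0) (h : d = u - v) :
    1 / (u ^ 2 * v ^ 2)
      = (1 / d ^ 2) * (1 / u ^ 2 + 1 / v ^ 2) + (2 / d ^ 3) * (1 / u - 1 / v) := by
  field_simp
  ring_nf
  field_simp
  rw [h]
  ring

lemma aux_final_id (d T1i T1j T2i T2j : ℂ) (hd : d ≠ 0) :
    (1 / d ^ 2) * (T2i + T2j) + (2 / d ^ 3) * (T1i - T1j)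
      = -6 / d ^ 4 + (2 * (1 / d + T1i) - 2 * (1 / -d + T1j)) / d ^ 3
        + (3 * (2 * (1 / d + T1i)) ^ 2 + 3 * (2 * (1 / -d + T1j)) ^ 2
            - 4 * (3 * ((1 / d + T1i) ^ 2 - (1 / d ^ 2 + T2i)))
            - 4 * (3 * ((1 / -d + T1j) ^ 2 - (1 / (-d) ^ 2 + T2j))))
            / (12 * d ^ 2) := by
  field_simp
  ring_nf

/-- For distinct indices `i ≠ j` (residue formula R₅(2,2)),
`∑_{{k≠i,j}} 1/(z_ik²·z_jk²) = −6/z_ij⁴ + (C_i3 − C_j3)/z_ij³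
  + (3C_i3² + 3C_j3² − 4C_i4 − 4C_j4)/(12z_ij²)`. -/
theorem stmt_13 (n : ℕ) (hn : 1 ≤ n) (p : Polynomial ℂ)
    (hp : p.Monic) (hdeg : p.natDegree = n + 1)
    (z : Fin n → ℂ) (hz : Function.Injective z)
    (hcrit : ∀ i, (derivative p).eval (z i) = 0)
    (hnd : ∀ i, (derivative^[2] p).eval (z i) ≠ 0)
    (C : Fin n → ℕ → ℂ)
    (hC : ∀ i k, C i k = ((derivative^[k] p).eval (z i)) / ((derivative^[2] p).eval (z i)))
    (i j : Fin n) (hij : i ≠ j) :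
    ∑ k ∈ univ.filter (fun k => k ≠ i ∧ k ≠ j),
        1 / ((z i - z k) ^ 2 * (z j - z k) ^ 2)
      = -6 / (z i - z j) ^ 4 + (C i 3 - C j 3) / (z i - z j) ^ 3
        + (3 * (C i 3) ^ 2 + 3 * (C j 3) ^ 2 - 4 * C i 4 - 4 * C j 4)
            / (12 * (z i - z j) ^ 2) := by
  classical
  set c : ℂ := (n : ℂ) + 1 with hc_def
  have hc : c ≠ 0 := Nat.cast_add_one_ne_zero n
  set Q : Polynomial ℂ := ∏ k : Fin n, (X - Polynomial.C (z k)) with hQ_def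
  have hQmonic : Q.Monic := monic_prod_of_monic _ _ fun k _ => monic_X_sub_C _
  have hQdeg : Q.natDegree = n := by
    rw [hQ_def, natDegree_prod _ _ fun k _ => X_sub_C_ne_zero _]
    simp
  -- derivative p = C c * Q
  have hprod : derivative p = Polynomial.C c * Q := by
    have hco : ∀ m : ℕ, n ≤ m → (derivative p - Polynomial.C c * Q).coeff m = 0 := by
      intro m hm
      rcases eq_or_lt_of_le hm with rfl | hlt
      · have h1 : p.coeff (n + 1) = 1 := by rw [← hdeg]; exact hp.coeff_natDegree
        have h2 : Q.coeff n = 1 := by rw [← hQdeg]; exact hQmonic.coeff_natDegree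
        rw [coeff_sub, coeff_derivative, coeff_C_mul, h1, h2, hc_def]
        ring
      · have h1 : p.coeff (m + 1) = 0 :=
          coeff_eq_zero_of_natDegree_lt (by omega)
        have h2 : Q.coeff m = 0 := coeff_eq_zero_of_natDegree_lt (by omega)
        simp [coeff_sub, coeff_derivative, coeff_C_mul, h1, h2]
    have hdle : (derivative p - Polynomial.C c * Q).natDegree ≤ n - 1 :=
      natDegree_le_iff_coeff_eq_zero.mpr fun N hN => hco N (by omega)
    have hzero : derivative p - Polynomial.C c * Q = 0 := by
      apply Polynomial.eq_zero_of_natDegree_lt_card_of_eval_eq_zero _ hz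
      · intro k
        have : eval (z k) Q = 0 := by
          rw [hQ_def, eval_prod]
          exact Finset.prod_eq_zero (mem_univ k) (by simp)
        simp [hcrit k, this]
      · simpa [Fintype.card_fin] using lt_of_le_of_lt hdle (by omega)
    exact sub_eq_zero.mp hzero
  have it2 : derivative^[2] p = derivative (derivative p) := rfl
  have it3 : derivative^[3] p = derivative (derivative (derivative p)) := rfl
  have it4 : derivative^[4] p = derivative (derivative (derivative (derivative p))) := rfl
  have key : ∀ m : Fin n,
      C m 3 = 2 * ∑ k ∈ univ.erase m, 1 / (z m - z k) ∧
      C m 4 = 3 * ((∑ k ∈ univ.erase m, 1 / (z m - z k)) ^ 2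
                 - ∑ k ∈ univ.erase m, 1 / (z m - z k) ^ 2) := by
    intro m
    set P : Polynomial ℂ := ∏ k ∈ univ.erase m, (X - Polynomial.C (z k)) with hP_def
    have hsplit : Q = (X - Polynomial.C (z m)) * P :=
      (Finset.mul_prod_erase univ _ (mem_univ m)).symm
    have hne : ∀ k ∈ univ.erase m, z m - z k ≠ 0 := fun k hk =>
      sub_ne_zero.mpr fun h => (mem_erase.mp hk).1 (hz h.symm)
    have hPa : eval (z m) P = ∏ k ∈ univ.erase m, (z m - z k) := by
      simp [hP_def, eval_prod]
    have hPane : eval (z m) P ≠ 0 := by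
      rw [hPa]; exact Finset.prod_ne_zero_iff.mpr hne
    have hdp : derivative p = Polynomial.C c * ((X - Polynomial.C (z m)) * P) := by
      rw [hprod, hsplit]
    have h2 : derivative (derivative p)
        = Polynomial.C c * (P + (X - Polynomial.C (z m)) * derivative P) := by
      rw [hdp]; simp only [derivative_mul, derivative_C, derivative_X_sub_C]; ring
    have h3 : derivative (derivative (derivative p))
        = Polynomial.C c * (2 * derivative P
            + (X - Polynomial.C (z m)) * derivative (derivative P)) := by
      rw [h2]
      simp only [derivative_mul, derivative_add, derivative_C, derivative_X_sub_C]
      ring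
    have h4 : derivative (derivative (derivative (derivative p)))
        = Polynomial.C c * (3 * derivative (derivative P)
            + (X - Polynomial.C (z m)) * derivative (derivative (derivative P))) := by
      rw [h3]
      simp only [derivative_mul, derivative_add, derivative_C, derivative_X_sub_C,
        derivative_ofNat]
      ring
    have e2 : eval (z m) (derivative^[2] p) = c * eval (z m) P := by
      rw [it2, h2]; simp
    have e3 : eval (z m) (derivative^[3] p) = c * (2 * eval (z m) (derivative P)) := by
      rw [it3, h3]; simp
    have e4 : eval (z m) (derivative^[4] p)
        = c * (3 * eval (z m) (derivative (derivative P))) := by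
      rw [it4, h4]; simp
    have ed1 : eval (z m) (derivative P)
        = (∏ k ∈ univ.erase m, (z m - z k)) * ∑ k ∈ univ.erase m, 1 / (z m - z k) :=
      aux_eval_deriv_prod _ _ _ hne
    have ed2 : eval (z m) (derivative (derivative P))
        = (∏ k ∈ univ.erase m, (z m - z k)) *
            ((∑ k ∈ univ.erase m, 1 / (z m - z k)) ^ 2
              - ∑ k ∈ univ.erase m, 1 / (z m - z k) ^ 2) :=
      aux_eval_deriv2_prod _ _ _ hne
    have hPne : (∏ k ∈ univ.erase m, (z m - z k)) ≠ 0 := Finset.prod_ne_zero_iff.mpr hne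
    constructor
    · rw [hC m 3, e3, e2, ed1, hPa]
      field_simp
    · rw [hC m 4, e4, e2, ed2, hPa]
      field_simp
  -- now the combinatorial splitting
  have hd : z i - z j ≠ 0 := sub_ne_zero.mpr fun h => hij (hz h)
  have hd' : z j - z i ≠ 0 := sub_ne_zero.mpr fun h => hij (hz h).symm
  set S : Finset (Fin n) := univ.filter (fun k => k ≠ i ∧ k ≠ j) with hS_def
  have hSi : ∀ f : Fin n → ℂ, ∑ k ∈ univ.erase i, f k = f j + ∑ k ∈ S, f k := by
    intro f
    have hjmem : j ∈ univ.erase i := mem_erase.mpr ⟨hij.symm, mem_univ j⟩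
    have : S = (univ.erase i).erase j := by
      ext k; simp [hS_def, and_comm]
    rw [this, ← Finset.add_sum_erase _ f hjmem]
  have hSj : ∀ f : Fin n → ℂ, ∑ k ∈ univ.erase j, f k = f i + ∑ k ∈ S, f k := by
    intro f
    have himem : i ∈ univ.erase j := mem_erase.mpr ⟨hij, mem_univ i⟩
    have : S = (univ.erase j).erase i := by
      ext k; simp [hS_def]
    rw [this, ← Finset.add_sum_erase _ f himem]
  have hc3i : C i 3 = 2 * (1 / (z i - z j) + ∑ k ∈ S, 1 / (z i - z k)) := by
    rw [(key i).1, hSi]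
  have hc3j : C j 3 = 2 * (1 / (z j - z i) + ∑ k ∈ S, 1 / (z j - z k)) := by
    rw [(key j).1, hSj]
  have hc4i : C i 4 = 3 * ((1 / (z i - z j) + ∑ k ∈ S, 1 / (z i - z k)) ^ 2
      - (1 / (z i - z j) ^ 2 + ∑ k ∈ S, 1 / (z i - z k) ^ 2)) := by
    rw [(key i).2, hSi, hSi]
  have hc4j : C j 4 = 3 * ((1 / (z j - z i) + ∑ k ∈ S, 1 / (z j - z k)) ^ 2
      - (1 / (z j - z i) ^ 2 + ∑ k ∈ S, 1 / (z j - z k) ^ 2)) := by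
    rw [(key j).2, hSj, hSj]
  have hne2 : ∀ k ∈ S, z i - z k ≠ 0 := by
    intro k hk
    have := (mem_filter.mp hk).2.1
    exact sub_ne_zero.mpr fun h => this (hz h.symm)
  have hne3 : ∀ k ∈ S, z j - z k ≠ 0 := by
    intro k hk
    have := (mem_filter.mp hk).2.2
    exact sub_ne_zero.mpr fun h => this (hz h.symm)
  have hterm : ∑ k ∈ S, 1 / ((z i - z k) ^ 2 * (z j - z k) ^ 2)
      = ∑ k ∈ S, ((1 / (z i - z j) ^ 2) * (1 / (z i - z k) ^ 2 + 1 / (z j - z k) ^ 2)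
          + (2 / (z i - z j) ^ 3) * (1 / (z i - z k) - 1 / (z j - z k))) := by
    refine Finset.sum_congr rfl fun k hk => ?_
    exact aux_frac_id (z i - z k) (z j - z k) (z i - z j) (hne2 k hk) (hne3 k hk) hd
      (by ring)
  have hdist : ∑ k ∈ S, ((1 / (z i - z j) ^ 2) * (1 / (z i - z k) ^ 2 + 1 / (z j - z k) ^ 2)
          + (2 / (z i - z j) ^ 3) * (1 / (z i - z k) - 1 / (z j - z k)))
      = (1 / (z i - z j) ^ 2) * ((∑ k ∈ S, 1 / (z i - z k) ^ 2)
              + ∑ k ∈ S, 1 / (z j - z k) ^ 2)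
        + (2 / (z i - z j) ^ 3) * ((∑ k ∈ S, 1 / (z i - z k))
              - ∑ k ∈ S, 1 / (z j - z k)) := by
    rw [Finset.sum_add_distrib, ← Finset.mul_sum, ← Finset.mul_sum,
      Finset.sum_add_distrib, Finset.sum_sub_distrib]
  set T1i := ∑ k ∈ S, 1 / (z i - z k) with hT1i
  set T1j := ∑ k ∈ S, 1 / (z j - z k) with hT1j
  set T2i := ∑ k ∈ S, 1 / (z i - z k) ^ 2 with hT2i
  set T2j := ∑ k ∈ S, 1 / (z j - z k) ^ 2 with hT2j
  rw [show z j - z i = -(z i - z j) from by ring] at hc3j hc4j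
  rw [hterm, hdist, hc3i, hc3j, hc4i, hc4j]
  exact aux_final_id (z i - z j) T1i T1j T2i T2j hd
end

section
/- For every index k ∈ {1,…,n} and every integer p ≥ 1 the following identity holds: λ^{(p+2)}(z_k)/λ''(z_k) = (p+1)! · ∑_{j_1 < … < j_p, all j_m ≠ k} 1/((z_k − z_{j_1})⋯(z_k − z_{j_p})), where the sum ranges over all p-element subsets {j_1,…,j_p} of {1,…,n}∖{k} (and equals 0 if there are none). -/
open Polynomial Finset

/-- Identity (3.2): for every index `k` and every integer `m ≥ 1`,
`λ^{{(m+2)}}(z_k)/λ''(z_k) = (m+1)! · ∑ 1/((z_k − z_j₁)⋯(z_k − z_jₘ))`, the sum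
being over all `m`-element subsets of `{{1,…,n}} \ {{k}}`. -/
theorem stmt_17 (n : ℕ) (hn : 1 ≤ n) (p : Polynomial ℂ)
    (hp : p.Monic) (hdeg : p.natDegree = n + 1)
    (z : Fin n → ℂ) (hz : Function.Injective z)
    (hcrit : ∀ i, (derivative p).eval (z i) = 0)
    (hnd : ∀ i, (derivative^[2] p).eval (z i) ≠ 0)
    (C : Fin n → ℕ → ℂ)
    (hC : ∀ i k, C i k = ((derivative^[k] p).eval (z i)) / ((derivative^[2] p).eval (z i)))
    (k : Fin n) (m : ℕ) (hm : 1 ≤ m) :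
    ((derivative^[m + 2] p).eval (z k)) / ((derivative^[2] p).eval (z k))
      = (Nat.factorial (m + 1) : ℂ) *
          ∑ S ∈ (univ.erase k).powersetCard m, 1 / ∏ j ∈ S, (z k - z j) := by
  classical
  set q : Polynomial ℂ := derivative p with hqdef
  have hcne : ((n : ℂ) + 1) ≠ 0 := by
    have : ((n + 1 : ℕ) : ℂ) ≠ 0 := Nat.cast_ne_zero.mpr (Nat.succ_ne_zero n)
    push_cast at this; exact this
  have hc : q.coeff n = (n : ℂ) + 1 := by
    rw [hqdef, Polynomial.coeff_derivative, show n + 1 = p.natDegree from hdeg.symm,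
      hp.coeff_natDegree]
    push_cast; ring
  have hq0 : q ≠ 0 := by
    intro h
    rw [h, Polynomial.coeff_zero] at hc
    exact hcne hc.symm
  have hqdeg : q.natDegree = n := by
    refine le_antisymm ?_ (le_natDegree_of_ne_zero (by rw [hc]; exact hcne))
    exact (Polynomial.natDegree_derivative_le p).trans (by rw [hdeg]; simp)
  have hql : q.leadingCoeff = (n : ℂ) + 1 := by
    rw [Polynomial.leadingCoeff, hqdeg, hc]
  -- roots of q are exactly the z i
  have hnodup : (Finset.univ.val.map z).Nodup :=
    Finset.univ.nodup.map_on fun a _ b _ h => hz h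
  have hle : (Finset.univ.val.map z) ≤ q.roots := by
    refine (Multiset.le_iff_subset hnodup).mpr ?_
    intro x hx
    obtain ⟨i, _, rfl⟩ := Multiset.mem_map.mp hx
    exact (Polynomial.mem_roots hq0).mpr (hcrit i)
  have hroots : q.roots = Finset.univ.val.map z := by
    refine (Multiset.eq_of_le_of_card_le hle ?_).symm
    have h1 : Multiset.card q.roots ≤ n := hqdeg ▸ Polynomial.card_roots' q
    have h2 : Multiset.card (Finset.univ.val.map z) = n := by
      simp
    omega
  have hsplit : Splits q := IsAlgClosed.splits q
  have hfact : q = Polynomial.C ((n : ℂ) + 1) * ∏ i : Fin n, (X - Polynomial.C (z i)) := by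
    have h := hsplit.eq_prod_roots
    rw [hql, hroots, Multiset.map_map] at h
    exact h
  set w : Fin n → ℂ := fun i => z k - z i with hw
  set Q : Polynomial ℂ := ∏ i ∈ univ.erase k, (X + Polynomial.C (w i)) with hQ
  have hT : taylor (z k) q = Polynomial.C ((n : ℂ) + 1) * (X * Q) := by
    rw [taylor_apply, hfact, mul_comp, C_comp, Polynomial.prod_comp]
    simp only [sub_comp, X_comp, C_comp]
    have hfac : ∀ i : Fin n, X + Polynomial.C (z k) - Polynomial.C (z i)
        = X + Polynomial.C (w i) := by
      intro i; simp only [hw, C_sub]; ring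
    rw [Finset.prod_congr rfl fun i _ => hfac i,
      ← Finset.mul_prod_erase univ (fun i => X + Polynomial.C (w i)) (mem_univ k)]
    have : X + Polynomial.C (w k) = (X : Polynomial ℂ) := by simp [hw]
    rw [this, hQ]
  have key : ∀ j : ℕ, (derivative^[j] q).eval (z k)
      = (j.factorial : ℂ) * ((taylor (z k) q).coeff j) := by
    intro j
    have h1 : derivative^[j] q = j.factorial • (Polynomial.hasseDeriv j q) := by
      rw [← Polynomial.factorial_smul_hasseDeriv]; rfl
    rw [h1, taylor_coeff]
    simp [nsmul_eq_mul]
  have hnum : (derivative^[m + 2] p).eval (z k)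
      = ((m + 1).factorial : ℂ) * (((n : ℂ) + 1) * Q.coeff m) := by
    have h2 : derivative^[m + 2] p = derivative^[m + 1] q := by
      rw [hqdef]; exact Function.iterate_succ_apply derivative (m + 1) p
    rw [h2, key (m + 1), hT]
    congr 1
    rw [Polynomial.coeff_C_mul, Polynomial.coeff_X_mul]
  have hden : (derivative^[2] p).eval (z k) = ((n : ℂ) + 1) * Q.eval 0 := by
    have h2 : derivative^[2] p = derivative^[1] q := by
      rw [hqdef]; exact Function.iterate_succ_apply derivative 1 p
    rw [h2, key 1, hT, Polynomial.coeff_C_mul, show (1 : ℕ) = 0 + 1 from rfl,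
      Polynomial.coeff_X_mul, Polynomial.coeff_zero_eq_eval_zero]
    simp
  have hQ0 : Q.eval 0 = ∏ i ∈ univ.erase k, w i := by
    simp [hQ, eval_prod]
  have hwne : ∀ i ∈ univ.erase k, w i ≠ 0 := by
    intro i hi
    exact sub_ne_zero.mpr fun h => (Finset.mem_erase.mp hi).1 (hz h).symm
  have hPne : (∏ i ∈ univ.erase k, w i) ≠ 0 := Finset.prod_ne_zero_iff.mpr hwne
  have hcard : (univ.erase k).card = n - 1 := by
    rw [Finset.card_erase_of_mem (mem_univ k), Finset.card_univ, Fintype.card_fin]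
  by_cases hmn : m ≤ n - 1
  · -- main case
    have hQm : Q.coeff m = ∑ t ∈ (univ.erase k).powersetCard (n - 1 - m), ∏ i ∈ t, w i := by
      have := Finset.prod_X_add_C_coeff (univ.erase k) w (k := m) (by rw [hcard]; exact hmn)
      rw [hcard] at this
      exact this
    have hE : (∑ t ∈ (univ.erase k).powersetCard (n - 1 - m), ∏ i ∈ t, w i)
        = ∑ S ∈ (univ.erase k).powersetCard m, ∏ i ∈ (univ.erase k) \ S, w i := by
      refine Finset.sum_nbij' (fun t => (univ.erase k) \ t) (fun S => (univ.erase k) \ S)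
        ?_ ?_ ?_ ?_ ?_
      · intro t ht
        obtain ⟨hsub, hcardt⟩ := Finset.mem_powersetCard.mp ht
        refine Finset.mem_powersetCard.mpr ⟨Finset.sdiff_subset, ?_⟩
        rw [Finset.card_sdiff_of_subset hsub, hcard, hcardt]
        omega
      · intro S hS
        obtain ⟨hsub, hcardS⟩ := Finset.mem_powersetCard.mp hS
        refine Finset.mem_powersetCard.mpr ⟨Finset.sdiff_subset, ?_⟩
        rw [Finset.card_sdiff_of_subset hsub, hcard, hcardS]
      · intro t ht
        exact Finset.sdiff_sdiff_eq_self (Finset.mem_powersetCard.mp ht).1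
      · intro S hS
        exact Finset.sdiff_sdiff_eq_self (Finset.mem_powersetCard.mp hS).1
      · intro t ht
        rw [Finset.sdiff_sdiff_eq_self (Finset.mem_powersetCard.mp ht).1]
    rw [hnum, hden, hQm, hE, hQ0, mul_div_assoc,
      mul_div_mul_left _ _ hcne, Finset.sum_div]
    congr 1
    refine Finset.sum_congr rfl fun S hS => ?_
    obtain ⟨hsub, hcardS⟩ := Finset.mem_powersetCard.mp hS
    have hSne : (∏ j ∈ S, (z k - z j)) ≠ 0 :=
      Finset.prod_ne_zero_iff.mpr fun i hi => hwne i (hsub hi)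
    rw [div_eq_div_iff hPne hSne, one_mul]
    exact Finset.prod_sdiff hsub
  · -- degenerate case: not enough indices
    have hQdeg : Q.natDegree ≤ n - 1 := by
      refine le_trans (Polynomial.natDegree_prod_le _ _) ?_
      simp [Polynomial.natDegree_X_add_C, hcard]
    have hQm : Q.coeff m = 0 :=
      Polynomial.coeff_eq_zero_of_natDegree_lt (lt_of_le_of_lt hQdeg (by omega))
    have hps : (univ.erase k).powersetCard m = ∅ :=
      Finset.powersetCard_eq_empty.mpr (by rw [hcard]; omega)
    rw [hnum, hden, hQm, hps]
    simp
end
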